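/- arXiv:2006.05073 — 5 statements merged into one kernel-verified Lean document; each statement's English description precedes it below -/
import Mathlib

section
/- Mass conservation of the SAV–Gauss collocation scheme (Theorem 3.1, first part): under the abstract Gauss collocation SAV scheme, if additionally ⟨G(v), v⟩ ∈ ℝ for every v ∈ V, then ‖u_h(t_n)‖ = ‖u_h(0)‖ for every n = 1, ..., N. -/
/-!
Mass conservation of the SAV–Gauss collocation scheme (Theorem 3.1, first part).
-/

open MeasureTheory

/-- The (unnormalized) Legendre polynomial of degree `k`: `d^k/dx^k [(x² - 1)^k]`. -/
noncomputable def legendre (k : ℕ) : Polynomial ℝ :=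
  Polynomial.derivative^[k] ((Polynomial.X ^ 2 - 1 : Polynomial ℝ) ^ k)

/-- `f : ℝ → X` is an `X`-valued polynomial of degree at most `m`. -/
def IsPolyDeg (X : Type*) [AddCommGroup X] [Module ℝ X] (m : ℕ) (f : ℝ → X) : Prop :=
  ∃ φ : Fin (m + 1) → X, ∀ t : ℝ, f t = ∑ i : Fin (m + 1), t ^ (i : ℕ) • φ i

/-- The `j`-th Gauss collocation point `t_{nj} = t_{n-1} + (1 + c_j) τ / 2` of the
interval `I_n = [(n-1)τ, nτ]`. -/
noncomputable def collocPt (τ : ℝ) (n : ℕ) (cj : ℝ) : ℝ :=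
  ((n : ℝ) - 1) * τ + (1 + cj) * τ / 2

namespace MassConsAux

open Polynomial

noncomputable def fI (k i : ℕ) : Polynomial ℝ :=
  derivative^[i] ((X ^ 2 - 1 : Polynomial ℝ) ^ k)

lemma fI_succ (k i : ℕ) : fI k (i + 1) = derivative (fI k i) := by
  simp [fI, Function.iterate_succ_apply']

lemma legendre_eq_fI (k : ℕ) : legendre k = fI k k := rfl

lemma fI_dvd (k : ℕ) : ∀ i, i ≤ k →
    ∃ g, fI k i = (X ^ 2 - 1 : Polynomial ℝ) ^ (k - i) * g := by
  intro i
  induction i with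
  | zero => exact fun _ => ⟨1, by simp [fI]⟩
  | succ i ih =>
    intro h
    obtain ⟨g, hg⟩ := ih (Nat.le_of_succ_le h)
    obtain ⟨m, hm⟩ : ∃ m, k - i = m + 1 := ⟨k - i - 1, by omega⟩
    have hm' : k - (i + 1) = m := by omega
    refine ⟨C ((m : ℝ) + 1) * (C 2 * X) * g + (X ^ 2 - 1) * derivative g, ?_⟩
    rw [fI_succ, hg, hm, hm', derivative_mul, derivative_pow]
    have hd : derivative (X ^ 2 - 1 : Polynomial ℝ) = C 2 * X := by
      simp [derivative_X_pow]
      rw [one_add_one_eq_two]; exact (map_ofNat C 2).symm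
    rw [hd]
    push_cast
    ring

lemma fI_eval_one (k i : ℕ) (h : i < k) : (fI k i).eval 1 = 0 := by
  obtain ⟨g, hg⟩ := fI_dvd k i h.le
  rw [hg]
  simp [zero_pow (by omega : k - i ≠ 0)]

lemma fI_eval_neg_one (k i : ℕ) (h : i < k) : (fI k i).eval (-1) = 0 := by
  obtain ⟨g, hg⟩ := fI_dvd k i h.le
  rw [hg]
  norm_num [zero_pow (by omega : k - i ≠ 0)]

lemma orth (k : ℕ) : ∀ i, i ≤ k → ∀ q : Polynomial ℝ, q.natDegree < i →
    ∫ x in (-1:ℝ)..1, (fI k i).eval x * q.eval x = 0 := by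
  intro i
  induction i with
  | zero => intro _ q hq; omega
  | succ i ih =>
    intro h q hq
    have hik : i < k := h
    by_cases h0 : q.natDegree = 0
    · have hqC : q = C (q.coeff 0) := eq_C_of_natDegree_eq_zero h0
      have hftc : ∫ x in (-1:ℝ)..1, (fI k (i+1)).eval x
          = (fI k i).eval 1 - (fI k i).eval (-1) := by
        apply intervalIntegral.integral_eq_sub_of_hasDerivAt
          (f := fun x => (fI k i).eval x) (f' := fun x => (fI k (i+1)).eval x)
        · intro x _
          rw [fI_succ]
          exact Polynomial.hasDerivAt (fI k i) x
        · exact ((fI k (i+1)).continuous_aeval.intervalIntegrable _ _)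
      rw [hqC]
      simp only [eval_C]
      rw [intervalIntegral.integral_mul_const, hftc,
        fI_eval_one k i hik, fI_eval_neg_one k i hik]
      ring
    · have hq' : (derivative q).natDegree < i :=
        lt_of_lt_of_le (natDegree_derivative_lt h0) (Nat.lt_succ_iff.mp hq)
      have hint1 : IntervalIntegrable (fun x => (fI k (i+1)).eval x * q.eval x)
          volume (-1:ℝ) 1 :=
        (((fI k (i+1)).continuous_aeval.mul q.continuous_aeval).intervalIntegrable _ _)
      have hint2 : IntervalIntegrable (fun x => (fI k i).eval x * (derivative q).eval x)
          volume (-1:ℝ) 1 :=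
        (((fI k i).continuous_aeval.mul (derivative q).continuous_aeval).intervalIntegrable _ _)
      have hibp := intervalIntegral.integral_deriv_mul_eq_sub
        (a := (-1:ℝ)) (b := (1:ℝ))
        (u := fun x => (fI k i).eval x) (v := fun x => q.eval x)
        (u' := fun x => (fI k (i+1)).eval x) (v' := fun x => (derivative q).eval x)
        (fun x _ => by rw [fI_succ]; exact Polynomial.hasDerivAt _ x)
        (fun x _ => Polynomial.hasDerivAt _ x)
        ((fI k (i+1)).continuous_aeval.intervalIntegrable _ _)
        ((derivative q).continuous_aeval.intervalIntegrable _ _)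
      rw [intervalIntegral.integral_add hint1 hint2] at hibp
      simp only [fI_eval_one k i hik, fI_eval_neg_one k i hik, zero_mul, sub_zero] at hibp
      have hih := ih hik.le (derivative q) hq'
      rw [hih] at hibp
      linarith

lemma X_sq_sub_one_monic : ((X : Polynomial ℝ) ^ 2 - 1).Monic := by
  simpa using monic_X_pow_sub_C (1 : ℝ) (two_ne_zero)

lemma X_sq_sub_one_natDegree : ((X : Polynomial ℝ) ^ 2 - 1).natDegree = 2 := by
  simpa using natDegree_X_pow_sub_C (n := 2) (r := (1:ℝ))

lemma base_natDegree (k : ℕ) : (((X : Polynomial ℝ) ^ 2 - 1) ^ k).natDegree = 2 * k := by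
  rw [X_sq_sub_one_monic.natDegree_pow, X_sq_sub_one_natDegree, mul_comm]

lemma legendre_ne_zero {k : ℕ} : legendre k ≠ 0 := by
  intro h
  have hc : (legendre k).coeff k = 0 := by rw [h]; simp
  rw [legendre, Polynomial.coeff_iterate_derivative] at hc
  have hm : (((X : Polynomial ℝ) ^ 2 - 1) ^ k).coeff (k + k) = 1 := by
    have := (X_sq_sub_one_monic.pow k).leadingCoeff
    rwa [leadingCoeff, base_natDegree, two_mul] at this
  rw [hm, nsmul_eq_mul, mul_one, Nat.cast_eq_zero,
    Nat.descFactorial_eq_zero_iff_lt] at hc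
  omega

lemma legendre_natDegree_le (k : ℕ) : (legendre k).natDegree ≤ k := by
  have h := Polynomial.natDegree_iterate_derivative (((X : Polynomial ℝ) ^ 2 - 1) ^ k) k
  rw [base_natDegree] at h
  rw [legendre]
  omega

lemma prod_dvd {k : ℕ} (c : Fin k → ℝ) (hinj : Function.Injective c) {D : Polynomial ℝ}
    (hD : D ≠ 0) (hz : ∀ j, D.eval (c j) = 0) :
    ((Finset.univ.val.map c).map fun a => X - C a).prod ∣ D := by
  rw [Multiset.prod_X_sub_C_dvd_iff_le_roots hD]
  refine (Multiset.le_iff_subset (Multiset.Nodup.map hinj Finset.univ.nodup)).2 ?_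
  intro x hx
  obtain ⟨j, _, rfl⟩ := Multiset.mem_map.1 hx
  exact (mem_roots hD).2 (hz j)

lemma gauss_quad {k : ℕ} (hk : 1 ≤ k) (c : Fin k → ℝ) (hinj : Function.Injective c)
    (hroot : ∀ j, (legendre k).eval (c j) = 0)
    {D : Polynomial ℝ} (hdeg : D.natDegree < 2 * k) (hz : ∀ j, D.eval (c j) = 0) :
    ∫ x in (-1:ℝ)..1, D.eval x = 0 := by
  by_cases hD : D = 0
  · simp [hD]
  set P : Polynomial ℝ := ((Finset.univ.val.map c).map fun a => X - C a).prod with hP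
  have hPdeg : P.natDegree = k := by
    rw [hP, natDegree_multiset_prod_X_sub_C_eq_card]; simp
  have hPmonic : P.Monic :=
    monic_multiset_prod_of_monic _ _ (fun a _ => monic_X_sub_C a)
  obtain ⟨q, hq⟩ := prod_dvd c hinj hD hz
  obtain ⟨b, hb⟩ := prod_dvd c hinj (legendre_ne_zero (k := k)) hroot
  rw [← hP] at hq hb
  have hq0 : q ≠ 0 := fun h => hD (by rw [hq, h, mul_zero])
  have hb0 : b ≠ 0 := fun h => legendre_ne_zero (k := k) (by rw [hb, h, mul_zero])
  have hbdeg : b.natDegree = 0 := by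
    have h1 : (legendre k).natDegree = k + b.natDegree := by
      rw [hb, natDegree_mul hPmonic.ne_zero hb0, hPdeg]
    have h2 := legendre_natDegree_le k
    omega
  obtain ⟨a, hbC⟩ : ∃ a, b = C a := ⟨b.coeff 0, eq_C_of_natDegree_eq_zero hbdeg⟩
  have ha : a ≠ 0 := fun h => hb0 (by rw [hbC, h, map_zero])
  have hPeq : P = C a⁻¹ * legendre k := by
    rw [hb, hbC, mul_comm P (C a), ← mul_assoc, ← C_mul,
      inv_mul_cancel₀ ha, C_1, one_mul]
  have hqdeg : q.natDegree < k := by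
    have h1 : D.natDegree = k + q.natDegree := by
      rw [hq, natDegree_mul hPmonic.ne_zero hq0, hPdeg]
    omega
  have key : ∫ x in (-1:ℝ)..1, (legendre k).eval x * q.eval x = 0 :=
    orth k k le_rfl q hqdeg
  have heval : ∀ x : ℝ, D.eval x = a⁻¹ * ((legendre k).eval x * q.eval x) := by
    intro x
    rw [hq, hPeq]
    simp only [eval_mul, eval_C]
    ring
  simp_rw [heval]
  rw [intervalIntegral.integral_const_mul, key, mul_zero]

end MassConsAux

set_option maxHeartbeats 1000000 in
theorem mass_conservation
    (k N : ℕ) (hk : 1 ≤ k) (hN : 1 ≤ N) (T : ℝ) (hT : 0 < T)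
    -- the Gauss points of [-1,1]: the k roots of the Legendre polynomial of degree k
    (c : Fin k → ℝ) (hmono : StrictMono c)
    (hroot : ∀ j, (legendre k).eval (c j) = 0)
    (hmem : ∀ j, c j ∈ Set.Ioo (-1 : ℝ) 1)
    -- V : a finite-dimensional complex inner product space
    (V : Type*) [NormedAddCommGroup V] [InnerProductSpace ℂ V] [FiniteDimensional ℂ V]
    -- a : a Hermitian sesquilinear form (paper's convention: linear in the first argument)
    (a : V → V → ℂ)
    (ha_add : ∀ v₁ v₂ w : V, a (v₁ + v₂) w = a v₁ w + a v₂ w)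
    (ha_smul : ∀ (z : ℂ) (v w : V), a (z • v) w = z * a v w)
    (ha_herm : ∀ v w : V, a v w = starRingEnd ℂ (a w v))
    -- G : an arbitrary map such that ⟨G v, v⟩ is real
    -- (paper's ⟨x, y⟩, linear in x, is Mathlib's `inner y x`)
    (G : V → V)
    (hG : ∀ v : V, (inner ℂ v (G v) : ℂ).im = 0)
    -- numerical solution: continuous, piecewise polynomial of degree ≤ k in time
    (uh : ℝ → V) (rh : ℝ → ℝ)
    (hupoly : ∀ n ∈ Finset.Icc 1 N, ∃ p : ℝ → V, IsPolyDeg V k p ∧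
      ∀ t ∈ Set.Icc (((n : ℝ) - 1) * (T / N)) ((n : ℝ) * (T / N)), uh t = p t)
    (hrpoly : ∀ n ∈ Finset.Icc 1 N, ∃ q : ℝ → ℝ, IsPolyDeg ℝ k q ∧
      ∀ t ∈ Set.Icc (((n : ℝ) - 1) * (T / N)) ((n : ℝ) * (T / N)), rh t = q t)
    -- Gauss collocation equation (i):  i⟨u_h'(t_nj), v⟩ + a(u_h(t_nj), v)
    --   - r_h(t_nj) ⟨G(u_h(t_nj)), v⟩ = 0  for all v ∈ V
    (hu_eq : ∀ n ∈ Finset.Icc 1 N, ∀ j : Fin k, ∀ v : V,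
      Complex.I * (inner ℂ v (deriv uh (collocPt (T / N) n (c j))) : ℂ)
        + a (uh (collocPt (T / N) n (c j))) v
        - (rh (collocPt (T / N) n (c j)) : ℂ)
            * (inner ℂ v (G (uh (collocPt (T / N) n (c j)))) : ℂ) = 0)
    -- Gauss collocation equation (ii): r_h'(t_nj) = (1/2) Re ⟨G(u_h(t_nj)), u_h'(t_nj)⟩
    (hr_eq : ∀ n ∈ Finset.Icc 1 N, ∀ j : Fin k,
      deriv rh (collocPt (T / N) n (c j))
        = (1 / 2) * ((inner ℂ (deriv uh (collocPt (T / N) n (c j)))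
            (G (uh (collocPt (T / N) n (c j)))) : ℂ)).re) :
    -- conclusion: mass conservation ‖u_h(t_n)‖ = ‖u_h(0)‖ for n = 1, ..., N
    ∀ n ∈ Finset.Icc 1 N, ‖uh ((n : ℝ) * (T / N))‖ = ‖uh 0‖ := by
  classical
  have hNpos : (0:ℝ) < (N:ℝ) := by exact_mod_cast hN
  set τ : ℝ := T / N with hτdef
  have hτ : 0 < τ := div_pos hT hNpos
  have step : ∀ m ∈ Finset.Icc 1 N, ‖uh ((m:ℝ) * τ)‖ = ‖uh (((m:ℝ) - 1) * τ)‖ := by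
    intro m hm
    obtain ⟨p0, ⟨φ, hφ⟩, hup0⟩ := hupoly m hm
    set p : ℝ → V := fun t => ∑ i : Fin (k+1), t ^ (i:ℕ) • φ i with hpdef
    have hup : ∀ t ∈ Set.Icc (((m:ℝ)-1)*τ) ((m:ℝ)*τ), uh t = p t := by
      intro t ht
      rw [hup0 t ht, hφ t]
    set pd : ℝ → V := fun t => ∑ i : Fin (k+1), (((i:ℕ):ℝ) * t ^ ((i:ℕ) - 1)) • φ i
      with hpddef
    have hpder : ∀ t : ℝ, HasDerivAt p (pd t) t := fun t =>
      HasDerivAt.fun_sum fun (i : Fin (k+1)) _ => (hasDerivAt_pow (i:ℕ) t).smul_const (φ i)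
    set M : Polynomial ℝ := ∑ i : Fin (k+1), ∑ j : Fin (k+1),
        Polynomial.C ((inner ℂ (φ i) (φ j) : ℂ)).re * Polynomial.X ^ ((i:ℕ) + (j:ℕ))
      with hMdef
    have hMeval : ∀ t : ℝ, M.eval t = ((inner ℂ (p t) (p t) : ℂ)).re := by
      intro t
      have hR : (inner ℂ (p t) (p t) : ℂ) = ∑ i : Fin (k+1), ∑ j : Fin (k+1),
          ((t ^ (i:ℕ) * t ^ (j:ℕ) : ℝ) : ℂ) * (inner ℂ (φ i) (φ j) : ℂ) := by
        rw [hpdef]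
        rw [sum_inner]
        refine Finset.sum_congr rfl fun i _ => ?_
        rw [inner_sum]
        refine Finset.sum_congr rfl fun j _ => ?_
        rw [← Complex.coe_smul, ← Complex.coe_smul, inner_smul_left, inner_smul_right,
          Complex.conj_ofReal, Complex.ofReal_mul]
        ring
      rw [hR]
      simp only [hMdef, Polynomial.eval_finset_sum, Polynomial.eval_mul, Polynomial.eval_pow,
        Polynomial.eval_C, Polynomial.eval_X, Complex.re_sum, Complex.re_ofReal_mul]
      refine Finset.sum_congr rfl fun i _ => Finset.sum_congr rfl fun j _ => ?_
      rw [pow_add]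
      ring
    have hMnorm : ∀ t : ℝ, M.eval t = ‖p t‖ ^ 2 := by
      intro t
      rw [hMeval t]
      have := inner_self_eq_norm_sq (𝕜 := ℂ) (p t)
      simpa using this
    have hMder : ∀ t : ℝ, (Polynomial.derivative M).eval t
        = 2 * ((inner ℂ (p t) (pd t) : ℂ)).re := by
      intro t
      have h1 : HasDerivAt (fun s => M.eval s) ((Polynomial.derivative M).eval t) t :=
        M.hasDerivAt t
      have hi : HasDerivAt (fun s => (inner ℂ (p s) (p s) : ℂ))
          ((inner ℂ (p t) (pd t) : ℂ) + (inner ℂ (pd t) (p t) : ℂ)) t :=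
        (hpder t).inner ℂ (hpder t)
      have h2 : HasDerivAt (fun s => ((inner ℂ (p s) (p s) : ℂ)).re)
          (((inner ℂ (p t) (pd t) : ℂ) + (inner ℂ (pd t) (p t) : ℂ)).re) t := by
        simpa only [Function.comp_def, Complex.reCLM_apply] using (Complex.reCLM.hasFDerivAt.comp_hasDerivAt t hi)
      have hfun : (fun s => M.eval s) = fun s => ((inner ℂ (p s) (p s) : ℂ)).re :=
        funext hMeval
      rw [hfun] at h1
      rw [h1.unique h2]
      have hc : (inner ℂ (pd t) (p t) : ℂ) = starRingEnd ℂ (inner ℂ (p t) (pd t) : ℂ) :=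
        (inner_conj_symm _ _).symm
      rw [hc]
      simp only [Complex.add_re, Complex.conj_re]
      ring
    -- vanishing of the derivative at the collocation points
    have hcol : ∀ j : Fin k, (Polynomial.derivative M).eval (collocPt τ m (c j)) = 0 := by
      intro j
      set tc : ℝ := collocPt τ m (c j) with htc
      have htmem : tc ∈ Set.Ioo (((m:ℝ)-1)*τ) ((m:ℝ)*τ) := by
        rw [htc]
        unfold collocPt
        refine Set.mem_Ioo.mpr ⟨?_, ?_⟩
        · nlinarith [(hmem j).1, (hmem j).2]
        · nlinarith [(hmem j).1, (hmem j).2]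
      have hnhds : uh =ᶠ[nhds tc] p :=
        Filter.eventuallyEq_of_mem (Icc_mem_nhds htmem.1 htmem.2) hup
      have hderiv_eq : deriv uh tc = pd tc := by
        rw [hnhds.deriv_eq]
        exact (hpder tc).deriv
      have huval : uh tc = p tc := hup tc (Set.mem_Icc_of_Ioo htmem)
      have h0 : Complex.I * inner ℂ (uh tc) (deriv uh tc) + a (uh tc) (uh tc)
          - (rh tc : ℂ) * inner ℂ (uh tc) (G (uh tc)) = 0 := hu_eq m hm j (uh tc)
      have him := congrArg Complex.im h0
      simp only [Complex.add_im, Complex.sub_im, Complex.zero_im, Complex.mul_im,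
        Complex.I_re, Complex.I_im, Complex.ofReal_re, Complex.ofReal_im,
        zero_mul, one_mul, zero_add, hG] at him
      -- him should now say: re (inner ℂ (uh tc) (deriv uh tc)) + im (a ..) - .. = 0
      have haim : (a (uh tc) (uh tc)).im = 0 := by
        have hh : (a (uh tc) (uh tc)).im = -(a (uh tc) (uh tc)).im := by
          conv_lhs => rw [ha_herm (uh tc) (uh tc)]
          simp
        linarith
      have hre0 : ((inner ℂ (uh tc) (deriv uh tc) : ℂ)).re = 0 := by
        rw [haim] at him
        linarith
      rw [hMder tc, ← huval, ← hderiv_eq, hre0]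
      ring
    -- the integral of the derivative over the interval vanishes
    set t0 : ℝ := ((m:ℝ)-1)*τ with ht0
    set t1 : ℝ := (m:ℝ)*τ with ht1
    set d : ℝ := t0 + τ/2 with hd
    have hft : ∫ x in t0..t1, (Polynomial.derivative M).eval x = M.eval t1 - M.eval t0 := by
      apply intervalIntegral.integral_eq_sub_of_hasDerivAt
        (f := fun x => M.eval x) (f' := fun x => (Polynomial.derivative M).eval x)
      · exact fun x _ => M.hasDerivAt x
      · exact ((Polynomial.derivative M).continuous_aeval.intervalIntegrable _ _)
    set Dt : Polynomial ℝ := (Polynomial.derivative M).comp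
        (Polynomial.C (τ/2) * Polynomial.X + Polynomial.C d) with hDt
    have hDteval : ∀ x : ℝ, Dt.eval x = (Polynomial.derivative M).eval (τ/2 * x + d) := by
      intro x
      rw [hDt]
      simp [Polynomial.eval_comp]
    have hMdeg : M.natDegree ≤ 2 * k := by
      rw [hMdef]
      refine Polynomial.natDegree_sum_le_of_forall_le _ _ fun i _ => ?_
      refine Polynomial.natDegree_sum_le_of_forall_le _ _ fun j _ => ?_
      refine (Polynomial.natDegree_C_mul_le _ _).trans ?_
      rw [Polynomial.natDegree_X_pow]
      have := i.is_le
      have := j.is_le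
      omega
    have hDtdeg : Dt.natDegree < 2 * k := by
      have h1 : (Polynomial.derivative M).natDegree ≤ 2 * k - 1 :=
        (Polynomial.natDegree_derivative_le M).trans (by omega)
      have h2 := Polynomial.natDegree_comp_le
        (p := Polynomial.derivative M) (q := Polynomial.C (τ/2) * Polynomial.X + Polynomial.C d)
      have h3 := Polynomial.natDegree_linear_le (a := τ/2) (b := d)
      rw [← hDt] at h2
      have h4 : Dt.natDegree ≤ (2*k-1) * 1 := h2.trans (Nat.mul_le_mul h1 h3)
      omega
    have hDtroot : ∀ j : Fin k, Dt.eval (c j) = 0 := by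
      intro j
      rw [hDteval]
      have harg : τ/2 * c j + d = collocPt τ m (c j) := by
        rw [hd, ht0]
        unfold collocPt
        ring
      rw [harg]
      exact hcol j
    have hint0 : ∫ x in (-1:ℝ)..1, Dt.eval x = 0 :=
      MassConsAux.gauss_quad hk c hmono.injective hroot hDtdeg hDtroot
    have hsub : ∫ x in (-1:ℝ)..1, (Polynomial.derivative M).eval (τ/2 * x + d)
        = (τ/2)⁻¹ • ∫ x in (τ/2*(-1)+d)..(τ/2*1+d), (Polynomial.derivative M).eval x :=
      intervalIntegral.integral_comp_mul_add (a := (-1:ℝ)) (b := (1:ℝ))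
        (fun x => (Polynomial.derivative M).eval x) (half_pos hτ).ne' d
    have hb0 : τ/2*(-1)+d = t0 := by rw [hd]; ring
    have hb1 : τ/2*1+d = t1 := by rw [hd, ht0, ht1]; ring
    have hzero : M.eval t1 - M.eval t0 = 0 := by
      have h4 : ∫ x in (-1:ℝ)..1, (Polynomial.derivative M).eval (τ/2 * x + d) = 0 := by
        rw [← hint0]
        exact intervalIntegral.integral_congr fun x _ => (hDteval x).symm
      rw [h4, hb0, hb1, hft] at hsub
      rcases smul_eq_zero.mp hsub.symm with h6 | h6
      · exact absurd h6 (inv_ne_zero (half_pos hτ).ne')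
      · exact h6
    have hsq : ‖uh t1‖ ^ 2 = ‖uh t0‖ ^ 2 := by
      have ht01 : t0 ≤ t1 := by rw [ht0, ht1]; nlinarith [hτ]
      have he1 : uh t1 = p t1 := hup t1 (Set.mem_Icc.mpr ⟨ht01, le_rfl⟩)
      have he0 : uh t0 = p t0 := hup t0 (Set.mem_Icc.mpr ⟨le_rfl, ht01⟩)
      rw [he1, he0, ← hMnorm, ← hMnorm]
      linarith
    calc ‖uh t1‖ = Real.sqrt (‖uh t1‖ ^ 2) := (Real.sqrt_sq (norm_nonneg _)).symm
      _ = Real.sqrt (‖uh t0‖ ^ 2) := by rw [hsq]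
      _ = ‖uh t0‖ := Real.sqrt_sq (norm_nonneg _)
  -- conclude by induction
  have main : ∀ n : ℕ, n ≤ N → ‖uh ((n:ℝ) * τ)‖ = ‖uh 0‖ := by
    intro n
    induction n with
    | zero => intro _; norm_num
    | succ n ihn =>
      intro h
      have h1 : (n+1 : ℕ) ∈ Finset.Icc 1 N := by
        rw [Finset.mem_Icc]
        omega
      have h2 := step (n+1) h1
      have h3 : ((n+1:ℕ):ℝ) - 1 = (n:ℝ) := by push_cast; ring
      rw [h3] at h2
      exact h2.trans (ihn (by omega))
  intro n hn
  exact main n (Finset.mem_Icc.mp hn).2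
end

section
/- Energy conservation of the SAV–Gauss collocation scheme (Theorem 3.1, second part): under the abstract Gauss collocation SAV scheme, the discrete SAV energy is conserved: (1/2)·a(u_h(t_n), u_h(t_n)) − r_h(t_n)² = (1/2)·a(u_h(0), u_h(0)) − r_h(0)² for every n = 1, ..., N. (Note that a(v,v) ∈ ℝ since a is Hermitian; no assumption on G is required.) -/
/-!
Energy conservation of the SAV–Gauss collocation scheme (Theorem 3.1, second part):
(1/2)·a(u_h(t_n), u_h(t_n)) − r_h(t_n)² is conserved.  (a(v,v) is real since a is
Hermitian, so we state the identity for the real parts; no assumption on G is required.)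
-/

open MeasureTheory

section SAVAuxSection

open Polynomial intervalIntegral

namespace SAVAux


lemma monic_P (k : ℕ) : ((X ^ 2 - 1 : ℝ[X]) ^ k).Monic := by
  have h : (X ^ 2 - 1 : ℝ[X]) = X ^ 2 - C 1 := by rw [C_1]
  rw [h]
  exact (monic_X_pow_sub_C (1 : ℝ) (by norm_num)).pow k

lemma natDegree_P (k : ℕ) : ((X ^ 2 - 1 : ℝ[X]) ^ k).natDegree = 2 * k := by
  have h : (X ^ 2 - 1 : ℝ[X]) = X ^ 2 - C 1 := by rw [C_1]
  rw [natDegree_pow, h, natDegree_X_pow_sub_C, mul_comm]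

lemma legendre_coeff_k (k : ℕ) : (legendre k).coeff k = ((2 * k).descFactorial k : ℝ) := by
  rw [legendre, coeff_iterate_derivative]
  have h1 : k + k = 2 * k := by ring
  rw [h1]
  have h2 : ((X ^ 2 - 1 : ℝ[X]) ^ k).coeff (2 * k) = 1 := by
    have := (monic_P k).leadingCoeff
    rwa [leadingCoeff, natDegree_P] at this
  rw [h2, nsmul_eq_mul, mul_one]

lemma descFact_ne (k : ℕ) : ((2 * k).descFactorial k : ℝ) ≠ 0 := by
  have : (2 * k).descFactorial k ≠ 0 := by
    rw [Ne, Nat.descFactorial_eq_zero_iff_lt]; omega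
  exact_mod_cast this

lemma legendre_ne_zero (k : ℕ) : legendre k ≠ 0 := by
  intro h
  have h2 := legendre_coeff_k k
  rw [h, coeff_zero] at h2
  exact descFact_ne k h2.symm

lemma legendre_natDegree (k : ℕ) : (legendre k).natDegree = k := by
  refine le_antisymm ?_ ?_
  · have := natDegree_iterate_derivative ((X ^ 2 - 1 : ℝ[X]) ^ k) k
    rw [natDegree_P] at this
    simpa [legendre] using this.trans (by omega)
  · apply le_natDegree_of_ne_zero
    rw [legendre_coeff_k]
    exact descFact_ne k

lemma iterDeriv_eval_boundary (k i : ℕ) (hik : i < k) (x : ℝ) (hx : x = 1 ∨ x = -1) :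
    (Polynomial.derivative^[i] ((X ^ 2 - 1 : ℝ[X]) ^ k)).eval x = 0 := by
  have hPne : ((X ^ 2 - 1 : ℝ[X]) ^ k) ≠ 0 := (monic_P k).ne_zero
  have hdvd : (X - C x) ^ k ∣ (X ^ 2 - 1 : ℝ[X]) ^ k := by
    apply pow_dvd_pow_of_dvd
    rw [dvd_iff_isRoot]
    rcases hx with h | h <;> subst h <;> simp [IsRoot]
  have hmult : k ≤ rootMultiplicity x ((X ^ 2 - 1 : ℝ[X]) ^ k) :=
    (le_rootMultiplicity_iff hPne).mpr hdvd
  exact isRoot_iterate_derivative_of_lt_rootMultiplicity (lt_of_lt_of_le hik hmult)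




lemma ibp_aux (k : ℕ) : ∀ j, j ≤ k → ∀ s : ℝ[X],
    ∫ x in (-1:ℝ)..1, (Polynomial.derivative^[j] ((X ^ 2 - 1 : ℝ[X]) ^ k)).eval x * s.eval x
      = (-1 : ℝ) ^ j *
        ∫ x in (-1:ℝ)..1, ((X ^ 2 - 1 : ℝ[X]) ^ k).eval x * (Polynomial.derivative^[j] s).eval x := by
  intro j
  induction j with
  | zero => intro _ s; simp
  | succ j ih =>
    intro hj s
    set P : ℝ[X] := (X ^ 2 - 1 : ℝ[X]) ^ k with hP
    set u : ℝ[X] := Polynomial.derivative^[j] P with hu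
    have hstep : Polynomial.derivative^[j+1] P = Polynomial.derivative u := by
      exact Function.iterate_succ_apply' _ j P
    have hibp := integral_deriv_mul_eq_sub (a := (-1:ℝ)) (b := 1)
      (u := fun x => u.eval x) (v := fun x => s.eval x)
      (u' := fun x => (Polynomial.derivative u).eval x)
      (v' := fun x => (Polynomial.derivative s).eval x)
      (fun x _ => u.hasDerivAt x) (fun x _ => s.hasDerivAt x)
      ((Polynomial.derivative u).continuous.intervalIntegrable _ _)
      ((Polynomial.derivative s).continuous.intervalIntegrable _ _)
    have hbd1 : u.eval (1:ℝ) = 0 := iterDeriv_eval_boundary k j (by omega) 1 (Or.inl rfl)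
    have hbd2 : u.eval (-1:ℝ) = 0 := iterDeriv_eval_boundary k j (by omega) (-1) (Or.inr rfl)
    rw [hbd1, hbd2] at hibp
    have hsplit : ∫ x in (-1:ℝ)..1,
        ((Polynomial.derivative u).eval x * s.eval x + u.eval x * (Polynomial.derivative s).eval x)
        = (∫ x in (-1:ℝ)..1, (Polynomial.derivative u).eval x * s.eval x)
          + ∫ x in (-1:ℝ)..1, u.eval x * (Polynomial.derivative s).eval x := by
      apply intervalIntegral.integral_add
      · exact (((Polynomial.derivative u).continuous.mul s.continuous).intervalIntegrable _ _)
      · exact ((u.continuous.mul (Polynomial.derivative s).continuous).intervalIntegrable _ _)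
    rw [hsplit] at hibp
    have hres : (∫ x in (-1:ℝ)..1, (Polynomial.derivative u).eval x * s.eval x)
        = - ∫ x in (-1:ℝ)..1, u.eval x * (Polynomial.derivative s).eval x := by linarith
    rw [hstep, hres, ih (by omega) (Polynomial.derivative s)]
    rw [← Function.iterate_succ_apply]
    ring

lemma orth (k : ℕ) (s : ℝ[X]) (hs : s.natDegree < k) :
    ∫ x in (-1:ℝ)..1, (legendre k).eval x * s.eval x = 0 := by
  have := ibp_aux k k le_rfl s
  rw [iterate_derivative_eq_zero hs] at this
  simpa [legendre] using this



/-- product of X - c j divides any polynomial vanishing at the (distinct) c j. -/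
lemma prod_dvd {k : ℕ} (c : Fin k → ℝ) (hinj : Function.Injective c)
    (p : ℝ[X]) (hp : p ≠ 0) (h : ∀ j, p.eval (c j) = 0) :
    (∏ j : Fin k, (X - C (c j))) ∣ p := by
  classical
  have hW : (∏ j : Fin k, (X - C (c j)))
      = ((Finset.univ.val.map c).map fun a => X - C a).prod := by
    rw [Multiset.map_map]
    rfl
  rw [hW, Multiset.prod_X_sub_C_dvd_iff_le_roots hp]
  have hnodup : (Finset.univ.val.map c).Nodup :=
    Finset.univ.nodup.map hinj
  rw [Multiset.le_iff_count]
  intro x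
  by_cases hx : x ∈ Finset.univ.val.map c
  · have h1 : (Finset.univ.val.map c).count x = 1 := Multiset.count_eq_one_of_mem hnodup hx
    rw [h1]
    obtain ⟨j, _, rfl⟩ := Multiset.mem_map.mp hx
    rw [count_roots]
    exact (rootMultiplicity_pos hp).mpr (h j)
  · rw [Multiset.count_eq_zero_of_notMem hx]
    exact Nat.zero_le _

lemma quad (k : ℕ) (hk : 1 ≤ k) (c : Fin k → ℝ) (hinj : Function.Injective c)
    (hroot : ∀ j, (legendre k).eval (c j) = 0) (g : ℝ[X]) (hdeg : g.natDegree ≤ 2 * k - 1)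
    (hg : ∀ j, g.eval (c j) = 0) : ∫ x in (-1:ℝ)..1, g.eval x = 0 := by
  classical
  by_cases hg0 : g = 0
  · simp [hg0]
  set W : ℝ[X] := ∏ j : Fin k, (X - C (c j)) with hWdef
  have hWmonic : W.Monic := monic_prod_of_monic _ _ fun j _ => monic_X_sub_C (c j)
  have hWdeg : W.natDegree = k := by
    rw [hWdef, natDegree_prod_of_monic _ _ fun j _ => monic_X_sub_C (c j)]
    simp [natDegree_X_sub_C]
  -- legendre k = W * C d
  obtain ⟨s₀, hs₀⟩ := prod_dvd c hinj (legendre k) (legendre_ne_zero k) hroot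
  rw [← hWdef] at hs₀
  have hs₀ne : s₀ ≠ 0 := by
    intro h; rw [h, mul_zero] at hs₀; exact legendre_ne_zero k hs₀
  have hs₀deg : s₀.natDegree = 0 := by
    have := legendre_natDegree k
    rw [hs₀, natDegree_mul hWmonic.ne_zero hs₀ne, hWdeg] at this
    omega
  obtain ⟨d, hs₀C⟩ : ∃ d : ℝ, s₀ = C d := ⟨s₀.coeff 0, Polynomial.eq_C_of_natDegree_eq_zero hs₀deg⟩
  have hdne : d ≠ 0 := by
    intro h
    apply hs₀ne
    rw [hs₀C, h, map_zero]
  have hWleg : W = C d⁻¹ * legendre k := by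
    rw [hs₀, hs₀C, mul_comm W (C d), ← mul_assoc, ← C_mul, inv_mul_cancel₀ hdne, C_1, one_mul]
  -- g = W * r
  obtain ⟨r, hr⟩ := prod_dvd c hinj g hg0 hg
  rw [← hWdef] at hr
  have hrne : r ≠ 0 := by
    intro h; rw [h, mul_zero] at hr; exact hg0 hr
  have hrdeg : r.natDegree < k := by
    have := hr ▸ hdeg
    rw [natDegree_mul hWmonic.ne_zero hrne, hWdeg] at this
    omega
  have : ∀ x : ℝ, g.eval x = d⁻¹ * ((legendre k).eval x * r.eval x) := by
    intro x
    rw [hr, hWleg]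
    simp [eval_mul]
    ring
  calc ∫ x in (-1:ℝ)..1, g.eval x
      = ∫ x in (-1:ℝ)..1, d⁻¹ * ((legendre k).eval x * r.eval x) := by
        apply intervalIntegral.integral_congr; intro x _; exact this x
    _ = d⁻¹ * ∫ x in (-1:ℝ)..1, (legendre k).eval x * r.eval x := intervalIntegral.integral_const_mul _ _
    _ = 0 := by rw [orth k r hrdeg, mul_zero]

/-- transported quadrature: the integral over [m - τ/2, m + τ/2] of a polynomial of degree
≤ 2k-1 vanishing at the transported Gauss points is 0. -/
lemma quad_interval (k : ℕ) (hk : 1 ≤ k) (c : Fin k → ℝ) (hinj : Function.Injective c)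
    (hroot : ∀ j, (legendre k).eval (c j) = 0) (τ m : ℝ) (hτ : 0 < τ)
    (g : ℝ[X]) (hdeg : g.natDegree ≤ 2 * k - 1)
    (hg : ∀ j, g.eval (τ / 2 * c j + m) = 0) :
    ∫ x in (m - τ/2)..(m + τ/2), g.eval x = 0 := by
  have h2 : (τ / 2 : ℝ) ≠ 0 := by positivity
  set g' : ℝ[X] := g.comp (C (τ/2) * X + C m) with hg'def
  have hg'eval : ∀ x : ℝ, g'.eval x = g.eval (τ/2 * x + m) := by
    intro x; simp [hg'def, eval_comp]
  have hg'deg : g'.natDegree ≤ 2 * k - 1 := by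
    rw [hg'def, natDegree_comp, natDegree_linear h2, mul_one]
    exact hdeg
  have hg'root : ∀ j, g'.eval (c j) = 0 := fun j => by rw [hg'eval]; exact hg j
  have h0 : ∫ x in (-1:ℝ)..1, g'.eval x = 0 := quad k hk c hinj hroot g' hg'deg hg'root
  have hcomp := intervalIntegral.integral_comp_mul_add (a := (-1:ℝ)) (b := 1)
    (fun x => g.eval x) h2 m
  have : (∫ x in (-1:ℝ)..1, g.eval (τ/2 * x + m))
      = (τ/2)⁻¹ • ∫ x in (τ/2 * (-1) + m)..(τ/2 * 1 + m), g.eval x := hcomp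
  rw [show (τ/2 * (-1) + m) = m - τ/2 by ring, show (τ/2 * 1 + m) = m + τ/2 by ring] at this
  have hL : (∫ x in (-1:ℝ)..1, g.eval (τ/2 * x + m)) = 0 := by
    rw [← h0]; apply intervalIntegral.integral_congr; intro x _; exact (hg'eval x).symm
  rw [hL] at this
  exact (smul_eq_zero.mp this.symm).resolve_left (inv_ne_zero h2)



variable {V : Type*} [NormedAddCommGroup V] [InnerProductSpace ℂ V]

lemma a_expand {k : ℕ} (a : V → V → ℂ)
    (ha_add : ∀ v₁ v₂ w : V, a (v₁ + v₂) w = a v₁ w + a v₂ w)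
    (ha_smul : ∀ (z : ℂ) (v w : V), a (z • v) w = z * a v w)
    (ha_herm : ∀ v w : V, a v w = starRingEnd ℂ (a w v))
    (φ : Fin (k+1) → V) (β γ : Fin (k+1) → ℝ) :
    a (∑ i : Fin (k+1), β i • φ i) (∑ i : Fin (k+1), γ i • φ i)
      = ∑ i : Fin (k+1), ∑ i' : Fin (k+1),
          ((β i : ℂ) * (γ i' : ℂ)) * a (φ i) (φ i') := by
  classical
  have h0 : ∀ w, a 0 w = 0 := by
    intro w
    have h := ha_add 0 0 w
    rw [add_zero] at h
    exact (left_eq_add.mp h)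
  have hsumL : ∀ (s : Finset (Fin (k+1))) (f : Fin (k+1) → V) (w : V),
      a (∑ i ∈ s, f i) w = ∑ i ∈ s, a (f i) w := by
    intro s f w
    induction s using Finset.induction_on with
    | empty => simpa using h0 w
    | insert _ _ hnot ih => rw [Finset.sum_insert hnot, ha_add, ih, Finset.sum_insert hnot]
  have h0R : ∀ v, a v 0 = 0 := by
    intro v; rw [ha_herm, h0, map_zero]
  have haddR : ∀ v w₁ w₂, a v (w₁ + w₂) = a v w₁ + a v w₂ := by
    intro v w₁ w₂
    rw [ha_herm, ha_add, map_add, ← ha_herm, ← ha_herm]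
  have hsumR : ∀ (s : Finset (Fin (k+1))) (v : V) (f : Fin (k+1) → V),
      a v (∑ i ∈ s, f i) = ∑ i ∈ s, a v (f i) := by
    intro s v f
    induction s using Finset.induction_on with
    | empty => simpa using h0R v
    | insert _ _ hnot ih => rw [Finset.sum_insert hnot, haddR, ih, Finset.sum_insert hnot]
  have hsmulL : ∀ (r : ℝ) (v w : V), a (r • v) w = (r : ℂ) * a v w := by
    intro r v w; rw [← Complex.coe_smul, ha_smul]
  have hsmulR : ∀ (r : ℝ) (v w : V), a v (r • w) = (r : ℂ) * a v w := by
    intro r v w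
    rw [ha_herm, hsmulL, map_mul, Complex.conj_ofReal, ← ha_herm]
  rw [hsumL]
  refine Finset.sum_congr rfl fun i _ => ?_
  rw [hsmulL, hsumR, Finset.mul_sum]
  refine Finset.sum_congr rfl fun i' _ => ?_
  rw [hsmulR, mul_assoc]

lemma a_expand_re {k : ℕ} (a : V → V → ℂ)
    (ha_add : ∀ v₁ v₂ w : V, a (v₁ + v₂) w = a v₁ w + a v₂ w)
    (ha_smul : ∀ (z : ℂ) (v w : V), a (z • v) w = z * a v w)
    (ha_herm : ∀ v w : V, a v w = starRingEnd ℂ (a w v))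
    (φ : Fin (k+1) → V) (β γ : Fin (k+1) → ℝ) :
    (a (∑ i : Fin (k+1), β i • φ i) (∑ i : Fin (k+1), γ i • φ i)).re
      = ∑ i : Fin (k+1), ∑ i' : Fin (k+1),
          β i * γ i' * (a (φ i) (φ i')).re := by
  rw [a_expand a ha_add ha_smul ha_herm φ β γ, Complex.re_sum]
  refine Finset.sum_congr rfl fun i _ => ?_
  rw [Complex.re_sum]
  refine Finset.sum_congr rfl fun i' _ => ?_
  simp [Complex.mul_re]

lemma pow_identity (i i' : ℕ) (t : ℝ) (r : ℝ) :
    (((i : ℝ) + (i' : ℝ)) * t ^ (i + i' - 1)) * r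
      = (i : ℝ) * t ^ (i - 1) * (t ^ i') * r + (t ^ i) * ((i' : ℝ) * t ^ (i' - 1)) * r := by
  rcases i with _ | i <;> rcases i' with _ | i' <;>
    push_cast <;> simp [pow_succ, pow_add] <;> ring

end SAVAux

end SAVAuxSection

theorem energy_conservation
    (k N : ℕ) (hk : 1 ≤ k) (hN : 1 ≤ N) (T : ℝ) (hT : 0 < T)
    -- the Gauss points of [-1,1]: the k roots of the Legendre polynomial of degree k
    (c : Fin k → ℝ) (hmono : StrictMono c)
    (hroot : ∀ j, (legendre k).eval (c j) = 0)
    (hmem : ∀ j, c j ∈ Set.Ioo (-1 : ℝ) 1)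
    -- V : a finite-dimensional complex inner product space
    (V : Type*) [NormedAddCommGroup V] [InnerProductSpace ℂ V] [FiniteDimensional ℂ V]
    -- a : a Hermitian sesquilinear form (paper's convention: linear in the first argument)
    (a : V → V → ℂ)
    (ha_add : ∀ v₁ v₂ w : V, a (v₁ + v₂) w = a v₁ w + a v₂ w)
    (ha_smul : ∀ (z : ℂ) (v w : V), a (z • v) w = z * a v w)
    (ha_herm : ∀ v w : V, a v w = starRingEnd ℂ (a w v))
    -- G : an arbitrary map
    -- (paper's ⟨x, y⟩, linear in x, is Mathlib's `inner y x`)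
    (G : V → V)
    -- numerical solution: continuous, piecewise polynomial of degree ≤ k in time
    (uh : ℝ → V) (rh : ℝ → ℝ)
    (hupoly : ∀ n ∈ Finset.Icc 1 N, ∃ p : ℝ → V, IsPolyDeg V k p ∧
      ∀ t ∈ Set.Icc (((n : ℝ) - 1) * (T / N)) ((n : ℝ) * (T / N)), uh t = p t)
    (hrpoly : ∀ n ∈ Finset.Icc 1 N, ∃ q : ℝ → ℝ, IsPolyDeg ℝ k q ∧
      ∀ t ∈ Set.Icc (((n : ℝ) - 1) * (T / N)) ((n : ℝ) * (T / N)), rh t = q t)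
    -- Gauss collocation equation (i):  i⟨u_h'(t_nj), v⟩ + a(u_h(t_nj), v)
    --   - r_h(t_nj) ⟨G(u_h(t_nj)), v⟩ = 0  for all v ∈ V
    (hu_eq : ∀ n ∈ Finset.Icc 1 N, ∀ j : Fin k, ∀ v : V,
      Complex.I * (inner ℂ v (deriv uh (collocPt (T / N) n (c j))) : ℂ)
        + a (uh (collocPt (T / N) n (c j))) v
        - (rh (collocPt (T / N) n (c j)) : ℂ)
            * (inner ℂ v (G (uh (collocPt (T / N) n (c j)))) : ℂ) = 0)
    -- Gauss collocation equation (ii): r_h'(t_nj) = (1/2) Re ⟨G(u_h(t_nj)), u_h'(t_nj)⟩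
    (hr_eq : ∀ n ∈ Finset.Icc 1 N, ∀ j : Fin k,
      deriv rh (collocPt (T / N) n (c j))
        = (1 / 2) * ((inner ℂ (deriv uh (collocPt (T / N) n (c j)))
            (G (uh (collocPt (T / N) n (c j)))) : ℂ)).re) :
    -- conclusion: discrete SAV energy conservation for n = 1, ..., N
    ∀ n ∈ Finset.Icc 1 N,
      (1 / 2) * (a (uh ((n : ℝ) * (T / N))) (uh ((n : ℝ) * (T / N)))).re
          - (rh ((n : ℝ) * (T / N))) ^ 2
        = (1 / 2) * (a (uh 0) (uh 0)).re - (rh 0) ^ 2 := by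
  classical
  have hNpos : (0:ℝ) < (N:ℝ) := by exact_mod_cast (by omega : 0 < N)
  set τ : ℝ := T / N with hτdef
  have hτ : (0:ℝ) < τ := div_pos hT hNpos
  set E : ℝ → ℝ := fun t => (1/2) * (a (uh t) (uh t)).re - rh t ^ 2 with hEdef
  -- the per-interval energy identity
  have key : ∀ m ∈ Finset.Icc 1 N, E (((m:ℝ) - 1) * τ) = E ((m:ℝ) * τ) := by
    intro m hm
    obtain ⟨p, ⟨φ, hφ⟩, hup⟩ := hupoly m hm
    obtain ⟨q, ⟨ψ, hψ⟩, hrq⟩ := hrpoly m hm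
    set an : ℝ := ((m:ℝ) - 1) * τ with handef
    set bn : ℝ := (m:ℝ) * τ with hbndef
    have hab : an < bn := by
      rw [handef, hbndef]
      have h1 : ((m:ℝ) - 1) < (m:ℝ) := by linarith
      exact mul_lt_mul_of_pos_right h1 hτ
    set A : Polynomial ℝ := ∑ i : Fin (k+1), ∑ i' : Fin (k+1),
      Polynomial.C ((a (φ i) (φ i')).re) * Polynomial.X ^ ((i:ℕ) + (i':ℕ)) with hAdef
    set Q : Polynomial ℝ := ∑ i : Fin (k+1), Polynomial.C (ψ i) * Polynomial.X ^ (i:ℕ) with hQdef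
    set e : Polynomial ℝ := Polynomial.C (1/2 : ℝ) * A - Q ^ 2 with hedef
    have hQeval : ∀ t : ℝ, Q.eval t = q t := by
      intro t
      rw [hψ t, hQdef, Polynomial.eval_finset_sum]
      refine Finset.sum_congr rfl fun i _ => ?_
      rw [smul_eq_mul, Polynomial.eval_mul, Polynomial.eval_C, Polynomial.eval_pow,
        Polynomial.eval_X, mul_comm]
    have hAeval : ∀ t : ℝ, A.eval t = (a (p t) (p t)).re := by
      intro t
      rw [hφ t]
      rw [SAVAux.a_expand_re a ha_add ha_smul ha_herm φ (fun i => t ^ (i:ℕ)) (fun i => t ^ (i:ℕ))]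
      rw [hAdef, Polynomial.eval_finset_sum]
      refine Finset.sum_congr rfl fun i _ => ?_
      rw [Polynomial.eval_finset_sum]
      refine Finset.sum_congr rfl fun i' _ => ?_
      simp [pow_add]
      ring
    set dp : ℝ → V := fun t => ∑ i : Fin (k+1), (((i:ℕ):ℝ) * t ^ ((i:ℕ) - 1)) • φ i with hdpdef
    have hdp : ∀ t : ℝ, HasDerivAt p (dp t) t := by
      intro t
      have hpe : p = fun s => ∑ i : Fin (k+1), s ^ (i:ℕ) • φ i := funext hφ
      rw [hpe, hdpdef]
      exact HasDerivAt.fun_sum fun (i : Fin (k+1)) _ => (hasDerivAt_pow (i:ℕ) t).smul_const (φ i)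
    have hA' : ∀ t : ℝ, (Polynomial.derivative A).eval t
        = (a (dp t) (p t)).re + (a (p t) (dp t)).re := by
      intro t
      rw [hφ t, hdpdef]
      rw [SAVAux.a_expand_re a ha_add ha_smul ha_herm φ
        (fun i => ((i:ℕ):ℝ) * t ^ ((i:ℕ) - 1)) (fun i => t ^ (i:ℕ))]
      rw [SAVAux.a_expand_re a ha_add ha_smul ha_herm φ
        (fun i => t ^ (i:ℕ)) (fun i => ((i:ℕ):ℝ) * t ^ ((i:ℕ) - 1))]
      rw [← Finset.sum_add_distrib]
      rw [hAdef, Polynomial.derivative_sum, Polynomial.eval_finset_sum]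
      refine Finset.sum_congr rfl fun i _ => ?_
      rw [← Finset.sum_add_distrib, Polynomial.derivative_sum, Polynomial.eval_finset_sum]
      refine Finset.sum_congr rfl fun i' _ => ?_
      rw [Polynomial.derivative_C_mul, Polynomial.derivative_X_pow]
      simp only [Polynomial.eval_mul, Polynomial.eval_C, Polynomial.eval_pow, Polynomial.eval_X,
        Polynomial.eval_natCast]
      have hid := SAVAux.pow_identity (i:ℕ) (i':ℕ) t ((a (φ i) (φ i')).re)
      push_cast at hid ⊢
      linarith [hid]
    -- degree bounds
    have hAdeg : A.natDegree ≤ 2 * k := by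
      rw [hAdef]
      refine Polynomial.natDegree_sum_le_of_forall_le _ _ fun i _ => ?_
      refine Polynomial.natDegree_sum_le_of_forall_le _ _ fun i' _ => ?_
      refine (Polynomial.natDegree_C_mul_le _ _).trans ?_
      rw [Polynomial.natDegree_X_pow]
      have h1 : (i:ℕ) ≤ k := Nat.lt_succ_iff.mp i.isLt
      have h2 : (i':ℕ) ≤ k := Nat.lt_succ_iff.mp i'.isLt
      omega
    have hQdeg : Q.natDegree ≤ k := by
      rw [hQdef]
      refine Polynomial.natDegree_sum_le_of_forall_le _ _ fun i _ => ?_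
      refine (Polynomial.natDegree_C_mul_le _ _).trans ?_
      rw [Polynomial.natDegree_X_pow]
      exact Nat.lt_succ_iff.mp i.isLt
    have hedeg : e.natDegree ≤ 2 * k := by
      rw [hedef]
      refine (Polynomial.natDegree_sub_le _ _).trans (max_le ?_ ?_)
      · exact (Polynomial.natDegree_C_mul_le _ _).trans hAdeg
      · rw [Polynomial.natDegree_pow]; omega
    have hde : (Polynomial.derivative e).natDegree ≤ 2 * k - 1 :=
      (Polynomial.natDegree_derivative_le e).trans (by omega)
    -- vanishing of the energy derivative at the collocation points
    have hcolloc : ∀ j : Fin k, (Polynomial.derivative e).eval (collocPt τ m (c j)) = 0 := by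
      intro j
      set t₀ : ℝ := collocPt τ m (c j) with ht₀def
      have hcj := hmem j
      have ht₀mem : t₀ ∈ Set.Ioo an bn := by
        rw [Set.mem_Ioo]
        constructor
        · rw [ht₀def, handef]
          unfold collocPt
          nlinarith [hcj.1, hcj.2, hτ]
        · rw [ht₀def, hbndef]
          unfold collocPt
          nlinarith [hcj.1, hcj.2, hτ]
      have ht₀Icc : t₀ ∈ Set.Icc an bn := Set.Ioo_subset_Icc_self ht₀mem
      have hu_near : uh =ᶠ[nhds t₀] p :=
        Filter.eventuallyEq_of_mem (Ioo_mem_nhds ht₀mem.1 ht₀mem.2)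
          (fun x hx => hup x (Set.Ioo_subset_Icc_self hx))
      have hud : deriv uh t₀ = dp t₀ := by
        rw [hu_near.deriv_eq]; exact (hdp t₀).deriv
      have hu0 : uh t₀ = p t₀ := hup t₀ ht₀Icc
      have hr_near : rh =ᶠ[nhds t₀] fun s => Q.eval s :=
        Filter.eventuallyEq_of_mem (Ioo_mem_nhds ht₀mem.1 ht₀mem.2)
          (fun x hx => ((hrq x (Set.Ioo_subset_Icc_self hx)).trans (hQeval x).symm))
      have hrd : deriv rh t₀ = (Polynomial.derivative Q).eval t₀ := by
        rw [hr_near.deriv_eq]; exact Polynomial.deriv _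
      have hr0 : rh t₀ = Q.eval t₀ := (hrq t₀ ht₀Icc).trans (hQeval t₀).symm
      have heq1 := hu_eq m hm j (deriv uh t₀)
      have heq2 := hr_eq m hm j
      rw [← ht₀def] at heq1 heq2
      have him : (inner ℂ (deriv uh t₀) (deriv uh t₀) : ℂ).im = 0 :=
        inner_self_im (𝕜 := ℂ) (deriv uh t₀)
      have hre1 : (a (uh t₀) (deriv uh t₀)).re
          = rh t₀ * (inner ℂ (deriv uh t₀) (G (uh t₀)) : ℂ).re := by
        have h := congrArg Complex.re heq1
        simp only [Complex.add_re, Complex.sub_re, Complex.mul_re, Complex.I_re, Complex.I_im,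
          Complex.ofReal_re, Complex.ofReal_im, Complex.zero_re, zero_mul, one_mul, zero_sub,
          sub_zero] at h
        rw [him] at h
        linarith
      have hderiv_e : (Polynomial.derivative e).eval t₀
          = 1/2 * ((Polynomial.derivative A).eval t₀)
            - 2 * (Q.eval t₀) * ((Polynomial.derivative Q).eval t₀) := by
        rw [hedef, Polynomial.derivative_sub, Polynomial.derivative_C_mul,
          Polynomial.derivative_pow]
        simp
      have hsym : (a (dp t₀) (p t₀)).re = (a (p t₀) (dp t₀)).re := by
        rw [ha_herm (dp t₀) (p t₀)]
        exact Complex.conj_re _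
      rw [hderiv_e, hA' t₀, hsym, ← hu0, ← hud, ← hr0, ← hrd, hre1, heq2]
      ring
    -- the quadrature argument
    have hroots' : ∀ j : Fin k, (Polynomial.derivative e).eval (τ/2 * c j + (an + τ/2)) = 0 := by
      intro j
      have hpt : τ/2 * c j + (an + τ/2) = collocPt τ m (c j) := by
        rw [handef]; unfold collocPt; ring
      rw [hpt]; exact hcolloc j
    have hint := SAVAux.quad_interval k hk c hmono.injective hroot τ (an + τ/2) hτ
      (Polynomial.derivative e) hde hroots'
    rw [show an + τ/2 - τ/2 = an by ring] at hint
    rw [show an + τ/2 + τ/2 = bn by rw [handef, hbndef]; ring] at hint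
    have hftc : ∫ x in an..bn, (Polynomial.derivative e).eval x = e.eval bn - e.eval an := by
      refine intervalIntegral.integral_deriv_eq_sub' (fun x => e.eval x) ?_ ?_ ?_
      · exact funext fun x => Polynomial.deriv _
      · exact fun x _ => (e.hasDerivAt x).differentiableAt
      · exact (Polynomial.derivative e).continuous.continuousOn
    have hee : e.eval an = e.eval bn := by
      rw [hftc] at hint; linarith
    have hEeval : ∀ t ∈ Set.Icc an bn,
        e.eval t = (1/2) * (a (uh t) (uh t)).re - rh t ^ 2 := by
      intro t ht
      rw [hedef]
      simp only [Polynomial.eval_sub, Polynomial.eval_mul, Polynomial.eval_C, Polynomial.eval_pow]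
      rw [hAeval t, hQeval t, ← hup t ht, ← hrq t ht]
    have h1 := hEeval an ⟨le_rfl, hab.le⟩
    have h2 := hEeval bn ⟨hab.le, le_rfl⟩
    rw [hEdef]
    simp only []
    rw [← h1, ← h2]
    exact hee
  -- telescoping
  have main : ∀ n : ℕ, 1 ≤ n → n ≤ N → E ((n:ℝ) * τ) = E 0 := by
    intro n hn1
    induction n, hn1 using Nat.le_induction with
    | base =>
      intro h1N
      have hkey := key 1 (Finset.mem_Icc.mpr ⟨le_refl 1, h1N⟩)
      rw [show ((1:ℕ):ℝ) - 1 = 0 by norm_num, zero_mul] at hkey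
      exact hkey.symm
    | succ n hn ih =>
      intro hsN
      have hkey := key (n+1) (Finset.mem_Icc.mpr ⟨by omega, hsN⟩)
      rw [show ((n+1:ℕ):ℝ) - 1 = (n:ℝ) by push_cast; ring] at hkey
      exact hkey.symm.trans (ih (by omega))
  intro n hn
  obtain ⟨h1, h2⟩ := Finset.mem_Icc.mp hn
  exact main n h1 h2
end

section
/- Unconditional bound on the mass at internal stages (Theorem 3.2, inequality (5.1b)): under the abstract Gauss collocation SAV scheme with ⟨G(v), v⟩ ∈ ℝ for every v ∈ V, there is a constant C depending only on k (independent of τ, N, V, a, G, u_h, r_h) such that max over n = 1,...,N and j = 1,...,k of ‖u_h(t_{nj})‖ ≤ C·‖u_h(0)‖. -/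
/-!
Unconditional bound on the mass at internal stages (Theorem 3.2, inequality (5.1b)):
there is a constant `C` depending only on `k` such that
`max_{n,j} ‖u_h(t_{nj})‖ ≤ C ‖u_h(0)‖`.
-/

open MeasureTheory

universe u

open Polynomial intervalIntegral NNReal

namespace MB


lemma integral_derivative (p : Polynomial ℝ) :
    ∫ x in (-1:ℝ)..1, (Polynomial.derivative p).eval x = p.eval 1 - p.eval (-1) := by
  refine intervalIntegral.integral_eq_sub_of_hasDerivAt (fun x _ => p.hasDerivAt x) ?_
  exact (p.derivative.continuous_aeval).intervalIntegrable _ _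

lemma pow_dvd_iter (k : ℕ) : ∀ m ≤ k,
    ((X:Polynomial ℝ)^2 - 1)^(k - m) ∣ Polynomial.derivative^[m] (((X:Polynomial ℝ)^2 - 1)^k) := by
  intro m
  induction m with
  | zero => intro _; simp
  | succ m ih =>
    intro hm
    obtain ⟨h, hh⟩ := ih (le_of_lt (Nat.lt_of_succ_le hm))
    rw [Function.iterate_succ_apply', hh, Polynomial.derivative_mul,
      Polynomial.derivative_pow]
    have h1 : k - m = (k - (m+1)) + 1 := by omega
    rw [h1, Nat.add_sub_cancel]
    refine dvd_add ⟨((k - (m+1) + 1 : ℕ) : Polynomial ℝ) * Polynomial.derivative ((X:Polynomial ℝ)^2-1) * h, by simp only [Polynomial.C_eq_natCast]; ring⟩ ⟨((X:Polynomial ℝ)^2-1) * Polynomial.derivative h, by rw [pow_succ]; ring⟩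

lemma eval_iter_deriv_zero (k m : ℕ) (hm : m < k) (x : ℝ) (hx : x^2 = 1) :
    (Polynomial.derivative^[m] (((X:Polynomial ℝ)^2 - 1)^k)).eval x = 0 := by
  obtain ⟨h, hh⟩ := pow_dvd_iter k m (le_of_lt hm)
  rw [hh, Polynomial.eval_mul, Polynomial.eval_pow]
  have : ((X:Polynomial ℝ)^2 - 1).eval x = 0 := by simp [hx]
  rw [this, zero_pow (by omega), zero_mul]

lemma orth_aux (k : ℕ) : ∀ j, j ≤ k → ∀ q : Polynomial ℝ, Polynomial.derivative^[j] q = 0 →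
    ∫ x in (-1:ℝ)..1, (Polynomial.derivative^[j] (((X:Polynomial ℝ)^2 - 1)^k)).eval x * q.eval x = 0 := by
  intro j
  induction j with
  | zero =>
    intro _ q hq
    simp only [Function.iterate_zero_apply] at hq ⊢
    simp [hq]
  | succ j ih =>
    intro hj q hq
    set f := (((X:Polynomial ℝ)^2 - 1)^k) with hf
    have key : ∀ x : ℝ, (Polynomial.derivative^[j+1] f).eval x * q.eval x
        = (Polynomial.derivative (Polynomial.derivative^[j] f * q)).eval x
          - (Polynomial.derivative^[j] f).eval x * (Polynomial.derivative q).eval x := by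
      intro x
      rw [Polynomial.derivative_mul, Function.iterate_succ_apply']
      simp [Polynomial.eval_add, Polynomial.eval_mul]
    have hcont : ∀ p : Polynomial ℝ, IntervalIntegrable (fun x => p.eval x) volume (-1:ℝ) 1 :=
      fun p => (p.continuous_aeval).intervalIntegrable _ _
    calc ∫ x in (-1:ℝ)..1, (Polynomial.derivative^[j+1] f).eval x * q.eval x
        = ∫ x in (-1:ℝ)..1, ((Polynomial.derivative (Polynomial.derivative^[j] f * q)).eval x
          - (Polynomial.derivative^[j] f).eval x * (Polynomial.derivative q).eval x) := by
          refine intervalIntegral.integral_congr (fun x _ => key x)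
      _ = (∫ x in (-1:ℝ)..1, (Polynomial.derivative (Polynomial.derivative^[j] f * q)).eval x)
          - ∫ x in (-1:ℝ)..1, (Polynomial.derivative^[j] f).eval x * (Polynomial.derivative q).eval x := by
          refine intervalIntegral.integral_sub (hcont _) ?_
          have := ((Polynomial.derivative^[j] f).continuous_aeval.mul
            (Polynomial.derivative q).continuous_aeval).intervalIntegrable (μ := volume) (-1:ℝ) 1
          exact this
      _ = 0 := by
          rw [integral_derivative]
          have e1 : (Polynomial.derivative^[j] f).eval 1 = 0 :=
            eval_iter_deriv_zero k j (by omega) 1 (by norm_num)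
          have e2 : (Polynomial.derivative^[j] f).eval (-1) = 0 :=
            eval_iter_deriv_zero k j (by omega) (-1) (by norm_num)
          have e3 : Polynomial.derivative^[j] (Polynomial.derivative q) = 0 := by
            rw [← Function.iterate_succ_apply]; exact hq
          rw [ih (by omega) (Polynomial.derivative q) e3]
          simp [Polynomial.eval_mul, e1, e2]

lemma legendre_orth (k : ℕ) (q : Polynomial ℝ) (hq : q.natDegree < k) :
    ∫ x in (-1:ℝ)..1, (legendre k).eval x * q.eval x = 0 :=
  orth_aux k k le_rfl q (Polynomial.iterate_derivative_eq_zero hq)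



lemma monic_base (k : ℕ) : (((X:Polynomial ℝ)^2 - 1)^k).Monic := by
  have h : ((X:Polynomial ℝ)^2 - 1).Monic := by
    have : ((X:Polynomial ℝ)^2 - 1) = X^2 - Polynomial.C (1:ℝ) := by simp
    rw [this]
    exact Polynomial.monic_X_pow_sub_C _ (by norm_num)
  exact h.pow k

lemma natDegree_base (k : ℕ) : (((X:Polynomial ℝ)^2 - 1)^k).natDegree = 2*k := by
  rw [Polynomial.natDegree_pow]
  have : ((X:Polynomial ℝ)^2 - 1) = X^2 - Polynomial.C (1:ℝ) := by simp
  rw [this, Polynomial.natDegree_X_pow_sub_C]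
  ring

lemma legendre_coeff_k (k : ℕ) : (legendre k).coeff k = ((2*k).descFactorial k : ℝ) := by
  rw [legendre, Polynomial.coeff_iterate_derivative]
  have h2 : k + k = 2*k := by ring
  rw [h2]
  have : (((X:Polynomial ℝ)^2 - 1)^k).coeff (2*k) = 1 := by
    have := (monic_base k).coeff_natDegree
    rwa [natDegree_base] at this
  rw [this]
  simp

lemma legendre_natDegree (k : ℕ) : (legendre k).natDegree = k := by
  have hle : (legendre k).natDegree ≤ k := by
    have := Polynomial.natDegree_iterate_derivative (((X:Polynomial ℝ)^2 - 1)^k) k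
    rwa [natDegree_base, two_mul, Nat.add_sub_cancel] at this
  have hne : (legendre k).coeff k ≠ 0 := by
    rw [legendre_coeff_k]
    have : (2*k).descFactorial k ≠ 0 := by
      rw [Ne, Nat.descFactorial_eq_zero_iff_lt]; omega
    exact_mod_cast this
  exact le_antisymm hle (Polynomial.le_natDegree_of_ne_zero hne)

lemma legendre_ne_zero (k : ℕ) : legendre k ≠ 0 := fun h => by
  have h1 := legendre_coeff_k k
  rw [h, Polynomial.coeff_zero] at h1
  have h2 : (2*k).descFactorial k = 0 := by exact_mod_cast h1.symm
  rw [Nat.descFactorial_eq_zero_iff_lt] at h2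
  omega

/-- product of (X - c j) divides any nonzero polynomial having the c j as roots,
for injective c -/
lemma prod_dvd {k : ℕ} {c : Fin k → ℝ} (hc : Function.Injective c) {p : Polynomial ℝ}
    (hp : p ≠ 0) (h : ∀ j, p.eval (c j) = 0) :
    (∏ j : Fin k, (X - Polynomial.C (c j))) ∣ p := by
  classical
  set s : Multiset ℝ := Multiset.map c Finset.univ.val with hs
  have hnd : s.Nodup := Multiset.Nodup.map hc Finset.univ.nodup
  have hle : s ≤ p.roots := by
    refine Multiset.le_iff_count.mpr fun r => ?_
    by_cases hr : r ∈ s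
    · have h1 : s.count r = 1 := Multiset.count_eq_one_of_mem hnd hr
      obtain ⟨j, _, rfl⟩ := Multiset.mem_map.mp hr
      have : c j ∈ p.roots := by
        rw [Polynomial.mem_roots hp]
        exact h j
      rw [h1]
      exact Multiset.one_le_count_iff_mem.mpr this
    · simp [Multiset.count_eq_zero_of_notMem hr]
  have := (Multiset.prod_X_sub_C_dvd_iff_le_roots hp s).mpr hle
  have e : (∏ j : Fin k, (X - Polynomial.C (c j)))
      = (Multiset.map (fun a => X - Polynomial.C a) s).prod := by
    rw [hs, Multiset.map_map, Finset.prod_eq_multiset_prod]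
    rfl
  rwa [e]

section Ptilde
variable {k : ℕ} (c : Fin k → ℝ)

noncomputable def Pt : Polynomial ℝ := ∏ j : Fin k, (X - Polynomial.C (c j))

lemma Pt_monic : (Pt c).Monic :=
  Polynomial.monic_prod_of_monic _ _ (fun j _ => Polynomial.monic_X_sub_C (c j))

lemma Pt_natDegree : (Pt c).natDegree = k := by
  rw [Pt, Polynomial.natDegree_prod]
  · simp [Polynomial.natDegree_X_sub_C]
  · intro j _
    exact Polynomial.X_sub_C_ne_zero (c j)

lemma Pt_orth (hc : Function.Injective c) (hroot : ∀ j, (legendre k).eval (c j) = 0)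
    (q : Polynomial ℝ) (hq : q.natDegree < k) :
    ∫ x in (-1:ℝ)..1, (Pt c).eval x * q.eval x = 0 := by
  obtain ⟨s, hs⟩ := prod_dvd hc (legendre_ne_zero k) hroot
  have hs0 : s ≠ 0 := by
    intro h0
    exact legendre_ne_zero k (by rw [hs, h0, mul_zero])
  have hdeg : s.natDegree = 0 := by
    have := legendre_natDegree k
    rw [hs, Polynomial.natDegree_mul (by
      intro h0
      exact legendre_ne_zero k (by rw [hs, h0, zero_mul])) hs0] at this
    have h2 := Pt_natDegree c
    rw [Pt] at h2
    omega
  set s0 := s.coeff 0 with hs0def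
  have hsC : s = Polynomial.C s0 := Polynomial.eq_C_of_natDegree_eq_zero hdeg
  have hs0ne : s0 ≠ 0 := by
    intro h0
    exact hs0 (by rw [hsC, h0, map_zero])
  have key : ∀ x : ℝ, (legendre k).eval x * q.eval x = s0 * ((Pt c).eval x * q.eval x) := by
    intro x
    rw [hs, hsC]
    simp [Pt]
    ring
  have : ∫ x in (-1:ℝ)..1, (legendre k).eval x * q.eval x
      = s0 * ∫ x in (-1:ℝ)..1, (Pt c).eval x * q.eval x := by
    rw [← intervalIntegral.integral_const_mul]
    exact intervalIntegral.integral_congr (fun x _ => key x)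
  rw [legendre_orth k q hq] at this
  exact (mul_eq_zero.mp this.symm).resolve_left hs0ne

lemma coeff_mul_top (hk : 1 ≤ k) {q : Polynomial ℝ} (hq : q.natDegree ≤ k - 1) :
    ((Pt c) * q).coeff (2*k - 1) = q.coeff (k-1) := by
  rw [Polynomial.coeff_mul]
  have hmem : (k, k-1) ∈ Finset.HasAntidiagonal.antidiagonal (2*k-1) := by
    rw [Finset.HasAntidiagonal.mem_antidiagonal]; omega
  rw [Finset.sum_eq_single_of_mem (k, k-1) hmem]
  · rw [show (Pt c).coeff k = 1 from by
      have := (Pt_monic c).coeff_natDegree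
      rwa [Pt_natDegree] at this]
    ring
  · rintro ⟨a, b⟩ hab hne
    rw [Finset.HasAntidiagonal.mem_antidiagonal] at hab
    simp only at hab ⊢
    rcases lt_or_ge k a with h | h
    · rw [Polynomial.coeff_eq_zero_of_natDegree_lt (by rw [Pt_natDegree]; omega), zero_mul]
    · have hb : k - 1 < b := by
        rcases Nat.lt_or_ge a k with h2 | h2
        · omega
        · have : a = k := le_antisymm h h2
          subst this
          exfalso; apply hne; simp; omega
      rw [Polynomial.coeff_eq_zero_of_natDegree_lt (lt_of_le_of_lt hq hb), mul_zero]

/-- The key identities for a polynomial `h` of degree ≤ 2k whose derivative vanishes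
at the Gauss points. -/
lemma key_identities (hk : 1 ≤ k) (hc : Function.Injective c)
    (hroot : ∀ j, (legendre k).eval (c j) = 0)
    (h : Polynomial ℝ) (hdeg : h.natDegree ≤ 2*k)
    (hder : ∀ j, (Polynomial.derivative h).eval (c j) = 0) :
    h.eval 1 = h.eval (-1) ∧
    ∫ x in (-1:ℝ)..1, h.eval x
      = 2 * h.eval (-1) - (2*k : ℝ) * h.coeff (2*k) * ∫ x in (-1:ℝ)..1, ((Pt c).eval x)^2 := by
  classical
  -- obtain q with derivative h = Pt * q
  obtain ⟨q, hq⟩ : (Pt c) ∣ Polynomial.derivative h := by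
    by_cases h0 : Polynomial.derivative h = 0
    · rw [h0]; exact dvd_zero _
    · exact prod_dvd hc h0 hder
  have hPtne : Pt c ≠ 0 := (Pt_monic c).ne_zero
  have hqdeg : q.natDegree ≤ k - 1 := by
    by_cases hq0 : q = 0
    · simp [hq0]
    · have hdne : Polynomial.derivative h ≠ 0 := by
        rw [hq]
        exact mul_ne_zero hPtne hq0
      have h1 : (Polynomial.derivative h).natDegree ≤ 2*k - 1 := by
        have := Polynomial.natDegree_derivative_le h
        omega
      rw [hq, Polynomial.natDegree_mul hPtne hq0, Pt_natDegree] at h1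
      omega
  have hqlt : q.natDegree < k := by omega
  have int_pt_q : ∀ r : Polynomial ℝ, r.natDegree < k →
      ∫ x in (-1:ℝ)..1, (Polynomial.derivative h).eval x * r.eval x
        = ∫ x in (-1:ℝ)..1, (Pt c).eval x * (q * r).eval x := by
    intro r _
    refine intervalIntegral.integral_congr (fun x _ => ?_)
    rw [hq]
    simp [Polynomial.eval_mul]
    ring
  -- part (A)
  have hA : h.eval 1 = h.eval (-1) := by
    have h1 : ∫ x in (-1:ℝ)..1, (Polynomial.derivative h).eval x = 0 := by
      have : ∫ x in (-1:ℝ)..1, (Polynomial.derivative h).eval x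
          = ∫ x in (-1:ℝ)..1, (Pt c).eval x * q.eval x := by
        refine intervalIntegral.integral_congr (fun x _ => ?_)
        rw [hq]; simp [Polynomial.eval_mul]
      rw [this, Pt_orth c hc hroot q hqlt]
    have := integral_derivative h
    rw [h1] at this
    linarith
  refine ⟨hA, ?_⟩
  -- part (B)
  -- FTC applied to X * h
  have hXh : ∫ x in (-1:ℝ)..1, (h.eval x + x * (Polynomial.derivative h).eval x)
      = h.eval 1 + h.eval (-1) := by
    have e : ∀ x : ℝ, h.eval x + x * (Polynomial.derivative h).eval x
        = (Polynomial.derivative (X * h)).eval x := by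
      intro x
      rw [Polynomial.derivative_mul, Polynomial.derivative_X]
      simp [Polynomial.eval_add, Polynomial.eval_mul]
    calc ∫ x in (-1:ℝ)..1, (h.eval x + x * (Polynomial.derivative h).eval x)
        = ∫ x in (-1:ℝ)..1, (Polynomial.derivative (X * h)).eval x :=
          intervalIntegral.integral_congr (fun x _ => e x)
      _ = (X*h).eval 1 - (X*h).eval (-1) := integral_derivative _
      _ = h.eval 1 + h.eval (-1) := by simp
  have hint : ∀ p : Polynomial ℝ, IntervalIntegrable (fun x => p.eval x) volume (-1:ℝ) 1 :=
    fun p => (p.continuous_aeval).intervalIntegrable _ _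
  have hsplit : (∫ x in (-1:ℝ)..1, h.eval x)
      + ∫ x in (-1:ℝ)..1, x * (Polynomial.derivative h).eval x
      = h.eval 1 + h.eval (-1) := by
    rw [← hXh]
    rw [← intervalIntegral.integral_add (hint h) ?_]
    have : (fun x : ℝ => x * (Polynomial.derivative h).eval x)
        = fun x => (X * Polynomial.derivative h).eval x := by
      funext x; simp
    rw [this]
    exact hint _
  -- compute ∫ x * h'(x)
  set b : ℝ := q.coeff (k-1) with hb
  have hbval : b = (2*k : ℝ) * h.coeff (2*k) := by
    have h1 := coeff_mul_top c hk hqdeg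
    rw [← hq] at h1
    have h2 : (Polynomial.derivative h).coeff (2*k-1) = h.coeff (2*k-1+1) * ((2*k-1:ℕ)+1) :=
      Polynomial.coeff_derivative h (2*k-1)
    rw [show (2*k-1)+1 = 2*k by omega] at h2
    rw [h2] at h1
    rw [hb, ← h1, Nat.cast_sub (by omega : 1 ≤ 2*k)]
    push_cast
    ring
  -- decompose X * q = C b * Pt + r
  set r : Polynomial ℝ := X * q - Polynomial.C b * Pt c with hr
  have hrdeg : r.natDegree < k := by
    have hco : ∀ N, k - 1 < N → r.coeff N = 0 := by
      intro N hN
      obtain ⟨M, rfl⟩ : ∃ M, N = M + 1 := ⟨N-1, by omega⟩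
      have hXqc : (X*q).coeff (M+1) = q.coeff M := Polynomial.coeff_X_mul q M
      rw [hr, Polynomial.coeff_sub, Polynomial.coeff_C_mul, hXqc]
      have hge : k ≤ M + 1 := by omega
      rcases Nat.eq_or_lt_of_le hge with he | hl
      · have h1 : (Pt c).coeff (M+1) = 1 := by
          have := (Pt_monic c).coeff_natDegree
          rw [Pt_natDegree] at this
          rw [← he]
          exact this
        have h2 : q.coeff M = b := by rw [hb]; congr 1; omega
        rw [h1, h2]; ring
      · have h1 : (Pt c).coeff (M+1) = 0 :=
          Polynomial.coeff_eq_zero_of_natDegree_lt (by rw [Pt_natDegree]; omega)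
        have h2 : q.coeff M = 0 :=
          Polynomial.coeff_eq_zero_of_natDegree_lt (by omega)
        rw [h1, h2]; ring
    have : r.natDegree ≤ k - 1 := Polynomial.natDegree_le_iff_coeff_eq_zero.mpr hco
    omega
  have hXq : ∀ x : ℝ, x * q.eval x = b * (Pt c).eval x + r.eval x := by
    intro x
    rw [hr]
    simp [Polynomial.eval_sub, Polynomial.eval_mul]
  have hI2 : ∫ x in (-1:ℝ)..1, x * (Polynomial.derivative h).eval x
      = b * ∫ x in (-1:ℝ)..1, ((Pt c).eval x)^2 := by
    have e : ∀ x : ℝ, x * (Polynomial.derivative h).eval x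
        = b * ((Pt c).eval x)^2 + (Pt c).eval x * r.eval x := by
      intro x
      rw [hq]
      simp only [Polynomial.eval_mul]
      calc x * ((Pt c).eval x * q.eval x) = (Pt c).eval x * (x * q.eval x) := by ring
        _ = (Pt c).eval x * (b * (Pt c).eval x + r.eval x) := by rw [hXq x]
        _ = b * ((Pt c).eval x)^2 + (Pt c).eval x * r.eval x := by ring
    calc ∫ x in (-1:ℝ)..1, x * (Polynomial.derivative h).eval x
        = ∫ x in (-1:ℝ)..1, (b * ((Pt c).eval x)^2 + (Pt c).eval x * r.eval x) :=
          intervalIntegral.integral_congr (fun x _ => e x)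
      _ = b * (∫ x in (-1:ℝ)..1, ((Pt c).eval x)^2)
          + ∫ x in (-1:ℝ)..1, (Pt c).eval x * r.eval x := by
          rw [← intervalIntegral.integral_const_mul]
          refine intervalIntegral.integral_add ?_ ?_
          · have : (fun x : ℝ => b * ((Pt c).eval x)^2)
                = fun x => (Polynomial.C b * (Pt c)^2).eval x := by
              funext x; simp
            rw [this]; exact hint _
          · have : (fun x : ℝ => (Pt c).eval x * r.eval x)
                = fun x => ((Pt c) * r).eval x := by
              funext x; simp
            rw [this]; exact hint _
      _ = b * ∫ x in (-1:ℝ)..1, ((Pt c).eval x)^2 := by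
          rw [Pt_orth c hc hroot r hrdeg]; ring
  rw [hI2, hbval] at hsplit
  rw [hA] at hsplit
  linarith
end Ptilde


variable (m : ℕ)

noncomputable def pfun (a : Fin m → ℝ) (t : ℝ) : ℝ := ∑ i : Fin m, a i * t^(i:ℕ)

lemma pfun_cont (a : Fin m → ℝ) : Continuous (pfun m a) := by
  unfold pfun; fun_prop

noncomputable def Nrm (a : Fin m → ℝ) : ℝ := ∫ t in (-1:ℝ)..1, |pfun m a t|

lemma pfun_intble (a : Fin m → ℝ) : IntervalIntegrable (fun t => |pfun m a t|) volume (-1:ℝ) 1 :=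
  ((pfun_cont m a).abs).intervalIntegrable _ _

lemma pfun_poly (a : Fin m → ℝ) :
    ∀ t, (∑ i : Fin m, Polynomial.monomial (i:ℕ) (a i)).eval t = pfun m a t := by
  intro t
  rw [Polynomial.eval_finset_sum]
  simp [pfun, Polynomial.eval_monomial]

lemma pfun_poly_ne (a : Fin m → ℝ) (ha : a ≠ 0) :
    (∑ i : Fin m, Polynomial.monomial (i:ℕ) (a i)) ≠ 0 := by
  intro h0
  apply ha
  funext i
  have := congrArg (fun p => Polynomial.coeff p (i:ℕ)) h0
  simp only [Polynomial.finset_sum_coeff, Polynomial.coeff_monomial, Polynomial.coeff_zero] at this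
  rw [Finset.sum_eq_single i] at this
  · simpa using this
  · intro j _ hj
    rw [if_neg (by exact_mod_cast fun h => hj (Fin.val_injective h))]
  · intro hi; exact absurd (Finset.mem_univ i) hi

lemma Nrm_pos (a : Fin m → ℝ) (ha : a ≠ 0) : 0 < Nrm m a := by
  classical
  set p := ∑ i : Fin m, Polynomial.monomial (i:ℕ) (a i) with hp
  have hpne : p ≠ 0 := pfun_poly_ne m a ha
  rw [Nrm, intervalIntegral.integral_pos_iff_support_of_nonneg_ae
    (Filter.Eventually.of_forall (fun t => abs_nonneg _)) (pfun_intble m a)]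
  refine ⟨by norm_num, ?_⟩
  have hsub : Set.Ioc (-1:ℝ) 1 \ {x | p.IsRoot x}
      ⊆ (Function.support fun t => |pfun m a t|) ∩ Set.Ioc (-1:ℝ) 1 := by
    rintro x ⟨hx1, hx2⟩
    refine ⟨?_, hx1⟩
    simp only [Function.mem_support, Ne, abs_eq_zero]
    intro h0
    exact hx2 (show p.eval x = 0 by rw [hp, pfun_poly m a x]; exact h0)
  have hroots : volume {x : ℝ | p.IsRoot x} = 0 :=
    (Polynomial.finite_setOf_isRoot hpne).measure_zero volume
  have h2 : volume (Set.Ioc (-1:ℝ) 1 \ {x | p.IsRoot x}) = 2 := by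
    have := measure_diff_null (μ := volume) (s := Set.Ioc (-1:ℝ) 1) hroots
    rw [this, Real.volume_Ioc]
    norm_num
  have := measure_mono (μ := volume) hsub
  rw [h2] at this
  exact lt_of_lt_of_le (by norm_num) this

lemma Nrm_smul (s : ℝ) (a : Fin m → ℝ) : Nrm m (s • a) = |s| * Nrm m a := by
  have h : ∀ t : ℝ, |pfun m (s • a) t| = |s| * |pfun m a t| := by
    intro t
    rw [← abs_mul]
    congr 1
    simp only [pfun, Pi.smul_apply, smul_eq_mul, Finset.mul_sum, mul_assoc]
  rw [Nrm, Nrm, ← intervalIntegral.integral_const_mul]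
  exact intervalIntegral.integral_congr (fun t _ => h t)

lemma Nrm_lip : ∀ a b : Fin m → ℝ, Nrm m a - Nrm m b ≤ 2 * m * ‖a - b‖ := by
  intro a b
  have h1 : Nrm m a - Nrm m b
      = ∫ t in (-1:ℝ)..1, (|pfun m a t| - |pfun m b t|) := by
    rw [intervalIntegral.integral_sub (pfun_intble m a) (pfun_intble m b)]; rfl
  rw [h1]
  have h2 : ∀ t ∈ Set.Icc (-1:ℝ) 1, |pfun m a t| - |pfun m b t| ≤ (m : ℝ) * ‖a - b‖ := by
    intro t ht
    refine le_trans (abs_sub_abs_le_abs_sub _ _) ?_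
    have e : pfun m a t - pfun m b t = ∑ i : Fin m, (a i - b i) * t^(i:ℕ) := by
      rw [pfun, pfun, ← Finset.sum_sub_distrib]
      congr 1; funext i; ring
    rw [e]
    refine le_trans (Finset.abs_sum_le_sum_abs _ _) ?_
    have h3 : ∀ i : Fin m, |(a i - b i) * t^(i:ℕ)| ≤ ‖a - b‖ := by
      intro i
      rw [abs_mul, abs_pow]
      have ht1 : |t| ≤ 1 := abs_le.mpr ⟨ht.1, ht.2⟩
      have : |t|^(i:ℕ) ≤ 1 := pow_le_one₀ (abs_nonneg t) ht1
      have hai : |a i - b i| ≤ ‖a - b‖ := by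
        have := norm_le_pi_norm (a - b) i
        simpa using this
      nlinarith [abs_nonneg (a i - b i)]
    calc ∑ i : Fin m, |(a i - b i) * t^(i:ℕ)| ≤ ∑ _i : Fin m, ‖a - b‖ :=
          Finset.sum_le_sum (fun i _ => h3 i)
      _ = (m : ℝ) * ‖a - b‖ := by
          rw [Finset.sum_const, Finset.card_univ, Fintype.card_fin, nsmul_eq_mul]
  calc (∫ t in (-1:ℝ)..1, (|pfun m a t| - |pfun m b t|))
      ≤ ∫ t in (-1:ℝ)..1, (m : ℝ) * ‖a - b‖ := by
        refine intervalIntegral.integral_mono_on (by norm_num) ?_ (by simp) ?_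
        · exact ((pfun_intble m a).sub (pfun_intble m b))
        · exact h2
    _ = 2 * m * ‖a - b‖ := by simp; ring

lemma Nrm_continuous : Continuous (Nrm m) := by
  have : LipschitzWith ((2 * m : ℕ) : ℝ≥0) (Nrm m) := by
    refine LipschitzWith.of_dist_le_mul (fun a b => ?_)
    have hK : (((2 * m : ℕ) : ℝ≥0) : ℝ) = 2 * (m : ℝ) := by push_cast; ring
    rw [Real.dist_eq, dist_eq_norm, hK]
    rcases abs_cases (Nrm m a - Nrm m b) with ⟨he, _⟩ | ⟨he, _⟩ <;> rw [he]
    · exact Nrm_lip m a b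
    · have := Nrm_lip m b a
      rw [norm_sub_rev]
      linarith
  exact this.continuous

lemma sup_le_integral (k : ℕ) : ∃ C : ℝ, 0 < C ∧ ∀ h : Polynomial ℝ, h.natDegree ≤ 2*k →
    (∀ x : ℝ, 0 ≤ h.eval x) → ∀ x ∈ Set.Icc (-1:ℝ) 1,
    h.eval x ≤ C * ∫ t in (-1:ℝ)..1, h.eval t := by
  classical
  set m := 2*k+1 with hm
  haveI : Nontrivial (Fin m → ℝ) := by
    refine ⟨0, fun _ => 1, fun h => ?_⟩
    have := congrFun h ⟨0, by omega⟩
    norm_num at this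
  have hsne : (Metric.sphere (0 : Fin m → ℝ) 1).Nonempty :=
    NormedSpace.sphere_nonempty.mpr (by norm_num)
  obtain ⟨a₀, ha₀, hmin⟩ := (isCompact_sphere (0 : Fin m → ℝ) 1).exists_isMinOn hsne
    (Nrm_continuous m).continuousOn
  set ε := Nrm m a₀ with hε
  have hεpos : 0 < ε := by
    refine Nrm_pos m a₀ (fun h0 => ?_)
    rw [mem_sphere_iff_norm, h0] at ha₀
    norm_num at ha₀
  have hlow : ∀ a : Fin m → ℝ, ε * ‖a‖ ≤ Nrm m a := by
    intro a
    by_cases ha : a = 0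
    · rw [ha]
      simp only [norm_zero, mul_zero]
      exact intervalIntegral.integral_nonneg (by norm_num) (fun t _ => abs_nonneg _)
    · have hna : ‖a‖ ≠ 0 := norm_ne_zero_iff.mpr ha
      have hmem : ‖a‖⁻¹ • a ∈ Metric.sphere (0 : Fin m → ℝ) 1 := by
        rw [mem_sphere_iff_norm, sub_zero, norm_smul, norm_inv, norm_norm]
        field_simp
      have h1 : ε ≤ Nrm m (‖a‖⁻¹ • a) := hmin hmem
      have h2 : Nrm m (‖a‖⁻¹ • a) = ‖a‖⁻¹ * Nrm m a := by
        rw [Nrm_smul]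
        congr 1
        rw [abs_of_nonneg (by positivity)]
      rw [h2] at h1
      have h3 : ε * ‖a‖ ≤ (‖a‖⁻¹ * Nrm m a) * ‖a‖ :=
        mul_le_mul_of_nonneg_right h1 (norm_nonneg a)
      calc ε * ‖a‖ ≤ (‖a‖⁻¹ * Nrm m a) * ‖a‖ := h3
        _ = Nrm m a := by field_simp
  refine ⟨m / ε, by positivity, ?_⟩
  intro h hdeg hpos x hx
  set a : Fin m → ℝ := fun i => h.coeff i with ha
  have hrep : ∀ t, h.eval t = pfun m a t := by
    intro t
    rw [← pfun_poly m a t]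
    congr 1
    conv_lhs => rw [Polynomial.as_sum_range' h m (by omega)]
    rw [← Fin.sum_univ_eq_sum_range (fun i => Polynomial.monomial i (h.coeff i)) m]
  have hNrm : Nrm m a = ∫ t in (-1:ℝ)..1, h.eval t := by
    rw [Nrm]
    refine intervalIntegral.integral_congr (fun t _ => ?_)
    rw [← hrep t, abs_of_nonneg (hpos t)]
  have hevbd : h.eval x ≤ (m:ℝ) * ‖a‖ := by
    rw [hrep x]
    refine le_trans (le_abs_self _) ?_
    rw [pfun]
    refine le_trans (Finset.abs_sum_le_sum_abs _ _) ?_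
    have h3 : ∀ i : Fin m, |a i * x^(i:ℕ)| ≤ ‖a‖ := by
      intro i
      rw [abs_mul, abs_pow]
      have ht1 : |x| ≤ 1 := abs_le.mpr ⟨hx.1, hx.2⟩
      have h4 : |x|^(i:ℕ) ≤ 1 := pow_le_one₀ (abs_nonneg x) ht1
      have hai : |a i| ≤ ‖a‖ := by
        have := norm_le_pi_norm a i
        simpa using this
      nlinarith [abs_nonneg (a i)]
    calc ∑ i : Fin m, |a i * x^(i:ℕ)| ≤ ∑ _i : Fin m, ‖a‖ :=
          Finset.sum_le_sum (fun i _ => h3 i)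
      _ = (m:ℝ) * ‖a‖ := by
          rw [Finset.sum_const, Finset.card_univ, Fintype.card_fin, nsmul_eq_mul]
  have hfin : (m:ℝ) * ‖a‖ ≤ (m / ε) * Nrm m a := by
    have := hlow a
    rw [div_mul_eq_mul_div, le_div_iff₀ hεpos]
    calc (m:ℝ) * ‖a‖ * ε = (m:ℝ) * (ε * ‖a‖) := by ring
      _ ≤ (m:ℝ) * Nrm m a := by
          refine mul_le_mul_of_nonneg_left (hlow a) (by positivity)
  rw [hNrm] at hfin
  exact le_trans hevbd hfin

end MB

set_option maxHeartbeats 1600000 in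
theorem mass_bound_at_internal_stages (k : ℕ) (hk : 1 ≤ k) :
    -- C depends only on k (not on τ, N, V, a, G, u_h, r_h)
    ∃ C : ℝ, 0 < C ∧
      ∀ (N : ℕ), 1 ≤ N → ∀ (T : ℝ), 0 < T →
      -- the Gauss points of [-1,1]: the k roots of the Legendre polynomial of degree k
      ∀ (c : Fin k → ℝ), StrictMono c →
        (∀ j, (legendre k).eval (c j) = 0) →
        (∀ j, c j ∈ Set.Ioo (-1 : ℝ) 1) →
      -- V : a finite-dimensional complex inner product space
      ∀ (V : Type u) [NormedAddCommGroup V] [InnerProductSpace ℂ V] [FiniteDimensional ℂ V],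
      -- a : a Hermitian sesquilinear form (paper's convention: linear in the first argument)
      ∀ (a : V → V → ℂ),
        (∀ v₁ v₂ w : V, a (v₁ + v₂) w = a v₁ w + a v₂ w) →
        (∀ (z : ℂ) (v w : V), a (z • v) w = z * a v w) →
        (∀ v w : V, a v w = starRingEnd ℂ (a w v)) →
      -- G : an arbitrary map such that ⟨G v, v⟩ is real
      -- (paper's ⟨x, y⟩, linear in x, is Mathlib's `inner y x`)
      ∀ (G : V → V), (∀ v : V, (inner ℂ v (G v) : ℂ).im = 0) →
      -- numerical solution: continuous, piecewise polynomial of degree ≤ k in time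
      ∀ (uh : ℝ → V) (rh : ℝ → ℝ),
        (∀ n ∈ Finset.Icc 1 N, ∃ p : ℝ → V, IsPolyDeg V k p ∧
          ∀ t ∈ Set.Icc (((n : ℝ) - 1) * (T / N)) ((n : ℝ) * (T / N)), uh t = p t) →
        (∀ n ∈ Finset.Icc 1 N, ∃ q : ℝ → ℝ, IsPolyDeg ℝ k q ∧
          ∀ t ∈ Set.Icc (((n : ℝ) - 1) * (T / N)) ((n : ℝ) * (T / N)), rh t = q t) →
        -- Gauss collocation equation (i)
        (∀ n ∈ Finset.Icc 1 N, ∀ j : Fin k, ∀ v : V,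
          Complex.I * (inner ℂ v (deriv uh (collocPt (T / N) n (c j))) : ℂ)
            + a (uh (collocPt (T / N) n (c j))) v
            - (rh (collocPt (T / N) n (c j)) : ℂ)
                * (inner ℂ v (G (uh (collocPt (T / N) n (c j)))) : ℂ) = 0) →
        -- Gauss collocation equation (ii)
        (∀ n ∈ Finset.Icc 1 N, ∀ j : Fin k,
          deriv rh (collocPt (T / N) n (c j))
            = (1 / 2) * ((inner ℂ (deriv uh (collocPt (T / N) n (c j)))
                (G (uh (collocPt (T / N) n (c j)))) : ℂ)).re) →
        -- conclusion: ‖u_h(t_{nj})‖ ≤ C ‖u_h(0)‖ for all n = 1, ..., N and j = 1, ..., k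
        ∀ n ∈ Finset.Icc 1 N, ∀ j : Fin k,
          ‖uh (collocPt (T / N) n (c j))‖ ≤ C * ‖uh 0‖ := by
  classical
  obtain ⟨C₀, hC₀pos, hC₀⟩ := MB.sup_le_integral k
  refine ⟨Real.sqrt (2*C₀), Real.sqrt_pos.mpr (by positivity), ?_⟩
  intro N hN T hT c hmono hroot hioo V _ _ _ a ha1 ha2 ha3 G hG uh rh hu hr heq1 _ n hn j
  set τ := T / N with hτdef
  have hτ : 0 < τ := by positivity
  have hcinj : Function.Injective c := hmono.injective
  -- per-interval estimates
  have hintv : ∀ n ∈ Finset.Icc 1 N,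
      (‖uh ((n:ℝ)*τ)‖^2 = ‖uh (((n:ℝ)-1)*τ)‖^2 ∧
       ∀ j : Fin k, ‖uh (collocPt τ n (c j))‖^2 ≤ 2*C₀*‖uh (((n:ℝ)-1)*τ)‖^2) := by
    intro n hn
    obtain ⟨p, ⟨φ, hφ⟩, hup⟩ := hu n hn
    set P : ℝ → V := fun t => ∑ i : Fin (k+1), t ^ (i:ℕ) • φ i with hP
    set D : ℝ → V := fun t => ∑ i : Fin (k+1), (((i:ℕ):ℝ) * t ^ ((i:ℕ)-1)) • φ i with hD
    have hPD : ∀ t, HasDerivAt P (D t) t := by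
      intro t
      exact HasDerivAt.fun_sum (fun (i : Fin (k+1)) _ => (hasDerivAt_pow (i:ℕ) t).smul_const (φ i))
    have huP : ∀ t ∈ Set.Icc (((n:ℝ)-1)*τ) ((n:ℝ)*τ), uh t = P t := by
      intro t ht
      rw [hup t ht, hφ t]
    -- the polynomial g with eval = ‖P ·‖²
    set g : Polynomial ℝ := ∑ i : Fin (k+1), ∑ i' : Fin (k+1),
      Polynomial.C ((inner ℂ (φ i) (φ i') : ℂ).re) * X^((i:ℕ)+(i':ℕ)) with hg
    have hinner : ∀ s t : ℝ, (inner ℂ (P s) (P t) : ℂ)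
        = ∑ i : Fin (k+1), ∑ i' : Fin (k+1),
            ((s^(i:ℕ) * t^(i':ℕ) : ℝ) : ℂ) * (inner ℂ (φ i) (φ i') : ℂ) := by
      intro s t
      rw [hP]
      simp only
      rw [sum_inner]
      refine Finset.sum_congr rfl (fun i _ => ?_)
      rw [inner_sum]
      refine Finset.sum_congr rfl (fun i' _ => ?_)
      rw [← Complex.coe_smul, ← Complex.coe_smul, inner_smul_left, inner_smul_right]
      rw [Complex.conj_ofReal]
      push_cast
      ring
    have hgeval : ∀ t, g.eval t = (inner ℂ (P t) (P t) : ℂ).re := by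
      intro t
      rw [hg, Polynomial.eval_finset_sum, hinner t t, Complex.re_sum]
      refine Finset.sum_congr rfl (fun i _ => ?_)
      rw [Polynomial.eval_finset_sum, Complex.re_sum]
      refine Finset.sum_congr rfl (fun i' _ => ?_)
      rw [Polynomial.eval_mul, Polynomial.eval_C, Polynomial.eval_pow, Polynomial.eval_X,
        Complex.re_ofReal_mul]
      rw [pow_add]
      ring
    have hgnonneg : ∀ t, 0 ≤ g.eval t := by
      intro t
      rw [hgeval t]
      have := inner_self_nonneg (𝕜 := ℂ) (x := P t)
      rwa [RCLike.re_to_complex] at this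
    have hgnorm : ∀ t, g.eval t = ‖P t‖^2 := by
      intro t
      rw [hgeval t]
      have := inner_self_eq_norm_sq (𝕜 := ℂ) (P t)
      rwa [RCLike.re_to_complex] at this
    have hgdeg : g.natDegree ≤ 2*k := by
      rw [hg]
      refine Polynomial.natDegree_sum_le_of_forall_le _ _ (fun i _ => ?_)
      refine Polynomial.natDegree_sum_le_of_forall_le _ _ (fun i' _ => ?_)
      refine le_trans (Polynomial.natDegree_C_mul_X_pow_le _ _) ?_
      have h1 : (i:ℕ) ≤ k := Nat.lt_succ_iff.mp i.isLt
      have h2 : (i':ℕ) ≤ k := Nat.lt_succ_iff.mp i'.isLt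
      omega
    have hgcoeff : 0 ≤ g.coeff (2*k) := by
      have hco : g.coeff (2*k) = (inner ℂ (φ (Fin.last k)) (φ (Fin.last k)) : ℂ).re := by
        rw [hg, Polynomial.finset_sum_coeff]
        rw [Finset.sum_eq_single (Fin.last k)]
        · rw [Polynomial.finset_sum_coeff, Finset.sum_eq_single (Fin.last k)]
          · rw [Polynomial.coeff_C_mul, Polynomial.coeff_X_pow, Fin.val_last,
              if_pos (by omega), mul_one]
          · intro i' _ hne
            have h2 : (i':ℕ) ≤ k := Nat.lt_succ_iff.mp i'.isLt
            have h3 : (i':ℕ) ≠ k := fun h => hne (Fin.ext (by rw [h, Fin.val_last]))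
            rw [Polynomial.coeff_C_mul, Polynomial.coeff_X_pow, Fin.val_last,
              if_neg (by omega), mul_zero]
          · intro h; exact absurd (Finset.mem_univ _) h
        · intro i _ hne
          rw [Polynomial.finset_sum_coeff]
          refine Finset.sum_eq_zero (fun i' _ => ?_)
          have h1 : (i:ℕ) ≤ k := Nat.lt_succ_iff.mp i.isLt
          have h1' : (i:ℕ) ≠ k := fun h => hne (Fin.ext (by rw [h, Fin.val_last]))
          have h2 : (i':ℕ) ≤ k := Nat.lt_succ_iff.mp i'.isLt
          rw [Polynomial.coeff_C_mul, Polynomial.coeff_X_pow, if_neg (by omega), mul_zero]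
        · intro h; exact absurd (Finset.mem_univ _) h
      rw [hco]
      have := inner_self_nonneg (𝕜 := ℂ) (x := φ (Fin.last k))
      rwa [RCLike.re_to_complex] at this
    -- the rescaled polynomial
    set lin : Polynomial ℝ := Polynomial.C (τ/2) * X + Polynomial.C (((n:ℝ)-1)*τ + τ/2)
      with hlin
    have hτ2 : (τ/2 : ℝ) ≠ 0 := by positivity
    have hlineval : ∀ s : ℝ, lin.eval s = ((n:ℝ)-1)*τ + (1+s)*τ/2 := by
      intro s
      rw [hlin]
      simp
      ring
    set gh : Polynomial ℝ := g.comp lin with hgh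
    have hgheval : ∀ s : ℝ, gh.eval s = g.eval (lin.eval s) := by
      intro s
      rw [hgh, Polynomial.eval_comp]
    have hghdeg : gh.natDegree ≤ 2*k := by
      rw [hgh, Polynomial.natDegree_comp]
      calc g.natDegree * lin.natDegree ≤ g.natDegree * 1 :=
            Nat.mul_le_mul_left _ Polynomial.natDegree_linear_le
        _ ≤ 2*k := by omega
    have hghnonneg : ∀ s : ℝ, 0 ≤ gh.eval s := fun s => by
      rw [hgheval s]; exact hgnonneg _
    have hghcoeff : 0 ≤ gh.coeff (2*k) := by
      rcases lt_or_eq_of_le hgdeg with hlt | heq2k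
      · have : gh.natDegree < 2*k := by
          rw [hgh, Polynomial.natDegree_comp]
          calc g.natDegree * lin.natDegree ≤ g.natDegree * 1 :=
                Nat.mul_le_mul_left _ Polynomial.natDegree_linear_le
            _ < 2*k := by omega
        rw [Polynomial.coeff_eq_zero_of_natDegree_lt this]
      · have hlindeg : lin.natDegree = 1 := Polynomial.natDegree_linear hτ2
        have hcompdeg : gh.natDegree = 2*k := by
          rw [hgh, Polynomial.natDegree_comp, hlindeg, ← heq2k]
          ring
        have h1 : gh.coeff (2*k) = gh.leadingCoeff := by
          rw [Polynomial.leadingCoeff, hcompdeg]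
        rw [h1, hgh, Polynomial.leadingCoeff_comp (by rw [hlindeg]; norm_num)]
        rw [Polynomial.leadingCoeff_linear hτ2]
        have h2 : g.leadingCoeff = g.coeff (2*k) := by
          rw [Polynomial.leadingCoeff, heq2k]
        rw [h2]
        exact mul_nonneg hgcoeff (le_of_lt (pow_pos (by positivity) _))
    -- derivative of gh vanishes at the Gauss points
    have hghder : ∀ j : Fin k, (Polynomial.derivative gh).eval (c j) = 0 := by
      intro j
      have hcj := hioo j
      set t0 : ℝ := collocPt τ n (c j) with ht0
      have ht0' : t0 = lin.eval (c j) := by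
        rw [hlineval, ht0, collocPt]
      have ht0mem : t0 ∈ Set.Ioo (((n:ℝ)-1)*τ) ((n:ℝ)*τ) := by
        rw [ht0, collocPt]
        constructor
        · nlinarith [hcj.1, hcj.2]
        · nlinarith [hcj.1, hcj.2]
      have ht0Icc : t0 ∈ Set.Icc (((n:ℝ)-1)*τ) ((n:ℝ)*τ) := Set.mem_Icc_of_Ioo ht0mem
      -- deriv uh t0 = D t0
      have hev : uh =ᶠ[nhds t0] P := by
        refine Filter.eventuallyEq_of_mem (Ioo_mem_nhds ht0mem.1 ht0mem.2) ?_
        intro t ht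
        exact huP t (Set.mem_Icc_of_Ioo ht)
      have hderuh : deriv uh t0 = D t0 := by
        rw [hev.deriv_eq]
        exact (hPD t0).deriv
      -- collocation identity gives re ⟪u, u'⟫ = 0
      have hre : (inner ℂ (uh t0) (deriv uh t0) : ℂ).re = 0 := by
        have h0 := heq1 n hn j (uh t0)
        rw [← ht0] at h0
        have hwim : (a (uh t0) (uh t0)).im = 0 := by
          have hconj := congrArg Complex.im (ha3 (uh t0) (uh t0))
          rw [Complex.conj_im] at hconj
          linarith
        have hyim : (inner ℂ (uh t0) (G (uh t0)) : ℂ).im = 0 := hG (uh t0)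
        have him := congrArg Complex.im h0
        simp only [Complex.add_im, Complex.sub_im, Complex.mul_im, Complex.I_re, Complex.I_im,
          Complex.zero_im, Complex.ofReal_im, Complex.ofReal_re, hwim, hyim,
          zero_mul, one_mul, mul_zero, add_zero, zero_add, sub_zero, neg_zero] at him
        linarith
      -- derivative of g at t0
      have hgder : (Polynomial.derivative g).eval t0 = 2 * (inner ℂ (P t0) (D t0) : ℂ).re := by
        have h1 : HasDerivAt (fun t => (inner ℂ (P t) (P t) : ℂ))
            ((inner ℂ (P t0) (D t0) : ℂ) + (inner ℂ (D t0) (P t0) : ℂ)) t0 :=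
          HasDerivAt.inner ℂ (hPD t0) (hPD t0)
        have h2 : HasDerivAt (fun t => (inner ℂ (P t) (P t) : ℂ).re)
            (((inner ℂ (P t0) (D t0) : ℂ) + (inner ℂ (D t0) (P t0) : ℂ)).re) t0 :=
          Complex.reCLM.hasFDerivAt.comp_hasDerivAt t0 h1
        have h3 : (fun t : ℝ => g.eval t) = (fun t => (inner ℂ (P t) (P t) : ℂ).re) := by
          funext t; exact hgeval t
        have h4 : HasDerivAt (fun t : ℝ => g.eval t)
            (((inner ℂ (P t0) (D t0) : ℂ) + (inner ℂ (D t0) (P t0) : ℂ)).re) t0 := by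
          rw [h3]; exact h2
        have h5 := (g.hasDerivAt t0).unique h4
        rw [h5, Complex.add_re]
        have h6 : (inner ℂ (D t0) (P t0) : ℂ).re = (inner ℂ (P t0) (D t0) : ℂ).re := by
          have := inner_re_symm (𝕜 := ℂ) (D t0) (P t0)
          rwa [RCLike.re_to_complex, RCLike.re_to_complex] at this
        rw [h6]
        ring
      have hPu : P t0 = uh t0 := (huP t0 ht0Icc).symm
      have hfin : (Polynomial.derivative g).eval t0 = 0 := by
        rw [hgder, hPu, ← hderuh, hre, mul_zero]
      -- chain rule
      rw [hgh, Polynomial.derivative_comp]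
      rw [Polynomial.eval_mul, Polynomial.eval_comp, ← ht0', hfin, mul_zero]
    -- apply the key identities
    obtain ⟨hA, hB⟩ := MB.key_identities c hk hcinj hroot gh hghdeg hghder
    have hn1 : (1:ℝ) ≤ (n:ℝ) := by
      exact_mod_cast (Finset.mem_Icc.mp hn).1
    have hIccL : ((n:ℝ)-1)*τ ∈ Set.Icc (((n:ℝ)-1)*τ) ((n:ℝ)*τ) :=
      ⟨le_refl _, by nlinarith⟩
    have hIccR : (n:ℝ)*τ ∈ Set.Icc (((n:ℝ)-1)*τ) ((n:ℝ)*τ) :=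
      ⟨by nlinarith, le_refl _⟩
    have hevalm1 : gh.eval (-1) = ‖uh (((n:ℝ)-1)*τ)‖^2 := by
      rw [hgheval, hlineval]
      have he : ((n:ℝ)-1)*τ + (1 + (-1))*τ/2 = ((n:ℝ)-1)*τ := by ring
      rw [he, hgnorm, huP _ hIccL]
    have heval1 : gh.eval 1 = ‖uh ((n:ℝ)*τ)‖^2 := by
      rw [hgheval, hlineval]
      have he : ((n:ℝ)-1)*τ + (1 + 1)*τ/2 = (n:ℝ)*τ := by ring
      rw [he, hgnorm, huP _ hIccR]
    constructor
    · rw [← heval1, ← hevalm1, hA]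
    · intro j
      have hPt2 : 0 ≤ ∫ x in (-1:ℝ)..1, ((MB.Pt c).eval x)^2 :=
        intervalIntegral.integral_nonneg (by norm_num) (fun x _ => sq_nonneg _)
      have hint_le : ∫ x in (-1:ℝ)..1, gh.eval x ≤ 2 * gh.eval (-1) := by
        rw [hB]
        have h9 : 0 ≤ (2*k:ℝ) * gh.coeff (2*k) * ∫ x in (-1:ℝ)..1, ((MB.Pt c).eval x)^2 :=
          mul_nonneg (mul_nonneg (by positivity) hghcoeff) hPt2
        linarith
      have hcj := hioo j
      have hmem : collocPt τ n (c j) ∈ Set.Icc (((n:ℝ)-1)*τ) ((n:ℝ)*τ) := by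
        rw [collocPt]
        constructor
        · nlinarith [hcj.1, hcj.2]
        · nlinarith [hcj.1, hcj.2]
      have hevalc : gh.eval (c j) = ‖uh (collocPt τ n (c j))‖^2 := by
        rw [hgheval, hlineval]
        have he : ((n:ℝ)-1)*τ + (1 + c j)*τ/2 = collocPt τ n (c j) := by
          rw [collocPt]
        rw [he, hgnorm, huP _ hmem]
      have hbound := hC₀ gh hghdeg hghnonneg (c j) ⟨le_of_lt hcj.1, le_of_lt hcj.2⟩
      rw [hevalc] at hbound
      calc ‖uh (collocPt τ n (c j))‖^2
          ≤ C₀ * ∫ t in (-1:ℝ)..1, gh.eval t := hbound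
        _ ≤ C₀ * (2 * gh.eval (-1)) := by
            exact mul_le_mul_of_nonneg_left hint_le (le_of_lt hC₀pos)
        _ = 2*C₀*‖uh (((n:ℝ)-1)*τ)‖^2 := by rw [hevalm1]; ring
  -- mass conservation at the nodes, by induction
  have hnode : ∀ i : ℕ, i ≤ N → ‖uh ((i:ℝ)*τ)‖^2 = ‖uh 0‖^2 := by
    intro i
    induction i with
    | zero => intro _; norm_num
    | succ i ih =>
      intro hi
      have h1 := (hintv (i+1) (by rw [Finset.mem_Icc]; omega)).1
      have hc1 : ((((i+1):ℕ):ℝ) - 1) * τ = (i:ℝ)*τ := by push_cast; ring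
      rw [hc1] at h1
      rw [h1]
      exact ih (by omega)
  -- conclusion
  have h2 := (hintv n hn).2 j
  have hn1 : 1 ≤ n := (Finset.mem_Icc.mp hn).1
  have hn2 : n ≤ N := (Finset.mem_Icc.mp hn).2
  have h3 : ‖uh (((n:ℝ)-1)*τ)‖^2 = ‖uh 0‖^2 := by
    have := hnode (n-1) (by omega)
    have hc2 : (((n-1 : ℕ)):ℝ) = (n:ℝ) - 1 := by
      have : (1:ℕ) ≤ n := hn1
      push_cast [this]
      ring
    rw [hc2] at this
    exact this
  rw [h3] at h2
  -- take square roots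
  have h4 : ‖uh (collocPt τ n (c j))‖ ≤ Real.sqrt (2*C₀) * ‖uh 0‖ := by
    have h5 := Real.sqrt_le_sqrt h2
    rw [Real.sqrt_sq (norm_nonneg _)] at h5
    have h6 : Real.sqrt (2*C₀*‖uh 0‖^2) = Real.sqrt (2*C₀) * ‖uh 0‖ := by
      rw [Real.sqrt_mul (by positivity), Real.sqrt_sq (norm_nonneg _)]
    rw [h6] at h5
    exact h5
  exact h4
end

section
/- Local mass bound on a single interval (inequality (3.31) in the proof of Theorem 3.2): under the Gauss collocation equations on a single interval I = I_n with Hermitian a and ⟨G(v), v⟩ ∈ ℝ for all v ∈ V, one has ∫_{I_n} ‖(P^n u_h)(t)‖² dt ≤ τ·‖u_h(t_{n−1})‖². -/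
/-!
Local mass bound on a single interval (inequality (3.31) in the proof of Theorem 3.2):
under the Gauss collocation equations on the single interval `I_n = [t₀, t₀ + τ]`,
`∫_{I_n} ‖(P^n u_h)(t)‖² dt ≤ τ ‖u_h(t_{n-1})‖²`.
-/

open MeasureTheory

/-- `p` is the L²(a,b)-orthogonal projection of `u` onto `X`-valued polynomials of
degree ≤ k-1. -/
def IsL2ProjOn (X : Type*) [NormedAddCommGroup X] [InnerProductSpace ℂ X]
    (a b : ℝ) (k : ℕ) (u p : ℝ → X) : Prop :=
  IsPolyDeg X (k - 1) p ∧
    ∀ χ : ℝ → X, IsPolyDeg X (k - 1) χ →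
      (∫ t in a..b, (inner ℂ (u t - p t) (χ t) : ℂ)) = 0

/-! ### Auxiliary lemmas -/

open Polynomial

lemma IsPolyDeg.continuous {X : Type*} [NormedAddCommGroup X] [NormedSpace ℝ X] {m : ℕ}
    {f : ℝ → X} (hf : IsPolyDeg X m f) : Continuous f := by
  obtain ⟨φ, hφ⟩ := hf
  rw [funext hφ]
  exact continuous_finset_sum _ fun i _ => (continuous_pow (i:ℕ)).smul continuous_const

lemma legendre_fact (k j : ℕ) (h : j ≤ k) :
    ∃ q : ℝ[X], derivative^[j] ((X ^ 2 - 1 : ℝ[X]) ^ k) = (X ^ 2 - 1) ^ (k - j) * q := by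
  induction j with
  | zero => exact ⟨1, by simp⟩
  | succ j ih =>
    obtain ⟨q, hq⟩ := ih (Nat.le_of_succ_le h)
    refine ⟨C ((k - j : ℕ) : ℝ) * (C 2 * X) * q + (X ^ 2 - 1) * derivative q, ?_⟩
    rw [Function.iterate_succ_apply', hq, derivative_mul, derivative_pow]
    have hd : derivative (X ^ 2 - 1 : ℝ[X]) = C 2 * X := by simp; rw [← C_1, ← C_add]; norm_num
    have hkj2 : k - j = (k - (j + 1)) + 1 := by omega
    rw [hd, show k - j - 1 = k - (j+1) from by omega, hkj2, pow_succ]; ring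

lemma legendre_boundary (k j : ℕ) (h : j < k) (x : ℝ) (hx : x ^ 2 = 1) :
    (derivative^[j] ((X ^ 2 - 1 : ℝ[X]) ^ k)).eval x = 0 := by
  obtain ⟨q, hq⟩ := legendre_fact k j h.le
  rw [hq, eval_mul, eval_pow, eval_sub, eval_pow, eval_one, eval_X, hx, sub_self,
    zero_pow (by omega), zero_mul]

lemma legendre_orth_aux (k : ℕ) : ∀ j, j ≤ k → ∀ q : ℝ[X], (∀ m, j ≤ m → q.coeff m = 0) →
    ∫ y in (-1:ℝ)..1, (derivative^[j] ((X ^ 2 - 1 : ℝ[X]) ^ k)).eval y * q.eval y = 0 := by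
  intro j
  induction j with
  | zero =>
    intro _ q hq
    have : q = 0 := Polynomial.ext fun m => by simpa using hq m (Nat.zero_le m)
    simp [this]
  | succ j ih =>
    intro hjk q hq
    set p := derivative^[j] ((X ^ 2 - 1 : ℝ[X]) ^ k) with hp
    have hparts := intervalIntegral.integral_deriv_mul_eq_sub
      (a := (-1:ℝ)) (b := 1)
      (u := fun y => p.eval y) (v := fun y => q.eval y)
      (u' := fun y => (derivative p).eval y) (v' := fun y => (derivative q).eval y)
      (fun x _ => p.hasDerivAt x) (fun x _ => q.hasDerivAt x)
      ((p.derivative.continuous).intervalIntegrable _ _)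
      ((q.derivative.continuous).intervalIntegrable _ _)
    have hb1 : p.eval 1 = 0 := legendre_boundary k j (by omega) 1 (by norm_num)
    have hb2 : p.eval (-1) = 0 := legendre_boundary k j (by omega) (-1) (by norm_num)
    rw [hb1, hb2, zero_mul, zero_mul, sub_zero] at hparts
    rw [intervalIntegral.integral_add (f := fun y => (derivative p).eval y * q.eval y)
        (g := fun y => p.eval y * (derivative q).eval y)
        (((derivative p).continuous.mul q.continuous).intervalIntegrable _ _)
        ((p.continuous.mul (derivative q).continuous).intervalIntegrable _ _)] at hparts
    have h2 : ∫ y in (-1:ℝ)..1, p.eval y * (derivative q).eval y = 0 := by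
      refine ih (by omega) (derivative q) fun m hm => ?_
      rw [coeff_derivative, hq (m+1) (by omega), zero_mul]
    have h3 : derivative p = derivative^[j+1] ((X ^ 2 - 1 : ℝ[X]) ^ k) := by
      rw [Function.iterate_succ_apply', hp]
    rw [← h3]
    have := hparts
    rw [h2, add_zero] at this
    simpa using this

lemma pow_monic (k : ℕ) : ((X ^ 2 - 1 : ℝ[X]) ^ k).Monic := by
  have : (X ^ 2 - 1 : ℝ[X]) = X ^ 2 - C 1 := by rw [map_one]
  rw [this]
  exact (monic_X_pow_sub_C (1:ℝ) two_ne_zero).pow k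

lemma pow_natDegree (k : ℕ) : ((X ^ 2 - 1 : ℝ[X]) ^ k).natDegree = 2 * k := by
  have : (X ^ 2 - 1 : ℝ[X]) = X ^ 2 - C 1 := by rw [map_one]
  rw [this, Monic.natDegree_pow (monic_X_pow_sub_C (1:ℝ) two_ne_zero), natDegree_X_pow_sub_C]
  ring

lemma legendre_coeff_k (k : ℕ) : (legendre k).coeff k = ((k + k).descFactorial k : ℝ) := by
  rw [legendre, coeff_iterate_derivative]
  have h2 : k + k = ((X ^ 2 - 1 : ℝ[X]) ^ k).natDegree := by rw [pow_natDegree]; ring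
  rw [h2, Monic.coeff_natDegree (pow_monic k)]
  simp [← h2]

lemma legendre_coeff_gt (k m : ℕ) (h : k < m) : (legendre k).coeff m = 0 := by
  rw [legendre, coeff_iterate_derivative]
  rw [coeff_eq_zero_of_natDegree_lt (by rw [pow_natDegree]; omega), smul_zero]

lemma legendre_natDegree (k : ℕ) : (legendre k).natDegree = k := by
  refine le_antisymm (natDegree_le_iff_coeff_eq_zero.2 fun m hm => legendre_coeff_gt k m hm) ?_
  refine le_natDegree_of_ne_zero ?_
  rw [legendre_coeff_k]
  have : (k + k).descFactorial k ≠ 0 := by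
    rw [Ne, Nat.descFactorial_eq_zero_iff_lt]; omega
  exact_mod_cast this

lemma prodXsubC_monic {k : ℕ} (d : Fin k → ℝ) : (∏ j : Fin k, (X - C (d j)) : ℝ[X]).Monic :=
  monic_prod_of_monic _ _ fun j _ => monic_X_sub_C (d j)

lemma prodXsubC_natDegree {k : ℕ} (d : Fin k → ℝ) :
    (∏ j : Fin k, (X - C (d j)) : ℝ[X]).natDegree = k := by
  rw [natDegree_prod _ _ fun j _ => X_sub_C_ne_zero (d j)]
  simp [natDegree_X_sub_C]

lemma legendre_coeff_k_ne_zero (k : ℕ) : (legendre k).coeff k ≠ 0 := by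
  rw [legendre_coeff_k]
  have : (k + k).descFactorial k ≠ 0 := by
    rw [Ne, Nat.descFactorial_eq_zero_iff_lt]; omega
  exact_mod_cast this

/-- `∏ (X - c j)` is orthogonal to polynomials of degree `< k` on `[-1,1]`. -/
lemma gauss_M_orth (k : ℕ) (c : Fin k → ℝ) (hmono : StrictMono c)
    (hroot : ∀ j, (legendre k).eval (c j) = 0) (q : ℝ[X]) (hq : ∀ m, k ≤ m → q.coeff m = 0) :
    ∫ y in (-1:ℝ)..1, (∏ j : Fin k, (X - C (c j)) : ℝ[X]).eval y * q.eval y = 0 := by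
  set M : ℝ[X] := ∏ j : Fin k, (X - C (c j)) with hM
  have hdvd : M ∣ legendre k :=
    Fintype.prod_dvd_of_coprime (pairwise_coprime_X_sub_C hmono.injective)
      (fun j => dvd_iff_isRoot.2 (hroot j))
  obtain ⟨h, hh⟩ := hdvd
  have hM0 : M ≠ 0 := (prodXsubC_monic c).ne_zero
  have hl0 : legendre k ≠ 0 := fun h0 => legendre_coeff_k_ne_zero k (by rw [h0, coeff_zero])
  have hh0 : h ≠ 0 := fun h0 => hl0 (by rw [hh, h0, mul_zero])
  have hdeg : h.natDegree = 0 := by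
    have := natDegree_mul hM0 hh0
    rw [← hh, legendre_natDegree, prodXsubC_natDegree] at this
    omega
  have hC : h = C (h.coeff 0) := eq_C_of_natDegree_eq_zero hdeg
  set α := h.coeff 0 with hα
  have hα0 : α ≠ 0 := fun h0 => hh0 (by rw [hC, h0, map_zero])
  have key : ∀ y : ℝ, M.eval y * q.eval y = α⁻¹ * ((legendre k).eval y * q.eval y) := by
    intro y
    rw [hh, hC, eval_mul, eval_C]
    field_simp
  rw [intervalIntegral.integral_congr (g := fun y => α⁻¹ * ((legendre k).eval y * q.eval y))
    (fun y _ => key y), intervalIntegral.integral_const_mul]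
  have h0 : ∫ x in (-1:ℝ)..1, (legendre k).eval x * q.eval x = 0 := by
    rw [legendre]; exact legendre_orth_aux k k le_rfl q hq
  rw [h0, mul_zero]

/-- Transported orthogonality on `[t₀, t₀+τ]`. -/
lemma gauss_N_orth (k : ℕ) (t₀ τ : ℝ) (hτ : 0 < τ) (c : Fin k → ℝ) (hmono : StrictMono c)
    (hroot : ∀ j, (legendre k).eval (c j) = 0) (q : ℝ[X]) (hq : ∀ m, k ≤ m → q.coeff m = 0) :
    ∫ t in t₀..(t₀ + τ), (∏ j : Fin k, (X - C (t₀ + (1 + c j) * τ / 2)) : ℝ[X]).eval t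
      * q.eval t = 0 := by
  set N : ℝ[X] := ∏ j : Fin k, (X - C (t₀ + (1 + c j) * τ / 2)) with hN
  set M : ℝ[X] := ∏ j : Fin k, (X - C (c j)) with hM
  have hτ2 : (τ/2 : ℝ) ≠ 0 := by positivity
  set lin : ℝ[X] := C (τ/2) * X + C (t₀ + τ/2) with hlin
  set q2 : ℝ[X] := q.comp lin with hq2
  have hq2c : ∀ m, k ≤ m → q2.coeff m = 0 := by
    intro m hm
    rcases eq_or_ne q 0 with h0 | h0
    · simp [hq2, h0]
    · have hdq : q.natDegree < k := by
        by_contra hd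
        exact leadingCoeff_ne_zero.2 h0 (hq q.natDegree (by omega))
      have : q2.natDegree < k := by
        rw [hq2, natDegree_comp, hlin, natDegree_linear hτ2, mul_one]
        exact hdq
      exact coeff_eq_zero_of_natDegree_lt (lt_of_lt_of_le this hm)
  have key := intervalIntegral.integral_comp_mul_add
    (a := (-1:ℝ)) (b := 1) (f := fun t => N.eval t * q.eval t) hτ2 (t₀ + τ/2)
  have he1 : τ/2 * (-1) + (t₀ + τ/2) = t₀ := by ring
  have he2 : τ/2 * 1 + (t₀ + τ/2) = t₀ + τ := by ring
  rw [he1, he2] at key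
  have hLHS : ∀ x : ℝ, N.eval (τ/2 * x + (t₀ + τ/2)) * q.eval (τ/2 * x + (t₀ + τ/2))
      = (τ/2)^k * (M.eval x * q2.eval x) := by
    intro x
    have h1 : N.eval (τ/2 * x + (t₀ + τ/2)) = (τ/2)^k * M.eval x := by
      rw [hN, hM, eval_prod, eval_prod]
      calc ∏ j : Fin k, eval (τ/2 * x + (t₀ + τ/2)) (X - C (t₀ + (1 + c j) * τ / 2))
          = ∏ j : Fin k, ((τ/2) * (x - c j)) := by
            refine Finset.prod_congr rfl fun j _ => ?_
            simp only [eval_sub, eval_X, eval_C]; ring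
        _ = (τ/2)^k * ∏ j : Fin k, (x - c j) := by
            rw [Finset.prod_mul_distrib, Finset.prod_const, Finset.card_fin]
        _ = (τ/2)^k * ∏ j : Fin k, eval x (X - C (c j)) := by
            simp
    have h2 : q.eval (τ/2 * x + (t₀ + τ/2)) = q2.eval x := by
      rw [hq2, eval_comp, hlin]
      simp
    rw [h1, h2]; ring
  have hzero : ∫ x in (-1:ℝ)..1,
      N.eval (τ/2 * x + (t₀ + τ/2)) * q.eval (τ/2 * x + (t₀ + τ/2)) = 0 := by
    rw [intervalIntegral.integral_congr (g := fun x => (τ/2)^k * (M.eval x * q2.eval x))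
      (fun x _ => hLHS x), intervalIntegral.integral_const_mul,
      gauss_M_orth k c hmono hroot q2 hq2c, mul_zero]
  rw [hzero] at key
  have := key.symm
  rw [smul_eq_zero] at this
  rcases this with h | h
  · exact absurd h (inv_ne_zero hτ2)
  · exact h

/-- The key inequality: a real polynomial of degree `≤ 2k` with nonnegative top coefficient
whose derivative vanishes at the Gauss points satisfies `∫_I P ≤ τ P(t₀)`. -/
lemma key_ineq (k : ℕ) (hk : 1 ≤ k) (t₀ τ : ℝ) (hτ : 0 < τ) (c : Fin k → ℝ)
    (hmono : StrictMono c) (hroot : ∀ j, (legendre k).eval (c j) = 0)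
    (P : ℝ[X]) (hPtail : ∀ m, k + k < m → P.coeff m = 0) (hPtop : 0 ≤ P.coeff (k+k))
    (hProots : ∀ j : Fin k, (derivative P).eval (t₀ + (1 + c j) * τ / 2) = 0) :
    ∫ t in t₀..(t₀+τ), P.eval t ≤ τ * P.eval t₀ := by
  set N : ℝ[X] := ∏ j : Fin k, (X - C (t₀ + (1 + c j) * τ / 2)) with hN
  have hibp := intervalIntegral.integral_deriv_mul_eq_sub
    (a := t₀) (b := t₀ + τ)
    (u := fun t => t₀ + τ - t) (v := fun t => P.eval t)
    (u' := fun _ => (-1:ℝ)) (v' := fun t => (derivative P).eval t)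
    (fun x _ => (hasDerivAt_id x).const_sub (t₀ + τ))
    (fun x _ => P.hasDerivAt x)
    (continuous_const.intervalIntegrable _ _)
    ((derivative P).continuous.intervalIntegrable _ _)
  have hcont1 : Continuous fun x : ℝ => -1 * P.eval x := continuous_const.mul P.continuous
  have hcont2 : Continuous fun x : ℝ => (t₀ + τ - x) * (derivative P).eval x :=
    (continuous_const.sub continuous_id').mul (derivative P).continuous
  rw [sub_self, zero_mul, add_sub_cancel_left] at hibp
  rw [intervalIntegral.integral_add
      (hcont1.intervalIntegrable _ _)
      (hcont2.intervalIntegrable _ _)]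
    at hibp
  have hsplit : ∫ t in t₀..(t₀+τ), P.eval t
      = τ * P.eval t₀ + ∫ t in t₀..(t₀+τ), (t₀ + τ - t) * (derivative P).eval t := by
    have h1 : ∫ t in t₀..(t₀+τ), (-1 : ℝ) * P.eval t = -∫ t in t₀..(t₀+τ), P.eval t := by
      rw [intervalIntegral.integral_const_mul]; ring
    rw [h1] at hibp
    linarith [hibp]
  have hcorr : ∫ t in t₀..(t₀+τ), (t₀ + τ - t) * (derivative P).eval t ≤ 0 := by
    have hinj : Function.Injective (fun j : Fin k => t₀ + (1 + c j) * τ / 2) := by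
      intro i j hij
      simp only [] at hij
      have : c i = c j := by
        have h2 : (c i - c j) * τ = 0 := by linarith
        rcases mul_eq_zero.1 h2 with h | h
        · linarith
        · exact absurd h hτ.ne'
      exact hmono.injective this
    have hdvd : N ∣ derivative P :=
      Fintype.prod_dvd_of_coprime (pairwise_coprime_X_sub_C hinj)
        (fun j => dvd_iff_isRoot.2 (hProots j))
    obtain ⟨s, hs⟩ := hdvd
    rcases eq_or_ne s 0 with h0 | h0
    · rw [hs, h0, mul_zero]
      simp
    · have hN0 : N ≠ 0 := (prodXsubC_monic _).ne_zero
      have hP'0 : derivative P ≠ 0 := by rw [hs]; exact mul_ne_zero hN0 h0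
      have hPdeg : P.natDegree ≤ k + k := natDegree_le_iff_coeff_eq_zero.2 hPtail
      have hP'deg : (derivative P).natDegree ≤ k + k - 1 :=
        le_trans (natDegree_derivative_le P) (by omega)
      have hsdeg : s.natDegree ≤ k - 1 := by
        have := natDegree_mul hN0 h0
        rw [← hs, prodXsubC_natDegree] at this
        omega
      set w : ℝ[X] := (C (t₀ + τ) - X) * s with hw
      set γ : ℝ := w.coeff k with hγ
      have hwdeg : w.natDegree ≤ k := by
        refine le_trans natDegree_mul_le ?_
        have h1 : (C (t₀ + τ) - X : ℝ[X]) = -(X - C (t₀ + τ)) := by ring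
        rw [h1, natDegree_neg, natDegree_X_sub_C]
        omega
      set wl : ℝ[X] := w - C γ * X ^ k with hwl
      have hwlc : ∀ m, k ≤ m → wl.coeff m = 0 := by
        intro m hm
        rw [hwl, coeff_sub, coeff_C_mul, coeff_X_pow]
        rcases eq_or_lt_of_le hm with h | h
        · rw [if_pos h.symm, mul_one, ← h, ← hγ, sub_self]
        · rw [if_neg (by omega), mul_zero, sub_zero,
            coeff_eq_zero_of_natDegree_lt (lt_of_le_of_lt hwdeg h)]
      have hpoint : ∀ t : ℝ, (t₀ + τ - t) * (derivative P).eval t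
          = N.eval t * wl.eval t + γ * (N.eval t * (X ^ k : ℝ[X]).eval t) := by
        intro t
        rw [hs]
        simp only [hwl, hw, eval_mul, eval_sub, eval_C, eval_X, eval_pow]
        ring
      rw [intervalIntegral.integral_congr (g := fun t =>
        N.eval t * wl.eval t + γ * (N.eval t * (X ^ k : ℝ[X]).eval t)) (fun t _ => hpoint t)]
      rw [intervalIntegral.integral_add (f := fun t => N.eval t * wl.eval t)
          (g := fun t => γ * (N.eval t * (X ^ k : ℝ[X]).eval t))
          ((N.continuous.mul wl.continuous).intervalIntegrable _ _)
          ((continuous_const.mul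
            (N.continuous.mul (X ^ k : ℝ[X]).continuous)).intervalIntegrable _ _)]
      rw [gauss_N_orth k t₀ τ hτ c hmono hroot wl hwlc, zero_add,
        intervalIntegral.integral_const_mul]
      set E : ℝ[X] := X ^ k - N with hE
      have hEc : ∀ m, k ≤ m → E.coeff m = 0 := by
        intro m hm
        rw [hE, coeff_sub, coeff_X_pow]
        rcases eq_or_lt_of_le hm with h | h
        · rw [if_pos h.symm, ← h]
          have : N.coeff k = 1 := by
            have := (prodXsubC_monic (fun j : Fin k => t₀ + (1 + c j) * τ / 2)).coeff_natDegree
            rwa [prodXsubC_natDegree] at this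
          rw [this]; norm_num
        · rw [if_neg (by omega),
            coeff_eq_zero_of_natDegree_lt (by rw [prodXsubC_natDegree]; omega)]
          norm_num
      have hsplit2 : ∫ t in t₀..(t₀+τ), N.eval t * (X ^ k : ℝ[X]).eval t
          = (∫ t in t₀..(t₀+τ), N.eval t * N.eval t)
            + ∫ t in t₀..(t₀+τ), N.eval t * E.eval t := by
        rw [← intervalIntegral.integral_add (f := fun t => N.eval t * N.eval t)
            (g := fun t => N.eval t * E.eval t)
            ((N.continuous.mul N.continuous).intervalIntegrable _ _)
            ((N.continuous.mul E.continuous).intervalIntegrable _ _)]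
        refine intervalIntegral.integral_congr fun t _ => ?_
        rw [hE, eval_sub]
        ring
      rw [hsplit2, gauss_N_orth k t₀ τ hτ c hmono hroot E hEc, add_zero]
      have hNN : 0 ≤ ∫ t in t₀..(t₀+τ), N.eval t * N.eval t :=
        intervalIntegral.integral_nonneg (by linarith) (fun u _ => mul_self_nonneg _)
      have hγle : γ ≤ 0 := by
        have hsk : s.coeff k = 0 := coeff_eq_zero_of_natDegree_lt (by omega)
        have hXs : (X * s : ℝ[X]).coeff k = s.coeff (k - 1) := by
          conv_lhs => rw [show k = (k-1) + 1 from by omega]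
          rw [coeff_X_mul]
        have h1 : γ = -s.coeff (k-1) := by
          rw [hγ, hw, sub_mul, coeff_sub, coeff_C_mul, hsk, mul_zero, zero_sub, neg_inj, hXs]
        have h2 : s.coeff (k-1) = (derivative P).coeff (k + (k-1)) := by
          rcases eq_or_lt_of_le hsdeg with h | h
          · rw [hs]
            have := coeff_mul_degree_add_degree N s
            rw [prodXsubC_natDegree, h, (prodXsubC_monic _).leadingCoeff, one_mul] at this
            rw [this]
            rw [leadingCoeff, h]
          · rw [coeff_eq_zero_of_natDegree_lt h, hs,
              coeff_eq_zero_of_natDegree_lt (by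
                rw [natDegree_mul hN0 h0, prodXsubC_natDegree]; omega)]
        have h3 : (derivative P).coeff (k + (k-1))
            = P.coeff (k+k) * (((k + (k-1) : ℕ)) + 1 : ℝ) := by
          rw [coeff_derivative, show k + (k-1) + 1 = k + k from by omega]
        rw [h1, h2, h3]
        have hscal : (0:ℝ) ≤ ((k + (k-1) : ℕ) : ℝ) + 1 := by positivity
        have := mul_nonneg hPtop hscal
        linarith
      nlinarith [mul_nonneg (neg_nonneg.mpr hγle) hNN]
  linarith [hsplit, hcorr]

section PhiSection

variable {V : Type*} [NormedAddCommGroup V] [InnerProductSpace ℂ V]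

lemma real_smul_eq_complex_smul (r : ℝ) (x : V) : r • x = (r : ℂ) • x := by
  rw [← algebraMap_smul ℂ r x, Complex.coe_algebraMap]

lemma inner_sum_expand (k : ℕ) (A : Fin (k+1) → V) (t : ℝ) :
    (inner ℂ (∑ i : Fin (k+1), t ^ (i:ℕ) • A i) (∑ i : Fin (k+1), t ^ (i:ℕ) • A i) : ℂ)
    = ∑ i : Fin (k+1), ∑ j : Fin (k+1),
        ((t ^ (i:ℕ) * t ^ (j:ℕ) : ℝ) : ℂ) * inner ℂ (A i) (A j) := by
  rw [sum_inner]
  refine Finset.sum_congr rfl fun i _ => ?_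
  rw [inner_sum]
  refine Finset.sum_congr rfl fun j _ => ?_
  rw [real_smul_eq_complex_smul (t ^ (i:ℕ)) (A i), real_smul_eq_complex_smul (t ^ (j:ℕ)) (A j),
    inner_smul_left, inner_smul_right, Complex.conj_ofReal]
  push_cast; ring

/-- The polynomial `t ↦ ‖u_h(t)‖²`. -/
noncomputable def Phi (k : ℕ) (A : Fin (k+1) → V) : ℝ[X] :=
  ∑ i : Fin (k+1), ∑ j : Fin (k+1),
    C ((inner ℂ (A i) (A j) : ℂ).re) * X ^ ((i:ℕ) + (j:ℕ))

lemma Phi_eval (k : ℕ) (A : Fin (k+1) → V) (t : ℝ) :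
    (Phi k A).eval t = ‖∑ i : Fin (k+1), t ^ (i:ℕ) • A i‖ ^ 2 := by
  have h2 : ‖∑ i : Fin (k+1), t ^ (i:ℕ) • A i‖ ^ 2
      = ((inner ℂ (∑ i : Fin (k+1), t ^ (i:ℕ) • A i)
          (∑ i : Fin (k+1), t ^ (i:ℕ) • A i) : ℂ)).re := by
    rw [← inner_self_eq_norm_sq (𝕜 := ℂ)]
    simp
  rw [h2, inner_sum_expand, Complex.re_sum, Phi, eval_finset_sum]
  refine Finset.sum_congr rfl fun i _ => ?_
  rw [Complex.re_sum, eval_finset_sum]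
  refine Finset.sum_congr rfl fun j _ => ?_
  simp only [eval_mul, eval_C, eval_pow, eval_X, Complex.mul_re, Complex.ofReal_re,
    Complex.ofReal_im, zero_mul, sub_zero, pow_add]
  ring

lemma Phi_coeff (k : ℕ) (A : Fin (k+1) → V) (m : ℕ) :
    (Phi k A).coeff m = ∑ i : Fin (k+1), ∑ j : Fin (k+1),
      (if m = (i:ℕ)+(j:ℕ) then ((inner ℂ (A i) (A j) : ℂ)).re else 0) := by
  rw [Phi, finset_sum_coeff]
  refine Finset.sum_congr rfl fun i _ => ?_
  rw [finset_sum_coeff]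
  refine Finset.sum_congr rfl fun j _ => ?_
  rw [coeff_C_mul, coeff_X_pow, mul_ite, mul_one, mul_zero]

lemma Phi_coeff_tail (k : ℕ) (A : Fin (k+1) → V) (m : ℕ) (hm : k + k < m) :
    (Phi k A).coeff m = 0 := by
  rw [Phi_coeff]
  refine Finset.sum_eq_zero fun i _ => Finset.sum_eq_zero fun j _ => ?_
  have h1 : (i:ℕ) ≤ k := Fin.is_le i
  have h2 : (j:ℕ) ≤ k := Fin.is_le j
  rw [if_neg (by omega)]

lemma Phi_coeff_top (k : ℕ) (A : Fin (k+1) → V) : 0 ≤ (Phi k A).coeff (k + k) := by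
  rw [Phi_coeff]
  rw [Finset.sum_eq_single (Fin.last k)]
  · rw [Finset.sum_eq_single (Fin.last k)]
    · rw [if_pos (by simp)]
      simpa using inner_self_nonneg (𝕜 := ℂ) (x := A (Fin.last k))
    · intro j _ hj
      rw [if_neg (by have := Fin.val_lt_last hj; simp; omega)]
    · intro h; exact absurd (Finset.mem_univ _) h
  · intro i _ hi
    refine Finset.sum_eq_zero fun j _ => ?_
    rw [if_neg (by have := Fin.val_lt_last hi; have := Fin.is_le j; simp; omega)]
  · intro h; exact absurd (Finset.mem_univ _) h

/-- Pointwise derivative of the vector-valued polynomial. -/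
noncomputable def u1 (k : ℕ) (A : Fin (k+1) → V) (t : ℝ) : V :=
  ∑ i : Fin (k+1), (((i:ℕ):ℝ) * t ^ ((i:ℕ)-1)) • A i

lemma uf_hasDerivAt (k : ℕ) (A : Fin (k+1) → V) (t : ℝ) :
    HasDerivAt (fun t => ∑ i : Fin (k+1), t ^ (i:ℕ) • A i) (u1 k A t) t :=
  HasDerivAt.fun_sum fun i _ => (hasDerivAt_pow (i:ℕ) t).smul_const (A i)

lemma Phi_deriv (k : ℕ) (A : Fin (k+1) → V) (t : ℝ) :
    (derivative (Phi k A)).eval t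
      = 2 * ((inner ℂ (∑ i : Fin (k+1), t ^ (i:ℕ) • A i) (u1 k A t) : ℂ)).re := by
  set uf : ℝ → V := fun t => ∑ i : Fin (k+1), t ^ (i:ℕ) • A i with huf
  have h1 : HasDerivAt (fun t => (inner ℂ (uf t) (uf t) : ℂ))
      ((inner ℂ (uf t) (u1 k A t) : ℂ) + (inner ℂ (u1 k A t) (uf t) : ℂ)) t :=
    HasDerivAt.inner ℂ (uf_hasDerivAt k A t) (uf_hasDerivAt k A t)
  have h2 : HasDerivAt (fun t => ((inner ℂ (uf t) (uf t) : ℂ)).re)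
      (((inner ℂ (uf t) (u1 k A t) : ℂ) + (inner ℂ (u1 k A t) (uf t) : ℂ)).re) t :=
    Complex.reCLM.hasFDerivAt.comp_hasDerivAt t h1
  have h3 : (fun t => ((inner ℂ (uf t) (uf t) : ℂ)).re) = fun t => (Phi k A).eval t := by
    funext s
    rw [Phi_eval]
    rw [← inner_self_eq_norm_sq (𝕜 := ℂ)]
    simp [huf]
  rw [h3] at h2
  have h4 := ((Phi k A).hasDerivAt t).unique h2
  rw [h4, Complex.add_re, ← inner_conj_symm (u1 k A t) (uf t), Complex.conj_re]
  ring

end PhiSection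

theorem local_mass_bound
    (k : ℕ) (hk : 1 ≤ k) (t₀ τ : ℝ) (hτ : 0 < τ)
    -- the Gauss points of [-1,1]: the k roots of the Legendre polynomial of degree k
    (c : Fin k → ℝ) (hmono : StrictMono c)
    (hroot : ∀ j, (legendre k).eval (c j) = 0)
    (hmem : ∀ j, c j ∈ Set.Ioo (-1 : ℝ) 1)
    -- V : a finite-dimensional complex inner product space
    (V : Type*) [NormedAddCommGroup V] [InnerProductSpace ℂ V] [FiniteDimensional ℂ V]
    -- a : a Hermitian sesquilinear form (paper's convention: linear in the first argument)
    (a : V → V → ℂ)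
    (ha_add : ∀ v₁ v₂ w : V, a (v₁ + v₂) w = a v₁ w + a v₂ w)
    (ha_smul : ∀ (z : ℂ) (v w : V), a (z • v) w = z * a v w)
    (ha_herm : ∀ v w : V, a v w = starRingEnd ℂ (a w v))
    -- G : an arbitrary map such that ⟨G v, v⟩ is real
    -- (paper's ⟨x, y⟩, linear in x, is Mathlib's `inner y x`)
    (G : V → V)
    (hG : ∀ v : V, (inner ℂ v (G v) : ℂ).im = 0)
    -- u_h, r_h : polynomials of degree ≤ k in time on I_n
    (uh : ℝ → V) (rh : ℝ → ℝ)
    (hupoly : IsPolyDeg V k uh) (hrpoly : IsPolyDeg ℝ k rh)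
    -- Gauss collocation equation (i) at the Gauss points t_{nj} = t₀ + (1 + c_j) τ / 2
    (hu_eq : ∀ j : Fin k, ∀ v : V,
      Complex.I * (inner ℂ v (deriv uh (t₀ + (1 + c j) * τ / 2)) : ℂ)
        + a (uh (t₀ + (1 + c j) * τ / 2)) v
        - (rh (t₀ + (1 + c j) * τ / 2) : ℂ)
            * (inner ℂ v (G (uh (t₀ + (1 + c j) * τ / 2))) : ℂ) = 0)
    -- Gauss collocation equation (ii)
    (hr_eq : ∀ j : Fin k,
      deriv rh (t₀ + (1 + c j) * τ / 2)
        = (1 / 2) * ((inner ℂ (deriv uh (t₀ + (1 + c j) * τ / 2))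
            (G (uh (t₀ + (1 + c j) * τ / 2)))) : ℂ).re) :
    -- conclusion: ∫_{I_n} ‖(P^n u_h)(t)‖² dt ≤ τ ‖u_h(t₀)‖²
    ∀ Puh : ℝ → V, IsL2ProjOn V t₀ (t₀ + τ) k uh Puh →
      (∫ t in t₀..(t₀ + τ), ‖Puh t‖ ^ 2) ≤ τ * ‖uh t₀‖ ^ 2 := by
  intro Puh hproj
  obtain ⟨hPpoly, hPorth⟩ := hproj
  obtain ⟨A, hA⟩ := hupoly
  have huh : uh = fun t => ∑ i : Fin (k+1), t ^ (i:ℕ) • A i := funext hA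
  subst huh
  set uf : ℝ → V := fun t => ∑ i : Fin (k+1), t ^ (i:ℕ) • A i with hufdef
  -- roots of the derivative of Phi at the Gauss points
  have hroots : ∀ j : Fin k, (derivative (Phi k A)).eval (t₀ + (1 + c j) * τ / 2) = 0 := by
    intro j
    set tj := t₀ + (1 + c j) * τ / 2 with htj
    have hdval : deriv uf tj = u1 k A tj := (uf_hasDerivAt k A tj).deriv
    have heq := hu_eq j (uf tj)
    rw [hdval] at heq
    set z := (inner ℂ (uf tj) (u1 k A tj) : ℂ) with hz
    set wG := (inner ℂ (uf tj) (G (uf tj)) : ℂ) with hwG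
    have him := congrArg Complex.im heq
    have hherm : (a (uf tj) (uf tj)).im = 0 := by
      have h2 := congrArg Complex.im (ha_herm (uf tj) (uf tj))
      rw [Complex.conj_im] at h2
      linarith
    rw [Complex.zero_im, Complex.sub_im, Complex.add_im, hherm, add_zero,
      Complex.im_ofReal_mul, hG (uf tj), mul_zero, sub_zero, Complex.mul_im,
      Complex.I_re, Complex.I_im, zero_mul, one_mul, zero_add] at him
    rw [Phi_deriv, ← hz, him, mul_zero]
  have hkey := key_ineq k hk t₀ τ hτ c hmono hroot (Phi k A)
    (Phi_coeff_tail k A) (Phi_coeff_top k A) hroots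
  -- Pythagoras: the projection has smaller L² norm
  have hcontP : Continuous Puh := hPpoly.continuous
  have hcontU : Continuous uf := continuous_finset_sum _ fun i _ =>
    (continuous_pow (i:ℕ)).smul continuous_const
  have horth := hPorth Puh hPpoly
  have hre : ∫ t in t₀..(t₀+τ), ((inner ℂ (uf t - Puh t) (Puh t) : ℂ)).re = 0 := by
    have hint : IntervalIntegrable (fun t => (inner ℂ (uf t - Puh t) (Puh t) : ℂ))
        volume t₀ (t₀+τ) :=
      (Continuous.inner (hcontU.sub hcontP) hcontP).intervalIntegrable _ _
    have h2 := Complex.reCLM.intervalIntegral_comp_comm hint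
    rw [horth] at h2
    simpa using h2
  have hpt : ∀ t : ℝ, ‖uf t‖^2 = ‖Puh t‖^2
      + (2 * ((inner ℂ (uf t - Puh t) (Puh t) : ℂ)).re + ‖uf t - Puh t‖^2) := by
    intro t
    have h3 := norm_add_sq (𝕜 := ℂ) (uf t - Puh t) (Puh t)
    rw [sub_add_cancel] at h3
    rw [h3]
    simp only [RCLike.re_to_complex]
    ring
  have hint1 : IntervalIntegrable (fun t => ‖Puh t‖^2) volume t₀ (t₀+τ) :=
    ((hcontP.norm).pow 2).intervalIntegrable _ _
  have hint2 : IntervalIntegrable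
      (fun t => 2 * ((inner ℂ (uf t - Puh t) (Puh t) : ℂ)).re + ‖uf t - Puh t‖^2)
      volume t₀ (t₀+τ) := by
    apply Continuous.intervalIntegrable
    apply Continuous.add
    · exact continuous_const.mul (Complex.continuous_re.comp
        (Continuous.inner (hcontU.sub hcontP) hcontP))
    · exact ((hcontU.sub hcontP).norm).pow 2
  have hsum : ∫ t in t₀..(t₀+τ), ‖uf t‖^2
      = (∫ t in t₀..(t₀+τ), ‖Puh t‖^2)
        + ∫ t in t₀..(t₀+τ), (2 * ((inner ℂ (uf t - Puh t) (Puh t) : ℂ)).re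
            + ‖uf t - Puh t‖^2) := by
    rw [← intervalIntegral.integral_add hint1 hint2]
    exact intervalIntegral.integral_congr fun t _ => hpt t
  have hcross : ∫ t in t₀..(t₀+τ), (2 * ((inner ℂ (uf t - Puh t) (Puh t) : ℂ)).re
      + ‖uf t - Puh t‖^2)
      = 2 * (∫ t in t₀..(t₀+τ), ((inner ℂ (uf t - Puh t) (Puh t) : ℂ)).re)
      + ∫ t in t₀..(t₀+τ), ‖uf t - Puh t‖^2 := by
    rw [← intervalIntegral.integral_const_mul, ← intervalIntegral.integral_add]
    · exact (continuous_const.mul (Complex.continuous_re.comp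
        (Continuous.inner (hcontU.sub hcontP) hcontP))).intervalIntegrable _ _
    · exact (((hcontU.sub hcontP).norm).pow 2).intervalIntegrable _ _
  have hnn : 0 ≤ ∫ t in t₀..(t₀+τ), ‖uf t - Puh t‖^2 :=
    intervalIntegral.integral_nonneg (by linarith) (fun u _ => by positivity)
  have hpyth : (∫ t in t₀..(t₀+τ), ‖Puh t‖^2) ≤ ∫ t in t₀..(t₀+τ), ‖uf t‖^2 := by
    rw [hsum, hcross, hre]
    linarith
  have hPhiInt : ∫ t in t₀..(t₀+τ), ‖uf t‖^2 = ∫ t in t₀..(t₀+τ), (Phi k A).eval t :=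
    intervalIntegral.integral_congr fun t _ => (Phi_eval k A t).symm
  have hfinal : τ * (Phi k A).eval t₀ = τ * ‖uf t₀‖^2 := by rw [Phi_eval]
  calc (∫ t in t₀..(t₀+τ), ‖Puh t‖^2) ≤ ∫ t in t₀..(t₀+τ), ‖uf t‖^2 := hpyth
    _ = ∫ t in t₀..(t₀+τ), (Phi k A).eval t := hPhiInt
    _ ≤ τ * (Phi k A).eval t₀ := hkey
    _ = τ * ‖uf t₀‖^2 := hfinal
end

section
/- Control of a degree-k polynomial by its projection and initial value (inequality (3.11)): let X be a complex Hilbert space and k ≥ 1 an integer. There exists a constant C depending only on k (independent of τ, u and X) such that for every interval I = [a, a+τ] with τ > 0 and every X-valued polynomial u of degree ≤ k, ∫_I ‖u(t)‖² dt ≤ C·∫_I ‖(Pu)(t)‖² dt + C·τ·‖u(a)‖². -/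
/-!
Control of a degree-k polynomial by its projection and initial value (inequality (3.11)):
`∫_I ‖u(t)‖² dt ≤ C ∫_I ‖(Pu)(t)‖² dt + C τ ‖u(a)‖²`, with C depending only on k.
-/

open MeasureTheory intervalIntegral Set

-- L1: integral of monomial times constant vector
lemma aux_int_pow_smul {E : Type*} [NormedAddCommGroup E] [NormedSpace ℝ E] [CompleteSpace E]
    (m : ℕ) (v : E) :
    ∫ s in (0:ℝ)..1, s ^ m • v = (((m:ℝ) + 1)⁻¹) • v := by
  rw [intervalIntegral.integral_smul_const, integral_pow]
  norm_num

-- L2'': product of two scalar polys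
lemma aux_int_mul {n m : ℕ} (c : Fin n → ℝ) (d : Fin m → ℝ) :
    ∫ s in (0:ℝ)..1, (∑ i, c i * s ^ (i:ℕ)) * (∑ j, d j * s ^ (j:ℕ))
      = ∑ i, ∑ j, c i * d j * (((i:ℕ) + (j:ℕ) + 1 : ℝ))⁻¹ := by
  have h : ∀ s : ℝ, (∑ i, c i * s ^ (i:ℕ)) * (∑ j, d j * s ^ (j:ℕ))
      = ∑ i : Fin n, ∑ j : Fin m, (c i * d j) * s ^ ((i:ℕ) + (j:ℕ)) := by
    intro s
    rw [Finset.sum_mul]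
    refine Finset.sum_congr rfl fun i _ => ?_
    rw [Finset.mul_sum]
    refine Finset.sum_congr rfl fun j _ => ?_
    ring
  simp only [h]
  rw [intervalIntegral.integral_finset_sum]
  · refine Finset.sum_congr rfl fun i _ => ?_
    rw [intervalIntegral.integral_finset_sum]
    · refine Finset.sum_congr rfl fun j _ => ?_
      rw [intervalIntegral.integral_const_mul, integral_pow]
      push_cast
      ring
    · intro j _
      exact (Continuous.intervalIntegrable (by continuity) _ _)
  · intro i _
    exact (Continuous.intervalIntegrable (by continuity) _ _)


-- L0: a real polynomial (coeff vector) vanishing on an infinite set has zero coefficients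
lemma aux_vanish_coeffs {n : ℕ} (c : Fin n → ℝ) {S : Set ℝ} (hS : S.Infinite)
    (h : ∀ s ∈ S, (∑ i, c i * s ^ (i:ℕ)) = 0) : ∀ i, c i = 0 := by
  set P : Polynomial ℝ := ∑ i : Fin n, Polynomial.monomial (i:ℕ) (c i) with hP
  have heval : ∀ s, P.eval s = ∑ i, c i * s ^ (i:ℕ) := by
    intro s
    rw [hP, Polynomial.eval_finset_sum]
    simp [Polynomial.eval_monomial]
  have hP0 : P = 0 := by
    apply Polynomial.eq_zero_of_infinite_isRoot
    apply hS.mono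
    intro s hs
    simp only [Set.mem_setOf_eq, Polynomial.IsRoot, heval]
    exact h s hs
  intro i
  have : P.coeff (i:ℕ) = c i := by
    rw [hP]
    rw [Polynomial.finset_sum_coeff]
    rw [Finset.sum_eq_single i]
    · simp
    · intro j _ hj
      rw [Polynomial.coeff_monomial, if_neg (by simpa [Fin.val_eq_val] using hj)]
    · simp
  rw [← this, hP0]
  simp

-- L6: continuous-on-[0,1] functions: just need measurable/nonneg; we use continuity
lemma aux_zero_set_infinite {g : ℝ → ℝ} (hg : Continuous g)
    (hnn : ∀ s ∈ Ioc (0:ℝ) 1, 0 ≤ g s)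
    (hint : ∫ s in (0:ℝ)..1, g s = 0) :
    {s | s ∈ Ioc (0:ℝ) 1 ∧ g s = 0}.Infinite := by
  have hii : IntervalIntegrable g volume 0 1 := hg.intervalIntegrable _ _
  have hae : g =ᵐ[volume.restrict (Ioc (0:ℝ) 1)] 0 := by
    rw [← intervalIntegral.integral_eq_zero_iff_of_le_of_nonneg_ae (by norm_num) ?_ hii]
    · exact hint
    · filter_upwards [ae_restrict_mem measurableSet_Ioc] with s hs using hnn s hs
  have hmeas : volume ({s | s ∈ Ioc (0:ℝ) 1 ∧ g s = 0}) = 1 := by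
    have h1 : volume.restrict (Ioc (0:ℝ) 1) {s | g s ≠ 0} = 0 := hae
    rw [Measure.restrict_apply₀ (by
      exact (hg.measurable (measurableSet_singleton 0).compl).nullMeasurableSet)] at h1
    have : {s | s ∈ Ioc (0:ℝ) 1 ∧ g s = 0} = Ioc (0:ℝ) 1 \ ({s | g s ≠ 0} ∩ Ioc 0 1) := by
      ext s; simp only [Set.mem_setOf_eq, Set.mem_diff, Set.mem_inter_iff]; tauto
    rw [this, measure_diff_null h1]
    simp
  intro hfin
  rw [hfin.measure_zero] at hmeas
  exact one_ne_zero hmeas.symm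

-- L4: positive definiteness of the Hilbert quadratic form
lemma aux_quadform_zero {n : ℕ} (c : Fin n → ℝ)
    (h : ∑ i, ∑ j, c i * c j * (((i:ℕ) + (j:ℕ) + 1 : ℝ))⁻¹ = 0) : ∀ i, c i = 0 := by
  have hint : ∫ s in (0:ℝ)..1, (∑ i, c i * s ^ (i:ℕ)) * (∑ j, c j * s ^ (j:ℕ)) = 0 := by
    rw [aux_int_mul]; exact h
  have hinf := aux_zero_set_infinite (g := fun s => (∑ i, c i * s ^ (i:ℕ)) * (∑ j, c j * s ^ (j:ℕ)))
    (by continuity) (fun s _ => mul_self_nonneg _) hint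
  have := hinf.mono (subset_refl _)
  apply aux_vanish_coeffs c this
  intro s hs
  exact mul_self_eq_zero.mp hs.2

-- the surjectivity lemma
lemma aux_hilbert_solve {n : ℕ} (target : Fin n → ℝ) :
    ∃ c : Fin n → ℝ, ∀ j : Fin n, ∑ i, c i * (((i:ℕ) + (j:ℕ) + 1 : ℝ))⁻¹ = target j := by
  let T : (Fin n → ℝ) →ₗ[ℝ] (Fin n → ℝ) :=
    { toFun := fun c j => ∑ i, c i * (((i:ℕ) + (j:ℕ) + 1 : ℝ))⁻¹
      map_add' := by intro c d; funext j; simp [add_mul, Finset.sum_add_distrib]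
      map_smul' := by intro r c; funext j; simp [Finset.mul_sum, mul_assoc] }
  have hinj : Function.Injective T := by
    rw [← LinearMap.ker_eq_bot, LinearMap.ker_eq_bot']
    intro c hc
    have h0 : ∀ j : Fin n, ∑ i, c i * (((i:ℕ) + (j:ℕ) + 1 : ℝ))⁻¹ = 0 := fun j => congrFun hc j
    have hq : ∑ i, ∑ j, c i * c j * (((i:ℕ) + (j:ℕ) + 1 : ℝ))⁻¹ = 0 := by
      rw [Finset.sum_comm]
      refine Finset.sum_eq_zero fun j _ => ?_
      have : ∑ i, c i * c j * (((i:ℕ) + (j:ℕ) + 1 : ℝ))⁻¹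
          = c j * ∑ i, c i * (((i:ℕ) + (j:ℕ) + 1 : ℝ))⁻¹ := by
        rw [Finset.mul_sum]; exact Finset.sum_congr rfl fun i _ => by ring
      rw [this, h0 j, mul_zero]
    funext i
    exact aux_quadform_zero c hq i
  have hsurj : Function.Surjective T :=
    (LinearMap.injective_iff_surjective).mp hinj
  obtain ⟨c, hc⟩ := hsurj target
  exact ⟨c, fun j => congrFun hc j⟩
-- value at 0 of a poly given by coefficients over Fin (n+1)
lemma aux_eval_zero {X : Type*} [AddCommGroup X] [Module ℝ X] {n : ℕ} (φ : Fin (n + 1) → X) :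
    ∑ i : Fin (n + 1), (0:ℝ) ^ (i:ℕ) • φ i = φ 0 := by
  rw [Fin.sum_univ_succ]
  simp

-- nonnegativity of the Hilbert quadratic form
lemma aux_quadform_nonneg {n : ℕ} (c : Fin n → ℝ) :
    0 ≤ ∑ i, ∑ j, c i * c j * (((i:ℕ) + (j:ℕ) + 1 : ℝ))⁻¹ := by
  rw [← aux_int_mul]
  apply intervalIntegral.integral_nonneg (by norm_num)
  intro s _
  exact mul_self_nonneg _

-- Construction of the (shifted) monic orthogonal polynomial coefficients on [0,1]
lemma aux_ell (m : ℕ) :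
    ∃ c : Fin (m + 2) → ℝ,
      c (Fin.last (m + 1)) = 1 ∧
      (∀ j : Fin (m + 1), ∑ i : Fin (m + 2), c i * (((i:ℕ) + (j:ℕ) + 1 : ℝ))⁻¹ = 0) ∧
      c 0 ≠ 0 ∧
      0 < ∑ i : Fin (m + 2), ∑ j : Fin (m + 2), c i * c j * (((i:ℕ) + (j:ℕ) + 1 : ℝ))⁻¹ := by
  obtain ⟨c₀, hc₀⟩ := aux_hilbert_solve (n := m + 1)
    (fun j => -(((m + 1 : ℕ):ℝ) + (j:ℕ) + 1)⁻¹)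
  set c : Fin (m + 2) → ℝ := Fin.snoc c₀ 1 with hcdef
  have hlast : c (Fin.last (m + 1)) = 1 := Fin.snoc_last _ _
  have hmom : ∀ j : Fin (m + 1), ∑ i : Fin (m + 2), c i * (((i:ℕ) + (j:ℕ) + 1 : ℝ))⁻¹ = 0 := by
    intro j
    rw [Fin.sum_univ_castSucc]
    simp only [hcdef, Fin.snoc_castSucc, Fin.snoc_last, Fin.coe_castSucc, Fin.val_last]
    rw [hc₀ j]
    push_cast
    ring
  have hzero : c 0 ≠ 0 := by
    intro h0
    -- c = Fin.cons 0 c' where c' i = c i.succ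
    set c' : Fin (m + 1) → ℝ := fun i => c i.succ with hc'def
    have hpt : ∀ s : ℝ, (∑ i : Fin (m + 2), c i * s ^ (i:ℕ))
        = s * (∑ i : Fin (m + 1), c' i * s ^ (i:ℕ)) := by
      intro s
      rw [Fin.sum_univ_succ, h0, Finset.mul_sum]
      simp only [zero_mul, zero_add, Fin.val_succ]
      refine Finset.sum_congr rfl fun i _ => ?_
      rw [pow_succ]
      ring
    have hI : ∫ s in (0:ℝ)..1, (∑ i : Fin (m + 2), c i * s ^ (i:ℕ))
        * (∑ j : Fin (m + 1), c' j * s ^ (j:ℕ)) = 0 := by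
      rw [aux_int_mul]
      rw [Finset.sum_comm]
      refine Finset.sum_eq_zero fun j _ => ?_
      have : ∑ i : Fin (m+2), c i * c' j * (((i:ℕ) + (j:ℕ) + 1 : ℝ))⁻¹
          = c' j * ∑ i : Fin (m+2), c i * (((i:ℕ) + (j:ℕ) + 1 : ℝ))⁻¹ := by
        rw [Finset.mul_sum]; exact Finset.sum_congr rfl fun i _ => by ring
      rw [this, hmom j, mul_zero]
    have hI2 : ∫ s in (0:ℝ)..1,
        s * ((∑ j : Fin (m + 1), c' j * s ^ (j:ℕ)) * (∑ j : Fin (m + 1), c' j * s ^ (j:ℕ))) = 0 := by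
      rw [show (fun s : ℝ => s * ((∑ j : Fin (m + 1), c' j * s ^ (j:ℕ)) * (∑ j : Fin (m + 1), c' j * s ^ (j:ℕ))))
          = fun s : ℝ => (∑ i : Fin (m + 2), c i * s ^ (i:ℕ)) * (∑ j : Fin (m + 1), c' j * s ^ (j:ℕ)) from ?_]
      · exact hI
      · funext s
        rw [hpt s]
        ring
    have hinf := aux_zero_set_infinite
      (g := fun s => s * ((∑ j : Fin (m + 1), c' j * s ^ (j:ℕ)) * (∑ j : Fin (m + 1), c' j * s ^ (j:ℕ))))
      (by continuity)
      (fun s hs => mul_nonneg (le_of_lt hs.1) (mul_self_nonneg _)) hI2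
    have hvan : ∀ i, c' i = 0 := by
      apply aux_vanish_coeffs c' (hinf.mono (subset_refl _))
      intro s hs
      have hs1 : (0:ℝ) < s := hs.1.1
      have := hs.2
      have : (∑ j : Fin (m + 1), c' j * s ^ (j:ℕ)) * (∑ j : Fin (m + 1), c' j * s ^ (j:ℕ)) = 0 := by
        rcases mul_eq_zero.mp this with h | h
        · exact absurd h (ne_of_gt hs1)
        · exact h
      exact mul_self_eq_zero.mp this
    have : c (Fin.last (m + 1)) = 0 := by
      have : Fin.last (m + 1) = (Fin.last m).succ := by
        ext; simp
      rw [this]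
      exact hvan (Fin.last m)
    rw [hlast] at this
    exact one_ne_zero this
  refine ⟨c, hlast, hmom, hzero, ?_⟩
  rcases lt_or_eq_of_le (aux_quadform_nonneg c) with h | h
  · exact h
  · exfalso
    have := aux_quadform_zero c h.symm (Fin.last (m+1))
    rw [hlast] at this
    exact one_ne_zero this
-- L9: coefficients of s ↦ f (τ s + a)
lemma aux_transfer {X : Type*} [AddCommGroup X] [Module ℝ X] {m : ℕ}
    (φ : Fin (m + 1) → X) (a τ : ℝ) :
    ∃ ψ : Fin (m + 1) → X,
      (∀ s : ℝ, ∑ i : Fin (m + 1), (τ * s + a) ^ (i:ℕ) • φ i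
          = ∑ j : Fin (m + 1), s ^ (j:ℕ) • ψ j) ∧
      ψ (Fin.last m) = τ ^ m • φ (Fin.last m) := by
  refine ⟨fun j => ∑ i : Fin (m + 1),
      (((i:ℕ).choose (j:ℕ) : ℝ) * τ ^ (j:ℕ) * a ^ ((i:ℕ) - (j:ℕ))) • φ i, ?_, ?_⟩
  · intro s
    have step : ∀ i : Fin (m + 1), (τ * s + a) ^ (i:ℕ)
        = ∑ j : Fin (m + 1),
            s ^ (j:ℕ) * (((i:ℕ).choose (j:ℕ) : ℝ) * τ ^ (j:ℕ) * a ^ ((i:ℕ) - (j:ℕ))) := by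
      intro i
      have hsub : Finset.range ((i:ℕ) + 1) ⊆ Finset.range (m + 1) :=
        Finset.range_subset_range.mpr (Nat.succ_le_succ i.is_le)
      have hzero : ∀ j ∈ Finset.range (m + 1), j ∉ Finset.range ((i:ℕ) + 1) →
          (τ * s) ^ j * a ^ ((i:ℕ) - j) * (((i:ℕ).choose j : ℕ) : ℝ) = 0 := by
        intro j _ hj
        have : (i:ℕ) < j := by simpa using hj
        simp [Nat.choose_eq_zero_of_lt this]
      calc (τ * s + a) ^ (i:ℕ)
          = ∑ j ∈ Finset.range ((i:ℕ) + 1),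
              (τ * s) ^ j * a ^ ((i:ℕ) - j) * (((i:ℕ).choose j : ℕ) : ℝ) := add_pow _ _ _
        _ = ∑ j ∈ Finset.range (m + 1),
              (τ * s) ^ j * a ^ ((i:ℕ) - j) * (((i:ℕ).choose j : ℕ) : ℝ) :=
            Finset.sum_subset hsub hzero
        _ = ∑ j : Fin (m + 1),
              s ^ (j:ℕ) * (((i:ℕ).choose (j:ℕ) : ℝ) * τ ^ (j:ℕ) * a ^ ((i:ℕ) - (j:ℕ))) := by
            rw [Fin.sum_univ_eq_sum_range
              (fun j => s ^ j * (((i:ℕ).choose j : ℝ) * τ ^ j * a ^ ((i:ℕ) - j)))]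
            exact Finset.sum_congr rfl fun j _ => by rw [mul_pow]; ring
    calc ∑ i : Fin (m + 1), (τ * s + a) ^ (i:ℕ) • φ i
        = ∑ i : Fin (m + 1), ∑ j : Fin (m + 1),
            (s ^ (j:ℕ) * (((i:ℕ).choose (j:ℕ) : ℝ) * τ ^ (j:ℕ) * a ^ ((i:ℕ) - (j:ℕ)))) • φ i := by
          refine Finset.sum_congr rfl fun i _ => ?_
          rw [step i, ← Finset.sum_smul]
      _ = ∑ j : Fin (m + 1), ∑ i : Fin (m + 1),
            (s ^ (j:ℕ) * (((i:ℕ).choose (j:ℕ) : ℝ) * τ ^ (j:ℕ) * a ^ ((i:ℕ) - (j:ℕ)))) • φ i :=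
          Finset.sum_comm
      _ = ∑ j : Fin (m + 1), s ^ (j:ℕ) • ∑ i : Fin (m + 1),
            (((i:ℕ).choose (j:ℕ) : ℝ) * τ ^ (j:ℕ) * a ^ ((i:ℕ) - (j:ℕ))) • φ i := by
          refine Finset.sum_congr rfl fun j _ => ?_
          rw [Finset.smul_sum]
          exact Finset.sum_congr rfl fun i _ => by rw [smul_smul]
  · show ∑ i : Fin (m + 1), ((((i:ℕ)).choose ((Fin.last m : Fin (m+1)):ℕ) : ℝ)
        * τ ^ ((Fin.last m : Fin (m+1)):ℕ) * a ^ ((i:ℕ) - ((Fin.last m : Fin (m+1)):ℕ))) • φ i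
        = τ ^ m • φ (Fin.last m)
    rw [Fin.sum_univ_castSucc]
    rw [Finset.sum_eq_zero, zero_add]
    · simp
    · intro i _
      have hi : ((i.castSucc : Fin (m+1)) : ℕ) < ((Fin.last m : Fin (m+1)) : ℕ) := by
        simp [Fin.coe_castSucc, Fin.val_last, i.isLt]
      rw [Nat.choose_eq_zero_of_lt hi]
      simp

-- L10: change of variables
lemma aux_cov {E : Type*} [NormedAddCommGroup E] [NormedSpace ℝ E]
    (f : ℝ → E) (a τ : ℝ) (hτ : τ ≠ 0) :
    ∫ t in a..(a + τ), f t = τ • ∫ s in (0:ℝ)..1, f (τ * s + a) := by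
  rw [intervalIntegral.integral_comp_mul_add f hτ a, smul_smul, mul_inv_cancel₀ hτ, one_smul]
  norm_num [add_comm]
-- moments vanish ⟹ coefficients vanish
lemma aux_moments_zero {n : ℕ} (c : Fin n → ℝ)
    (h : ∀ j : Fin n, ∑ i, c i * (((i:ℕ) + (j:ℕ) + 1 : ℝ))⁻¹ = 0) : ∀ i, c i = 0 := by
  apply aux_quadform_zero
  rw [Finset.sum_comm]
  refine Finset.sum_eq_zero fun j _ => ?_
  have : ∑ i, c i * c j * (((i:ℕ) + (j:ℕ) + 1 : ℝ))⁻¹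
      = c j * ∑ i, c i * (((i:ℕ) + (j:ℕ) + 1 : ℝ))⁻¹ := by
    rw [Finset.mul_sum]; exact Finset.sum_congr rfl fun i _ => by ring
  rw [this, h j, mul_zero]

section InnerHelpers
variable {X : Type*} [NormedAddCommGroup X] [InnerProductSpace ℂ X]

lemma aux_inner_smul_left (x y : X) (r : ℝ) :
    (inner ℂ (r • x) y : ℂ) = r • (inner ℂ x y : ℂ) := by
  rw [RCLike.real_smul_eq_coe_smul (K := ℂ), inner_smul_left]
  simp [RCLike.conj_ofReal, Complex.real_smul]

lemma aux_inner_smul_right (x y : X) (r : ℝ) :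
    (inner ℂ x (r • y) : ℂ) = r • (inner ℂ x y : ℂ) := by
  rw [RCLike.real_smul_eq_coe_smul (K := ℂ), inner_smul_right]
  simp [Complex.real_smul]

end InnerHelpers
universe u

theorem poly_controlled_by_projection_and_initial_value (k : ℕ) (hk : 1 ≤ k) :
    -- C depends only on k (not on τ, u, X)
    ∃ C : ℝ, 0 < C ∧
      -- X : a complex Hilbert space
      ∀ (X : Type u) [NormedAddCommGroup X] [InnerProductSpace ℂ X] [CompleteSpace X],
      ∀ (a τ : ℝ), 0 < τ →
      ∀ u : ℝ → X, IsPolyDeg X k u →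
      ∀ p : ℝ → X, IsL2ProjOn X a (a + τ) k u p →
        (∫ t in a..(a + τ), ‖u t‖ ^ 2)
          ≤ C * (∫ t in a..(a + τ), ‖p t‖ ^ 2) + C * τ * ‖u a‖ ^ 2 := by
  obtain ⟨n, rfl⟩ : ∃ n, k = n + 1 := ⟨k - 1, (Nat.succ_pred_eq_of_pos hk).symm⟩
  obtain ⟨c, hclast, hcmom, hc0, hβpos⟩ := aux_ell n
  obtain ⟨w, hw⟩ := aux_hilbert_solve (n := n + 1) (fun j => if j = 0 then 1 else 0)
  set β : ℝ := ∑ i : Fin (n+2), ∑ j : Fin (n+2), c i * c j * (((i:ℕ) + (j:ℕ) + 1 : ℝ))⁻¹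
    with hβdef
  set γ : ℝ := ∑ i : Fin (n+1), ∑ j : Fin (n+1), w i * w j * (((i:ℕ) + (j:ℕ) + 1 : ℝ))⁻¹
    with hγdef
  have hγ0 : 0 ≤ γ := aux_quadform_nonneg w
  have hc0sq : 0 < c 0 ^ 2 := by positivity
  have hβ0 : 0 < β := hβpos
  set C : ℝ := 1 + 2 * β / (c 0) ^ 2 + 2 * β * γ / (c 0) ^ 2 with hCdef
  have he1 : 0 ≤ 2 * β / (c 0) ^ 2 := div_nonneg (by linarith) hc0sq.le
  have he2 : 0 ≤ 2 * β * γ / (c 0) ^ 2 :=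
    div_nonneg (mul_nonneg (by linarith) hγ0) hc0sq.le
  have hC : 0 < C := by rw [hCdef]; linarith
  refine ⟨C, hC, ?_⟩
  intro X _ _ _ a τ hτ u hu p hp
  have hτ' : τ ≠ 0 := ne_of_gt hτ
  obtain ⟨φu, hφu⟩ := hu
  obtain ⟨hpoly, horth⟩ := hp
  obtain ⟨φp, hφp⟩ := hpoly
  have hφp' : ∀ t : ℝ, p t = ∑ i : Fin (n + 1), t ^ (i:ℕ) • φp i := hφp
  obtain ⟨ψu, hψu, hψulast⟩ := aux_transfer (m := n + 1) φu a τ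
  obtain ⟨ψp, hψp, -⟩ := aux_transfer (m := n) φp a τ
  have hus : ∀ s : ℝ, u (τ * s + a) = ∑ j : Fin (n+2), s ^ (j:ℕ) • ψu j :=
    fun s => (hφu _).trans (hψu s)
  have hps : ∀ s : ℝ, p (τ * s + a) = ∑ j : Fin (n+1), s ^ (j:ℕ) • ψp j :=
    fun s => (hφp' _).trans (hψp s)
  set δ : Fin (n+2) → X := fun i => ψu i - Fin.snoc (α := fun _ => X) ψp 0 i with hδdef
  have hsnoc : ∀ s : ℝ, ∑ i : Fin (n+2), s ^ (i:ℕ) • (Fin.snoc ψp (0:X) i)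
      = ∑ i : Fin (n+1), s ^ (i:ℕ) • ψp i := by
    intro s
    rw [Fin.sum_univ_castSucc]
    simp
  have hrs : ∀ s : ℝ, u (τ*s+a) - p (τ*s+a) = ∑ i : Fin (n+2), s ^ (i:ℕ) • δ i := by
    intro s
    rw [hus, hps, ← hsnoc s, ← Finset.sum_sub_distrib]
    exact Finset.sum_congr rfl fun i _ => by rw [hδdef, smul_sub]
  -- the moment conditions paired with an arbitrary vector
  have hmomx : ∀ (j : Fin (n+1)) (x : X),
      ∑ i : Fin (n+2), (((i:ℕ) + (j:ℕ) + 1 : ℝ))⁻¹ • (inner ℂ (δ i) x : ℂ) = 0 := by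
    intro j x
    obtain ⟨ψχ, hψχ, -⟩ := aux_transfer (m := n)
      (fun i : Fin (n+1) => if i = j then x else 0) (-(a * τ⁻¹)) τ⁻¹
    set χ : ℝ → X :=
      fun t => ∑ i : Fin (n+1), (τ⁻¹ * t + -(a * τ⁻¹)) ^ (i:ℕ) • (if i = j then x else 0)
      with hχdef
    have hχpoly : IsPolyDeg X n χ := ⟨ψχ, fun t => hψχ t⟩
    have h0 := horth χ hχpoly
    rw [aux_cov (fun t => (inner ℂ (u t - p t) (χ t) : ℂ)) a τ hτ'] at h0
    have h1 : ∫ s in (0:ℝ)..1, (inner ℂ (u (τ*s+a) - p (τ*s+a)) (χ (τ*s+a)) : ℂ) = 0 := by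
      rcases smul_eq_zero.mp h0 with h | h
      · exact absurd h hτ'
      · exact h
    have hχval : ∀ s : ℝ, χ (τ*s+a) = s ^ (j:ℕ) • x := by
      intro s
      rw [hχdef]
      simp only
      have harg : τ⁻¹ * (τ*s+a) + -(a * τ⁻¹) = s := by field_simp; ring
      rw [harg, Finset.sum_eq_single j]
      · rw [if_pos rfl]
      · intro b _ hb
        rw [if_neg hb, smul_zero]
      · intro hj
        exact absurd (Finset.mem_univ j) hj
    have h2 : ∀ s : ℝ, (inner ℂ (u (τ*s+a) - p (τ*s+a)) (χ (τ*s+a)) : ℂ)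
        = ∑ i : Fin (n+2), s ^ ((i:ℕ) + (j:ℕ)) • (inner ℂ (δ i) x : ℂ) := by
      intro s
      rw [hχval, hrs, aux_inner_smul_right, sum_inner, Finset.smul_sum]
      refine Finset.sum_congr rfl fun i _ => ?_
      rw [aux_inner_smul_left, smul_smul, pow_add]
      rw [mul_comm (s ^ (j:ℕ)) (s ^ (i:ℕ))]
    have h3 : ∫ s in (0:ℝ)..1,
        ∑ i : Fin (n+2), s ^ ((i:ℕ) + (j:ℕ)) • (inner ℂ (δ i) x : ℂ) = 0 := by
      rw [← h1]
      exact intervalIntegral.integral_congr fun s _ => (h2 s).symm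
    rw [intervalIntegral.integral_finset_sum
      (fun (i : Fin (n+2)) _ => (show Continuous fun s : ℝ =>
        s ^ ((i:ℕ) + (j:ℕ)) • (inner ℂ (δ i) x : ℂ) from
        (continuous_pow _).smul continuous_const).intervalIntegrable _ _)] at h3
    calc ∑ i : Fin (n+2), (((i:ℕ) + (j:ℕ) + 1 : ℝ))⁻¹ • (inner ℂ (δ i) x : ℂ)
        = ∑ i : Fin (n+2), ∫ s in (0:ℝ)..1, s ^ ((i:ℕ) + (j:ℕ)) • (inner ℂ (δ i) x : ℂ) := by
          refine Finset.sum_congr rfl fun i _ => ?_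
          rw [aux_int_pow_smul]
          norm_num
      _ = 0 := h3
  -- vector moment conditions
  have hmomv : ∀ j : Fin (n+1), ∑ i : Fin (n+2), (((i:ℕ) + (j:ℕ) + 1 : ℝ))⁻¹ • δ i = 0 := by
    intro j
    set v : X := ∑ i : Fin (n+2), (((i:ℕ) + (j:ℕ) + 1 : ℝ))⁻¹ • δ i with hvdef
    have : (inner ℂ v v : ℂ) = 0 := by
      calc (inner ℂ v v : ℂ)
          = ∑ i : Fin (n+2), (((i:ℕ) + (j:ℕ) + 1 : ℝ))⁻¹ • (inner ℂ (δ i) v : ℂ) := by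
            rw [hvdef, sum_inner]
            exact Finset.sum_congr rfl fun i _ => aux_inner_smul_left _ _ _
        _ = 0 := hmomx j v
    exact inner_self_eq_zero.mp this
  -- kernel structure : δ i = c i • ξ
  set ξ : X := δ (Fin.last (n+1)) with hξdef
  set ε : Fin (n+1) → X := fun i => δ i.castSucc - c i.castSucc • ξ with hεdef
  have hε : ∀ j : Fin (n+1), ∑ i : Fin (n+1), (((i:ℕ) + (j:ℕ) + 1 : ℝ))⁻¹ • ε i = 0 := by
    intro j
    have h1 := hmomv j
    rw [Fin.sum_univ_castSucc] at h1
    simp only [Fin.coe_castSucc, Fin.val_last] at h1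
    have h2 := hcmom j
    rw [Fin.sum_univ_castSucc] at h2
    simp only [Fin.coe_castSucc, Fin.val_last, hclast, one_mul] at h2
    have expand : ∑ i : Fin (n+1), (((i:ℕ) + (j:ℕ) + 1 : ℝ))⁻¹ • ε i
        = (∑ i : Fin (n+1), (((i:ℕ) + (j:ℕ) + 1 : ℝ))⁻¹ • δ i.castSucc)
          - (∑ i : Fin (n+1), c i.castSucc * (((i:ℕ) + (j:ℕ) + 1 : ℝ))⁻¹) • ξ := by
      rw [Finset.sum_smul, ← Finset.sum_sub_distrib]
      refine Finset.sum_congr rfl fun i _ => ?_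
      rw [hεdef]
      simp only
      rw [smul_sub, smul_smul, mul_comm]
    rw [expand]
    have h1' : ∑ i : Fin (n+1), (((i:ℕ) + (j:ℕ) + 1 : ℝ))⁻¹ • δ i.castSucc
        = -((((n+1:ℕ):ℝ) + (j:ℕ) + 1)⁻¹ • ξ) := by
      rw [eq_neg_iff_add_eq_zero]
      exact h1
    have h2' : ∑ i : Fin (n+1), c i.castSucc * (((i:ℕ) + (j:ℕ) + 1 : ℝ))⁻¹
        = -((((n+1:ℕ):ℝ) + (j:ℕ) + 1)⁻¹) := by
      rw [eq_neg_iff_add_eq_zero]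
      exact h2
    rw [h1', h2', neg_smul, sub_neg_eq_add, neg_add_cancel]
  have hεz : ∀ i, ε i = 0 := by
    have key : ∀ (x : X) (i : Fin (n+1)), (inner ℂ (ε i) x : ℂ) = 0 := by
      intro x i
      have hmomε : ∀ j : Fin (n+1),
          ∑ i' : Fin (n+1), (((i':ℕ) + (j:ℕ) + 1 : ℝ))⁻¹ • (inner ℂ (ε i') x : ℂ) = 0 := by
        intro j
        calc ∑ i' : Fin (n+1), (((i':ℕ) + (j:ℕ) + 1 : ℝ))⁻¹ • (inner ℂ (ε i') x : ℂ)
            = (inner ℂ (∑ i' : Fin (n+1), (((i':ℕ) + (j:ℕ) + 1 : ℝ))⁻¹ • ε i') x : ℂ) := by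
              rw [sum_inner]
              exact Finset.sum_congr rfl fun i' _ => (aux_inner_smul_left _ _ _).symm
          _ = 0 := by rw [hε j, inner_zero_left]
      have hre : ∀ j : Fin (n+1),
          ∑ i' : Fin (n+1), ((inner ℂ (ε i') x : ℂ).re) * (((i':ℕ) + (j:ℕ) + 1 : ℝ))⁻¹ = 0 := by
        intro j
        have := congrArg Complex.re (hmomε j)
        rw [Complex.re_sum] at this
        simp only [Complex.smul_re, Complex.zero_re, smul_eq_mul] at this
        rw [← this]
        exact Finset.sum_congr rfl fun i' _ => by ring
      have him : ∀ j : Fin (n+1),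
          ∑ i' : Fin (n+1), ((inner ℂ (ε i') x : ℂ).im) * (((i':ℕ) + (j:ℕ) + 1 : ℝ))⁻¹ = 0 := by
        intro j
        have := congrArg Complex.im (hmomε j)
        rw [Complex.im_sum] at this
        simp only [Complex.smul_im, Complex.zero_im, smul_eq_mul] at this
        rw [← this]
        exact Finset.sum_congr rfl fun i' _ => by ring
      have h1 := aux_moments_zero _ hre i
      have h2 := aux_moments_zero _ him i
      exact Complex.ext h1 h2
    intro i
    exact inner_self_eq_zero.mp (key (ε i) i)
  have hδc : ∀ i : Fin (n+2), δ i = c i • ξ := by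
    intro i
    refine Fin.lastCases ?_ ?_ i
    · rw [hclast, one_smul]
    · intro i'
      exact sub_eq_zero.mp (hεz i')
  -- the scalar polynomials and the transferred projection
  set L : ℝ → ℝ := fun s => ∑ i : Fin (n+2), c i * s ^ (i:ℕ) with hLdef
  set W : ℝ → ℝ := fun s => ∑ i : Fin (n+1), w i * s ^ (i:ℕ) with hWdef
  set pt : ℝ → X := fun s => ∑ i : Fin (n+1), s ^ (i:ℕ) • ψp i with hptdef
  have h2le : (0:ℝ) ≤ 1 := by norm_num
  have hcontpt : Continuous pt := by
    rw [hptdef]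
    exact continuous_finset_sum _ fun i _ => (continuous_pow _).smul continuous_const
  have hcontL : Continuous L := by
    rw [hLdef]
    exact continuous_finset_sum _ fun i _ => continuous_const.mul (continuous_pow _)
  have hcontW : Continuous W := by
    rw [hWdef]
    exact continuous_finset_sum _ fun i _ => continuous_const.mul (continuous_pow _)
  have hudec : ∀ s : ℝ, u (τ*s+a) = L s • ξ + pt s := by
    intro s
    rw [hus]
    calc ∑ i : Fin (n+2), s ^ (i:ℕ) • ψu i
        = ∑ i : Fin (n+2), (s ^ (i:ℕ) • δ i
            + s ^ (i:ℕ) • Fin.snoc (α := fun _ => X) ψp 0 i) := by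
          refine Finset.sum_congr rfl fun i _ => ?_
          rw [← smul_add, hδdef]
          simp only
          rw [sub_add_cancel]
      _ = (∑ i : Fin (n+2), s ^ (i:ℕ) • δ i)
            + ∑ i : Fin (n+2), s ^ (i:ℕ) • Fin.snoc (α := fun _ => X) ψp 0 i :=
          Finset.sum_add_distrib
      _ = L s • ξ + pt s := by
          rw [hsnoc s]
          congr 1
          calc ∑ i : Fin (n+2), s ^ (i:ℕ) • δ i
              = ∑ i : Fin (n+2), (c i * s ^ (i:ℕ)) • ξ := by
                refine Finset.sum_congr rfl fun i _ => ?_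
                rw [hδc i, smul_smul, mul_comm]
            _ = L s • ξ := by rw [← Finset.sum_smul]
  have hpdec : ∀ s : ℝ, p (τ*s+a) = pt s := by
    intro s
    rw [hps s]
  set P : ℝ := ∫ s in (0:ℝ)..1, ‖pt s‖^2 with hPdef
  have hPnn : 0 ≤ P := by
    rw [hPdef]
    apply intervalIntegral.integral_nonneg h2le
    intro s _
    positivity
  -- integral of ‖u∘affine‖²
  have hIu : ∫ s in (0:ℝ)..1, ‖u (τ*s+a)‖^2 = β * ‖ξ‖^2 + P := by
    have hptw : ∀ s : ℝ, ‖u (τ*s+a)‖^2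
        = ‖ξ‖^2 * (L s * L s)
          + 2 * ((∑ i : Fin (n+2), c i * s ^ (i:ℕ))
              * (∑ j : Fin (n+1), (inner ℂ ξ (ψp j) : ℂ).re * s ^ (j:ℕ)))
          + ‖pt s‖^2 := by
      intro s
      rw [hudec s, norm_add_sq (𝕜 := ℂ)]
      simp only [RCLike.re_to_complex]
      have e1 : ‖L s • ξ‖^2 = ‖ξ‖^2 * (L s * L s) := by
        rw [norm_smul, mul_pow, Real.norm_eq_abs, sq_abs]
        ring
      have e2 : (inner ℂ (L s • ξ) (pt s) : ℂ).re
          = (∑ i : Fin (n+2), c i * s ^ (i:ℕ))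
              * (∑ j : Fin (n+1), (inner ℂ ξ (ψp j) : ℂ).re * s ^ (j:ℕ)) := by
        rw [aux_inner_smul_left, Complex.smul_re]
        have e3 : (inner ℂ ξ (pt s) : ℂ).re
            = ∑ j : Fin (n + 1), (inner ℂ ξ (ψp j) : ℂ).re * s ^ (j:ℕ) := by
          rw [hptdef]
          simp only
          rw [inner_sum, Complex.re_sum]
          refine Finset.sum_congr rfl fun j _ => ?_
          rw [aux_inner_smul_right, Complex.smul_re, smul_eq_mul, mul_comm]
        rw [smul_eq_mul, e3]
      rw [e1, e2]
    simp only [hptw]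
    have i1 : IntervalIntegrable (fun s : ℝ => ‖ξ‖^2 * (L s * L s)) volume 0 1 :=
      (continuous_const.mul (hcontL.mul hcontL)).intervalIntegrable _ _
    have i2 : IntervalIntegrable (fun s : ℝ => 2 * ((∑ i : Fin (n+2), c i * s ^ (i:ℕ))
        * (∑ j : Fin (n+1), (inner ℂ ξ (ψp j) : ℂ).re * s ^ (j:ℕ)))) volume 0 1 := by
      apply Continuous.intervalIntegrable
      exact continuous_const.mul
        ((continuous_finset_sum _ fun i _ => continuous_const.mul (continuous_pow _)).mul
         (continuous_finset_sum _ fun i _ => continuous_const.mul (continuous_pow _)))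
    have i3 : IntervalIntegrable (fun s : ℝ => ‖pt s‖^2) volume 0 1 :=
      ((hcontpt.norm).pow 2).intervalIntegrable _ _
    rw [intervalIntegral.integral_add (i1.add i2) i3, intervalIntegral.integral_add i1 i2]
    rw [intervalIntegral.integral_const_mul, intervalIntegral.integral_const_mul]
    have hA : ∫ s in (0:ℝ)..1, L s * L s = β := by
      simp only [hLdef]
      rw [aux_int_mul c c]
    have hcross : ∫ s in (0:ℝ)..1, (∑ i : Fin (n+2), c i * s ^ (i:ℕ))
        * (∑ j : Fin (n+1), (inner ℂ ξ (ψp j) : ℂ).re * s ^ (j:ℕ)) = 0 := by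
      rw [aux_int_mul c (fun j => (inner ℂ ξ (ψp j) : ℂ).re)]
      rw [Finset.sum_comm]
      refine Finset.sum_eq_zero fun j _ => ?_
      have : ∑ i : Fin (n+2), c i * (inner ℂ ξ (ψp j) : ℂ).re * (((i:ℕ) + (j:ℕ) + 1 : ℝ))⁻¹
          = (inner ℂ ξ (ψp j) : ℂ).re * ∑ i : Fin (n+2), c i * (((i:ℕ) + (j:ℕ) + 1 : ℝ))⁻¹ := by
        rw [Finset.mul_sum]
        exact Finset.sum_congr rfl fun i _ => by ring
      rw [this, hcmom j, mul_zero]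
    rw [hA, hcross, mul_zero, ← hPdef]
    ring
  have hIp : ∫ s in (0:ℝ)..1, ‖p (τ*s+a)‖^2 = P := by
    rw [hPdef]
    apply intervalIntegral.integral_congr
    intro s _
    simp only
    rw [hpdec s]
  have hLHSeq : ∫ t in a..(a+τ), ‖u t‖^2 = τ * (β * ‖ξ‖^2 + P) := by
    rw [aux_cov (fun t => ‖u t‖^2) a τ hτ', smul_eq_mul, hIu]
  have hPeq : ∫ t in a..(a+τ), ‖p t‖^2 = τ * P := by
    rw [aux_cov (fun t => ‖p t‖^2) a τ hτ', smul_eq_mul, hIp]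
  -- initial value decomposition
  have hL0 : L 0 = c 0 := by
    rw [hLdef]
    simp only
    rw [Fin.sum_univ_succ]
    simp
  have hpt0 : pt 0 = ψp 0 := by
    rw [hptdef]
    exact aux_eval_zero ψp
  have hua : u a = c 0 • ξ + ψp 0 := by
    have h := hudec 0
    rw [mul_zero, zero_add] at h
    rw [h, hL0, hpt0]
  -- representation of ψp 0 as a weighted integral and the Cauchy–Schwarz bound
  have hrep : ψp 0 = ∫ s in (0:ℝ)..1, W s • pt s := by
    have hWpt : ∀ s : ℝ, W s • pt s
        = ∑ j : Fin (n+1), (∑ i : Fin (n+1), w i * s ^ ((i:ℕ)+(j:ℕ))) • ψp j := by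
      intro s
      simp only [hWdef, hptdef]
      rw [Finset.smul_sum]
      refine Finset.sum_congr rfl fun j _ => ?_
      rw [smul_smul, Finset.sum_mul]
      congr 1
      refine Finset.sum_congr rfl fun i _ => ?_
      rw [pow_add]
      ring
    rw [intervalIntegral.integral_congr (g := fun s => ∑ j : Fin (n+1),
      (∑ i : Fin (n+1), w i * s ^ ((i:ℕ)+(j:ℕ))) • ψp j) (fun s _ => hWpt s)]
    rw [intervalIntegral.integral_finset_sum (fun j _ => by
      apply Continuous.intervalIntegrable
      exact (continuous_finset_sum _ fun i _ =>
        continuous_const.mul (continuous_pow _)).smul continuous_const)]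
    have hterm : ∀ j : Fin (n+1),
        (∫ s in (0:ℝ)..1, (∑ i : Fin (n+1), w i * s ^ ((i:ℕ)+(j:ℕ))) • ψp j)
        = (if j = 0 then (1:ℝ) else 0) • ψp j := by
      intro j
      rw [intervalIntegral.integral_smul_const]
      congr 1
      rw [intervalIntegral.integral_finset_sum (fun i _ => by
        apply Continuous.intervalIntegrable
        exact continuous_const.mul (continuous_pow _))]
      rw [← hw j]
      refine Finset.sum_congr rfl fun i _ => ?_
      rw [intervalIntegral.integral_const_mul, integral_pow]
      push_cast
      norm_num
    rw [Finset.sum_congr rfl (fun j _ => hterm j)]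
    rw [Finset.sum_eq_single 0]
    · rw [if_pos rfl, one_smul]
    · intro b _ hb
      rw [if_neg hb, zero_smul]
    · intro h
      exact absurd (Finset.mem_univ 0) h
  set B : ℝ := ∫ s in (0:ℝ)..1, |W s| * ‖pt s‖ with hBdef
  have hBnn : 0 ≤ B := by
    rw [hBdef]
    apply intervalIntegral.integral_nonneg h2le
    intro s _
    positivity
  have hψp0B : ‖ψp 0‖ ≤ B := by
    rw [hrep, hBdef]
    refine le_trans (intervalIntegral.norm_integral_le_integral_norm h2le) (le_of_eq ?_)
    apply intervalIntegral.integral_congr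
    intro s _
    simp only
    rw [norm_smul, Real.norm_eq_abs]
  have hWW : ∫ s in (0:ℝ)..1, W s * W s = γ := by
    simp only [hWdef]
    rw [aux_int_mul w w]
  have hquad : ∀ lam : ℝ, 0 ≤ P * (lam * lam) + (2*B) * lam + γ := by
    intro lam
    have hnn : 0 ≤ ∫ s in (0:ℝ)..1, (lam * ‖pt s‖ + |W s|)^2 :=
      intervalIntegral.integral_nonneg h2le fun s _ => sq_nonneg _
    have hexp : ∫ s in (0:ℝ)..1, (lam * ‖pt s‖ + |W s|)^2
        = P * (lam*lam) + (2*B)*lam + γ := by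
      have hptw2 : ∀ s : ℝ, (lam * ‖pt s‖ + |W s|)^2
          = (lam*lam) * ‖pt s‖^2 + (2*lam) * (|W s| * ‖pt s‖) + W s * W s := by
        intro s
        have habs : |W s| * |W s| = W s * W s := abs_mul_abs_self _
        calc (lam * ‖pt s‖ + |W s|)^2
            = (lam*lam) * ‖pt s‖^2 + (2*lam) * (|W s| * ‖pt s‖) + |W s| * |W s| := by ring
          _ = (lam*lam) * ‖pt s‖^2 + (2*lam) * (|W s| * ‖pt s‖) + W s * W s := by rw [habs]
      simp only [hptw2]
      have j1 : IntervalIntegrable (fun s : ℝ => (lam*lam) * ‖pt s‖^2) volume 0 1 :=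
        (continuous_const.mul ((hcontpt.norm).pow 2)).intervalIntegrable _ _
      have j2 : IntervalIntegrable (fun s : ℝ => (2*lam) * (|W s| * ‖pt s‖)) volume 0 1 :=
        (continuous_const.mul ((hcontW.abs).mul hcontpt.norm)).intervalIntegrable _ _
      have j3 : IntervalIntegrable (fun s : ℝ => W s * W s) volume 0 1 :=
        (hcontW.mul hcontW).intervalIntegrable _ _
      rw [intervalIntegral.integral_add (j1.add j2) j3, intervalIntegral.integral_add j1 j2]
      rw [intervalIntegral.integral_const_mul, intervalIntegral.integral_const_mul, hWW,
        ← hPdef, ← hBdef]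
      ring
    linarith [hexp ▸ hnn]
  have hdisc := discrim_le_zero hquad
  rw [discrim] at hdisc
  have hψsq : ‖ψp 0‖^2 ≤ γ * P := by
    have h4 := pow_le_pow_left₀ (norm_nonneg (ψp 0)) hψp0B 2
    have h5 : (2*B)^2 = 4*B^2 := by ring
    have h6 : P * γ = γ * P := mul_comm _ _
    linarith
  have hξb : (c 0)^2 * ‖ξ‖^2 ≤ 2 * ‖u a‖^2 + 2 * (γ * P) := by
    have h1 : c 0 • ξ = u a - ψp 0 := by rw [hua]; abel
    have h2 : ‖c 0 • ξ‖ ≤ ‖u a‖ + ‖ψp 0‖ := h1 ▸ norm_sub_le _ _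
    have h3 : ‖c 0 • ξ‖^2 = (c 0)^2 * ‖ξ‖^2 := by
      rw [norm_smul, mul_pow, Real.norm_eq_abs, sq_abs]
    have h6 : ‖c 0 • ξ‖^2 ≤ (‖u a‖ + ‖ψp 0‖)^2 :=
      pow_le_pow_left₀ (norm_nonneg _) h2 2
    rw [h3] at h6
    linarith [sq_nonneg (‖u a‖ - ‖ψp 0‖), hψsq, h6]
  rw [hLHSeq, hPeq]
  have hβξ : β * ‖ξ‖^2 ≤ 2*β/(c 0)^2 * ‖u a‖^2 + 2*β*γ/(c 0)^2 * P := by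
    have key := mul_le_mul_of_nonneg_left hξb (div_nonneg hβ0.le hc0sq.le)
    have e : β/(c 0)^2 * ((c 0)^2 * ‖ξ‖^2) = β * ‖ξ‖^2 := by
      field_simp
    rw [e] at key
    have e2 : β / (c 0)^2 * (2*‖u a‖^2 + 2*(γ*P))
        = 2*β/(c 0)^2 * ‖u a‖^2 + 2*β*γ/(c 0)^2 * P := by
      field_simp
    linarith [e2 ▸ key]
  have hfin1 : 0 ≤ τ * P := mul_nonneg hτ.le hPnn
  have hfin2 : 0 ≤ τ * ‖u a‖^2 := mul_nonneg hτ.le (sq_nonneg _)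
  have hstep : τ * (β*‖ξ‖^2 + P)
      ≤ τ * ((2*β/(c 0)^2) * ‖u a‖^2 + (2*β*γ/(c 0)^2) * P + P) :=
    mul_le_mul_of_nonneg_left (by linarith) hτ.le
  refine le_trans hstep ?_
  rw [hCdef]
  have m1 : 0 ≤ (2*β/(c 0)^2) * (τ*P) := mul_nonneg he1 hfin1
  have m2 : 0 ≤ (2*β*γ/(c 0)^2) * (τ*‖u a‖^2) := mul_nonneg he2 hfin2
  linarith [m1, m2, hfin1, hfin2]
end
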